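/- arXiv:1803.11114 — 9 statements merged into one kernel-verified Lean document; each statement's English description precedes it below -/
import Mathlib

section
/- Let D be a preferential-attachment degree process started at time t₀. Let δ and t be real numbers with 0 < δ < 1, t ≥ 2/δ² and ⌊t⌋ ≥ t₀. Then for every natural number d with ℙ[D(⌊t⌋) = d] > 0, the conditional probability ℙ[ D(⌊(1+δ)t⌋) ≤ (1 + δ/2 − 2δ²)·d | D(⌊t⌋) = d ] is at most exp(−δ³·d/16). -/
open MeasureTheory ProbabilityTheory Real

/-- A preferential-attachment degree process started at time `t₀`, on a probability
space with filtration `ℱ`: an adapted `ℕ`-valued process `D` with `1 ≤ D t₀ ≤ 2 t₀` a.s.,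
increments in `{0,1}` a.s., and conditional increment probability
`D (s-1) / (2 s - 1)` given `ℱ (s-1)`. -/
structure PAProcess {Ω : Type*} [m0 : MeasurableSpace Ω] (μ : Measure Ω)
    (ℱ : Filtration ℕ m0) (t₀ : ℕ) where
  D : ℕ → Ω → ℕ
  adapted : ∀ s : ℕ, Measurable[ℱ s] (D s)
  init : ∀ᵐ ω ∂μ, 1 ≤ D t₀ ω ∧ D t₀ ω ≤ 2 * t₀
  incr : ∀ s : ℕ, t₀ < s → ∀ᵐ ω ∂μ, D s ω = D (s - 1) ω ∨ D s ω = D (s - 1) ω + 1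
  cond : ∀ s : ℕ, t₀ < s →
      μ[Set.indicator {ω' | D s ω' = D (s - 1) ω' + 1} (fun _ => (1 : ℝ)) | ℱ (s - 1)]
        =ᵐ[μ] fun ω => (D (s - 1) ω : ℝ) / (2 * s - 1)

lemma PA_meas {Ω : Type*} [m0 : MeasurableSpace Ω] {μ : Measure Ω}
    {ℱ : Filtration ℕ m0} {t₀ : ℕ} (P : PAProcess μ ℱ t₀) (s : ℕ) :
    Measurable (P.D s) := (P.adapted s).mono (ℱ.le s) le_rfl

lemma PA_exp_meas {Ω : Type*} [m0 : MeasurableSpace Ω] {μ : Measure Ω}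
    {ℱ : Filtration ℕ m0} {t₀ : ℕ} (P : PAProcess μ ℱ t₀) (δ : ℝ) (s : ℕ) :
    Measurable (fun ω => Real.exp (-δ * (P.D s ω : ℝ))) :=
  Real.measurable_exp.comp (measurable_const.mul (measurable_from_nat.comp (PA_meas P s)))

lemma PA_exp_int {Ω : Type*} [m0 : MeasurableSpace Ω] {μ : Measure Ω}
    [IsFiniteMeasure μ]
    {ℱ : Filtration ℕ m0} {t₀ : ℕ} (P : PAProcess μ ℱ t₀) {δ : ℝ} (hδ : 0 ≤ δ) (s : ℕ) :
    Integrable (fun ω => Real.exp (-δ * (P.D s ω : ℝ))) μ := by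
  refine (integrable_const (1 : ℝ)).mono' (PA_exp_meas P δ s).aestronglyMeasurable ?_
  refine Filter.Eventually.of_forall fun ω => ?_
  rw [Real.norm_eq_abs, abs_of_pos (Real.exp_pos _)]
  refine Real.exp_le_one_iff.mpr ?_
  have : (0:ℝ) ≤ δ * (P.D s ω : ℝ) := by positivity
  linarith

lemma step_bound {Ω : Type*} [m0 : MeasurableSpace Ω] (μ : Measure Ω)
    [IsProbabilityMeasure μ]
    (ℱ : Filtration ℕ m0) (t₀ : ℕ) (P : PAProcess μ ℱ t₀)
    (δ : ℝ) (hδ : 0 < δ) (s : ℕ) (hs : t₀ < s)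
    (A : Set Ω) (hA : MeasurableSet[ℱ (s-1)] A) (d : ℕ)
    (hge : ∀ᵐ ω ∂μ, ω ∈ A → d ≤ P.D (s-1) ω) :
    ∫ ω in A, Real.exp (-δ * (P.D s ω : ℝ)) ∂μ
      ≤ (1 - (1 - Real.exp (-δ)) * d / (2*s - 1)) * ∫ ω in A, Real.exp (-δ * (P.D (s-1) ω : ℝ)) ∂μ := by
  have hm : ℱ (s-1) ≤ m0 := ℱ.le (s-1)
  set g : Ω → ℝ := fun ω => Real.exp (-δ * (P.D (s-1) ω : ℝ)) with hg
  set B : Set Ω := {ω' | P.D s ω' = P.D (s-1) ω' + 1} with hB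
  set I : Ω → ℝ := Set.indicator B (fun _ => (1:ℝ)) with hI
  have hBmeas : MeasurableSet B := by
    have : B = {ω | P.D s ω - P.D (s-1) ω = 1 ∧ P.D (s-1) ω ≤ P.D s ω} := by
      ext ω; simp only [hB, Set.mem_setOf_eq]; omega
    rw [this]
    exact MeasurableSet.inter
      (((PA_meas P s).sub (PA_meas P (s-1))) (measurableSet_singleton 1))
      (measurableSet_le (PA_meas P (s-1)) (PA_meas P s))
  have hgsm : StronglyMeasurable[ℱ (s-1)] g :=
    (Real.measurable_exp.comp (measurable_const.mul
      (measurable_from_nat.comp (P.adapted (s-1))))).stronglyMeasurable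
  have hgbd : ∀ ω, ‖g ω‖ ≤ 1 := fun ω => by
    rw [Real.norm_eq_abs, abs_of_pos (Real.exp_pos _)]
    refine Real.exp_le_one_iff.mpr ?_
    have : (0:ℝ) ≤ δ * (P.D (s-1) ω : ℝ) := by positivity
    linarith
  have hIint : Integrable I μ := by
    refine (integrable_const (1 : ℝ)).mono'
      ((measurable_one.indicator hBmeas).aestronglyMeasurable) ?_
    refine Filter.Eventually.of_forall fun ω => ?_
    by_cases h : ω ∈ B <;> simp [hI, h]
  have hgIint : Integrable (g * I) μ := by
    refine hIint.bdd_mul (hgsm.mono hm).aestronglyMeasurable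
      (Filter.Eventually.of_forall hgbd)
  -- pointwise identity
  have hpt : ∀ᵐ ω ∂μ, Real.exp (-δ * (P.D s ω : ℝ))
      = g ω + (Real.exp (-δ) - 1) * (g ω * I ω) := by
    filter_upwards [P.incr s hs] with ω hω
    rcases hω with h | h
    · have hnB : ω ∉ B := by simp [hB, h]
      simp [hI, Set.indicator_of_notMem hnB, hg, h]
    · have hBω : ω ∈ B := h
      simp only [hI, Set.indicator_of_mem hBω, hg, h]
      push_cast
      rw [mul_add, Real.exp_add]
      ring
  have hAm0 : MeasurableSet A := hm _ hA
  haveI : SigmaFinite (μ.trim hm) := by infer_instance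
  have hs1 : (1:ℝ) ≤ 2 * (s:ℝ) - 1 := by
    have : 1 ≤ s := by omega
    have : (1:ℝ) ≤ (s:ℝ) := by exact_mod_cast this
    linarith
  have hden : (0:ℝ) < 2 * (s:ℝ) - 1 := by linarith
  -- conditional expectation computation
  have hpull : μ[g * I | ℱ (s-1)] =ᵐ[μ] g * μ[I | ℱ (s-1)] :=
    condExp_stronglyMeasurable_mul_of_bound hm hgsm hIint 1
      (Filter.Eventually.of_forall hgbd)
  have hform : g * μ[I | ℱ (s-1)]
      =ᵐ[μ] fun ω => g ω * ((P.D (s-1) ω : ℝ) / (2 * (s:ℝ) - 1)) := by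
    filter_upwards [P.cond s hs] with ω hω
    simp only [Pi.mul_apply]; exact congrArg (g ω * ·) hω
  have hDq_int : Integrable (fun ω => g ω * ((P.D (s-1) ω : ℝ) / (2 * (s:ℝ) - 1))) μ := by
    exact Integrable.congr integrable_condExp (hpull.trans hform)
  have hsplit : ∫ ω in A, (g * I) ω ∂μ
      = ∫ ω in A, g ω * ((P.D (s-1) ω : ℝ) / (2 * (s:ℝ) - 1)) ∂μ := by
    rw [← setIntegral_condExp hm hgIint hA]
    refine integral_congr_ae (ae_restrict_of_ae ?_)
    exact hpull.trans hform
  have hgnn : ∀ ω, 0 ≤ g ω := fun ω => (Real.exp_pos _).le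
  have hgint : Integrable g μ := PA_exp_int P hδ.le (s-1)
  have hKge : ((d:ℝ) / (2 * (s:ℝ) - 1)) * ∫ ω in A, g ω ∂μ
      ≤ ∫ ω in A, g ω * ((P.D (s-1) ω : ℝ) / (2 * (s:ℝ) - 1)) ∂μ := by
    rw [← integral_const_mul]
    refine integral_mono_ae (hgint.restrict.const_mul _) hDq_int.restrict ?_
    rw [Filter.EventuallyLE, ae_restrict_iff' hAm0]
    filter_upwards [hge] with ω hω hωA
    have hdD : (d:ℝ) ≤ (P.D (s-1) ω : ℝ) := by exact_mod_cast hω hωA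
    have := hgnn ω
    rw [div_mul_eq_mul_div, mul_comm, mul_div_assoc]
    gcongr
  -- put everything together
  have hiden : ∫ ω in A, Real.exp (-δ * (P.D s ω : ℝ)) ∂μ
      = (∫ ω in A, g ω ∂μ)
        + (Real.exp (-δ) - 1) * ∫ ω in A, g ω * ((P.D (s-1) ω : ℝ) / (2 * (s:ℝ) - 1)) ∂μ := by
    rw [← hsplit, ← integral_const_mul, ← integral_add hgint.restrict
      ((hgIint.restrict).const_mul _)]
    refine integral_congr_ae (ae_restrict_of_ae ?_)
    filter_upwards [hpt] with ω hω
    simpa using hω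
  rw [hiden]
  have hneg : Real.exp (-δ) - 1 ≤ 0 := by
    have := Real.exp_le_one_iff.mpr (neg_nonpos.mpr hδ.le)
    linarith
  have hJnn : 0 ≤ ∫ ω in A, g ω ∂μ := integral_nonneg hgnn
  have h2 : (Real.exp (-δ) - 1) * ∫ ω in A, g ω * ((P.D (s-1) ω : ℝ) / (2 * (s:ℝ) - 1)) ∂μ
      ≤ (Real.exp (-δ) - 1) * (((d:ℝ) / (2 * (s:ℝ) - 1)) * ∫ ω in A, g ω ∂μ) :=
    mul_le_mul_of_nonpos_left hKge hneg
  calc (∫ ω in A, g ω ∂μ)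
        + (Real.exp (-δ) - 1) * ∫ ω in A, g ω * ((P.D (s-1) ω : ℝ) / (2 * (s:ℝ) - 1)) ∂μ
      ≤ (∫ ω in A, g ω ∂μ)
        + (Real.exp (-δ) - 1) * (((d:ℝ) / (2 * (s:ℝ) - 1)) * ∫ ω in A, g ω ∂μ) := by linarith
    _ = (1 - (1 - Real.exp (-δ)) * (d:ℝ) / (2 * (s:ℝ) - 1)) * ∫ ω in A, g ω ∂μ := by ring

lemma arith_c (δ : ℝ) (hδ0 : 0 < δ) : δ - δ^2 ≤ 1 - Real.exp (-δ) := by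
  have h1 : 1 + δ ≤ Real.exp δ := by linarith [Real.add_one_le_exp δ]
  have hE1 : Real.exp (-δ) * (1 + δ) ≤ 1 := by
    calc Real.exp (-δ) * (1 + δ) ≤ Real.exp (-δ) * Real.exp δ :=
          mul_le_mul_of_nonneg_left h1 (Real.exp_pos _).le
      _ = 1 := by rw [← Real.exp_add]; simp
  nlinarith [hE1, Real.exp_pos (-δ), hδ0]

lemma arith_div (δ t dd : ℝ) (hδ0 : 0 < δ) (hδ1 : δ < 1) (ht2 : 2 ≤ δ^2*t)
    (ht0 : 0 < t) (hdd : 0 ≤ dd) :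
    δ^2*(2-δ)*(1-δ)*dd/(4*(1+δ)) ≤ (δ*t-1)*((δ-δ^2)*dd)/(2*(1+δ)*t) := by
  rw [div_le_div_iff₀ (by positivity) (by positivity)]
  nlinarith [mul_nonneg (mul_nonneg (mul_nonneg (mul_nonneg
    (by linarith : (0:ℝ) ≤ 2*(1+δ)) hδ0.le) (by linarith : (0:ℝ) ≤ 1-δ)) hdd)
    (by linarith : (0:ℝ) ≤ δ^2*t-2)]

lemma arith_final (δ dd : ℝ) (hδ0 : 0 < δ) (hδ1 : δ < 1) (hdd : 0 ≤ dd) :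
    δ * ((1 + δ/2 - 2*δ^2) * dd) - δ * dd + δ^3 * dd / 16
      ≤ δ^2*(2-δ)*(1-δ)*dd/(4*(1+δ)) := by
  rw [le_div_iff₀ (by positivity)]
  nlinarith [mul_nonneg (mul_nonneg (mul_nonneg hδ0.le hδ0.le) hδ0.le) hdd,
    mul_nonneg (mul_nonneg (mul_nonneg (mul_nonneg hδ0.le hδ0.le) hδ0.le) hδ0.le) hdd]

set_option maxHeartbeats 1000000 in
theorem short_term_lower_bound
    {Ω : Type*} [m0 : MeasurableSpace Ω] (μ : Measure Ω) [IsProbabilityMeasure μ]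
    (ℱ : Filtration ℕ m0) (t₀ : ℕ) (ht₀ : 1 ≤ t₀)
    (P : PAProcess μ ℱ t₀)
    (δ t : ℝ) (hδ0 : 0 < δ) (hδ1 : δ < 1) (ht : 2 / δ ^ 2 ≤ t) (ht₀' : t₀ ≤ ⌊t⌋₊)
    (d : ℕ) (hd : 0 < μ {ω | P.D ⌊t⌋₊ ω = d}) :
    (μ[|{ω | P.D ⌊t⌋₊ ω = d}]
        {ω | (P.D ⌊(1 + δ) * t⌋₊ ω : ℝ) ≤ (1 + δ / 2 - 2 * δ ^ 2) * d}).toReal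
      ≤ Real.exp (-(δ ^ 3 * d) / 16) := by
  have ht2 : (2:ℝ) ≤ δ^2 * t := by
    have h1 : (0:ℝ) < δ^2 := by positivity
    rw [div_le_iff₀ h1] at ht; linarith [ht]
  have ht0R : (0:ℝ) < t := by nlinarith
  set T := ⌊t⌋₊ with hTdef
  set T' := ⌊(1 + δ) * t⌋₊ with hT'def
  set A := {ω | P.D T ω = d} with hAdef
  have hTT' : T ≤ T' := Nat.floor_le_floor (by nlinarith)
  have hTle : (T:ℝ) ≤ t := Nat.floor_le ht0R.le
  have hT'le : (T':ℝ) ≤ (1+δ)*t := Nat.floor_le (by positivity)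
  have hT'gt : (1+δ)*t - 1 < (T':ℝ) := by
    have := Nat.lt_floor_add_one ((1+δ)*t); linarith
  have hT1 : 1 ≤ T' := by
    have : (1:ℝ) ≤ (1+δ)*t - 1 := by nlinarith
    have h2 : (1:ℝ) < (T':ℝ) := by linarith
    exact_mod_cast h2.le
  have hden : (0:ℝ) < 2*(T':ℝ) - 1 := by
    have : (1:ℝ) ≤ (T':ℝ) := by exact_mod_cast hT1
    linarith
  -- a.e. monotonicity
  have hstep : ∀ᵐ ω ∂μ, ∀ s, t₀ < s → P.D (s-1) ω ≤ P.D s ω := by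
    rw [MeasureTheory.ae_all_iff]
    intro s
    by_cases h : t₀ < s
    · filter_upwards [P.incr s h] with ω hω _
      rcases hω with h1 | h1 <;> omega
    · exact Filter.Eventually.of_forall fun ω hh => absurd hh h
  have hmono : ∀ᵐ ω ∂μ, ∀ u v, t₀ ≤ u → u ≤ v → P.D u ω ≤ P.D v ω := by
    filter_upwards [hstep] with ω h
    intro u v hu huv
    induction v, huv using Nat.le_induction with
    | base => exact le_rfl
    | succ k hk ih =>
      refine ih.trans ?_
      have := h (k+1) (by omega)
      simpa using this
  have hge : ∀ s, T ≤ s → ∀ᵐ ω ∂μ, ω ∈ A → d ≤ P.D s ω := by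
    intro s hsT
    filter_upwards [hmono] with ω h hωA
    have hD : P.D T ω = d := hωA
    rw [← hD]
    exact h T s ht₀' hsT
  -- measure-theoretic setup
  have hμA_ne : μ A ≠ 0 := hd.ne'
  have hμA_top : μ A ≠ ⊤ := measure_ne_top μ A
  haveI : IsProbabilityMeasure (μ[|A]) := cond_isProbabilityMeasure hμA_ne
  have hAmF : ∀ s, T ≤ s → MeasurableSet[ℱ s] A := fun s hsT =>
    ℱ.mono hsT _ ((P.adapted T) (measurableSet_singleton d))
  have hAm0 : MeasurableSet A := (ℱ.le T) _ (hAmF T le_rfl)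
  set c := 1 - Real.exp (-δ) with hcdef
  have hc0 : 0 ≤ c := by
    have := Real.exp_le_one_iff.mpr (neg_nonpos.mpr hδ0.le); simp only [hcdef]; linarith
  set q : ℝ := c * d / (2 * (T':ℝ) - 1) with hqdef
  have hq0 : 0 ≤ q := by positivity
  set r : ℝ := Real.exp (-q) with hrdef
  set n := T' - T with hndef
  -- base case
  have base : ∫ ω in A, Real.exp (-δ * (P.D T ω : ℝ)) ∂μ
      = Real.exp (-δ * d) * (μ A).toReal := by
    rw [setIntegral_congr_fun hAm0 (g := fun _ => Real.exp (-δ * (d:ℝ)))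
      (fun ω hω => by rw [show P.D T ω = d from hω])]
    rw [setIntegral_const]
    rw [smul_eq_mul, mul_comm]; rfl
  -- induction
  have key : ∀ k, T + k ≤ T' →
      ∫ ω in A, Real.exp (-δ * (P.D (T+k) ω : ℝ)) ∂μ
        ≤ r ^ k * (Real.exp (-δ * d) * (μ A).toReal) := by
    intro k
    induction k with
    | zero => intro _; simp only [Nat.add_zero, pow_zero, one_mul]; exact le_of_eq base
    | succ k ih =>
      intro hk
      have hk' : T + k ≤ T' := by omega
      have hs : t₀ < T + k + 1 := by omega
      have hb := step_bound μ ℱ t₀ P δ hδ0 (T+k+1) hs A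
        (hAmF (T+k) (by omega)) d
        (by simp only [Nat.add_sub_cancel]; exact hge (T+k) (by omega))
      simp only [Nat.add_sub_cancel] at hb
      have hdenk : (0:ℝ) < 2*((T+k+1 : ℕ):ℝ) - 1 := by
        have : (1:ℝ) ≤ ((T+k+1 : ℕ):ℝ) := by exact_mod_cast Nat.one_le_iff_ne_zero.mpr (by omega)
        linarith
      have hfac : 1 - c * (d:ℝ) / (2*((T+k+1 : ℕ):ℝ) - 1) ≤ r := by
        have h1 : 1 - c * (d:ℝ) / (2*((T+k+1 : ℕ):ℝ) - 1)
            ≤ Real.exp (-(c * (d:ℝ) / (2*((T+k+1 : ℕ):ℝ) - 1))) := by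
          linarith [Real.add_one_le_exp (-(c * (d:ℝ) / (2*((T+k+1 : ℕ):ℝ) - 1)))]
        refine h1.trans (Real.exp_le_exp.mpr ?_)
        rw [neg_le_neg_iff, hqdef]
        have hcast : ((T+k+1 : ℕ):ℝ) ≤ (T':ℝ) := by exact_mod_cast hk
        exact div_le_div_of_nonneg_left (mul_nonneg hc0 (Nat.cast_nonneg d)) hdenk
          (by linarith)
      have hprev_nn : 0 ≤ ∫ ω in A, Real.exp (-δ * (P.D (T+k) ω : ℝ)) ∂μ :=
        integral_nonneg fun ω => (Real.exp_pos _).le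
      have hstep2 : ∫ ω in A, Real.exp (-δ * (P.D (T+k+1) ω : ℝ)) ∂μ
          ≤ r * ∫ ω in A, Real.exp (-δ * (P.D (T+k) ω : ℝ)) ∂μ := by
        exact hb.trans (mul_le_mul_of_nonneg_right hfac hprev_nn)
      have h3 : r * ∫ ω in A, Real.exp (-δ * (P.D (T+k) ω : ℝ)) ∂μ
          ≤ r * (r ^ k * (Real.exp (-δ * d) * (μ A).toReal)) :=
        mul_le_mul_of_nonneg_left (ih hk') (Real.exp_pos (-q)).le
      refine le_trans (le_trans hstep2 h3) (le_of_eq (by ring))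
  have hTn : T + n = T' := by omega
  have hfin : ∫ ω in A, Real.exp (-δ * (P.D T' ω : ℝ)) ∂μ
      ≤ r ^ n * (Real.exp (-δ * d) * (μ A).toReal) := by
    have := key n (by omega)
    rwa [hTn] at this
  -- Markov inequality on the conditional measure
  set a : ℝ := (1 + δ/2 - 2*δ^2) * (d:ℝ) with hadef
  set f : Ω → ℝ := fun ω => Real.exp (-δ * (P.D T' ω : ℝ)) with hfdef
  have hfnn : 0 ≤ᵐ[μ[|A]] f := Filter.Eventually.of_forall fun ω => (Real.exp_pos _).le
  have hcond : μ[|A] = (μ A)⁻¹ • μ.restrict A := rfl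
  have hfint : Integrable f (μ[|A]) := by
    rw [hcond]
    exact ((PA_exp_int P hδ0.le T').restrict).smul_measure (ENNReal.inv_ne_top.mpr hμA_ne)
  have markov := mul_meas_ge_le_integral_of_nonneg hfnn hfint (Real.exp (-δ * a))
  have hsub : {ω | (P.D T' ω : ℝ) ≤ a} ⊆ {ω | Real.exp (-δ * a) ≤ f ω} := by
    intro ω hω
    have hω' : (P.D T' ω : ℝ) ≤ a := hω
    have : -δ * a ≤ -δ * (P.D T' ω : ℝ) := by nlinarith
    exact Real.exp_le_exp.mpr this
  have hmm : (μ[|A] {ω | (P.D T' ω : ℝ) ≤ a}).toReal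
      ≤ (μ[|A] {ω | Real.exp (-δ * a) ≤ f ω}).toReal :=
    ENNReal.toReal_mono (measure_ne_top _ _) (measure_mono hsub)
  have hεpos : 0 < Real.exp (-δ * a) := Real.exp_pos _
  have hIcond : ∫ ω, f ω ∂(μ[|A]) = (μ A).toReal⁻¹ * ∫ ω in A, f ω ∂μ := by
    rw [hcond, integral_smul_measure, ENNReal.toReal_inv, smul_eq_mul]
  have hApos : 0 < (μ A).toReal := ENNReal.toReal_pos hμA_ne hμA_top
  have h5 : Real.exp (-δ * a) * (μ[|A] {ω | (P.D T' ω : ℝ) ≤ a}).toReal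
      ≤ (μ A).toReal⁻¹ * (r ^ n * (Real.exp (-δ * d) * (μ A).toReal)) := by
    refine le_trans (le_trans (mul_le_mul_of_nonneg_left hmm hεpos.le) markov) ?_
    rw [hIcond]
    exact mul_le_mul_of_nonneg_left hfin (by positivity)
  have h6 : (μ[|A] {ω | (P.D T' ω : ℝ) ≤ a}).toReal
      ≤ Real.exp (δ * a) * (r ^ n * Real.exp (-δ * d)) := by
    have hcl : (μ A).toReal⁻¹ * (r ^ n * (Real.exp (-δ * d) * (μ A).toReal))
        = r ^ n * Real.exp (-δ * d) := by
      field_simp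
    rw [hcl] at h5
    rw [mul_comm] at h5
    have := (le_div_iff₀ hεpos).mpr h5
    rwa [div_eq_mul_inv, show (Real.exp (-δ * a))⁻¹ = Real.exp (δ * a) by
      rw [← Real.exp_neg]; congr 1; ring, mul_comm] at this
  refine h6.trans ?_
  have hexpeq : Real.exp (δ * a) * (r ^ n * Real.exp (-δ * d))
      = Real.exp (δ * a + (n:ℝ) * (-q) + -δ * d) := by
    rw [hrdef, ← Real.exp_nat_mul, ← Real.exp_add, ← Real.exp_add]
    congr 1
    ring
  rw [hexpeq]
  refine Real.exp_le_exp.mpr ?_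
  -- the final arithmetic
  have hnR : δ * t - 1 ≤ (n:ℝ) := by
    have hcast : (n:ℝ) = (T':ℝ) - (T:ℝ) := by
      exact Nat.cast_sub hTT'
    rw [hcast]; linarith
  have hc2 : δ - δ^2 ≤ c := arith_c δ hδ0
  have hδδ : (0:ℝ) ≤ δ - δ^2 := by nlinarith
  have hX0 : (0:ℝ) ≤ (δ*t - 1) * ((δ - δ^2) * (d:ℝ)) := by
    have h1 : (0:ℝ) ≤ δ * t - 1 := by nlinarith
    exact mul_nonneg h1 (mul_nonneg hδδ (Nat.cast_nonneg d))
  have hnq : δ^2 * (2-δ) * (1-δ) * (d:ℝ) / (4*(1+δ)) ≤ (n:ℝ) * q := by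
    have hq_eq : (n:ℝ) * q = ((n:ℝ) * (c * (d:ℝ))) / (2*(T':ℝ) - 1) := by
      rw [hqdef]; ring
    rw [hq_eq]
    have hA1 : (δ*t - 1) * ((δ - δ^2) * (d:ℝ)) ≤ (n:ℝ) * (c * (d:ℝ)) :=
      mul_le_mul hnR (mul_le_mul_of_nonneg_right hc2 (Nat.cast_nonneg d))
        (mul_nonneg hδδ (Nat.cast_nonneg d)) (Nat.cast_nonneg n)
    have hB1 : (δ*t - 1) * ((δ - δ^2) * (d:ℝ)) / (2*(1+δ)*t)
        ≤ (δ*t - 1) * ((δ - δ^2) * (d:ℝ)) / (2*(T':ℝ) - 1) :=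
      div_le_div_of_nonneg_left hX0 hden (by linarith)
    have hC1 : (δ*t - 1) * ((δ - δ^2) * (d:ℝ)) / (2*(T':ℝ) - 1)
        ≤ ((n:ℝ) * (c * (d:ℝ))) / (2*(T':ℝ) - 1) := by gcongr
    exact le_trans (arith_div δ t (d:ℝ) hδ0 hδ1 ht2 ht0R (Nat.cast_nonneg d))
      (le_trans hB1 hC1)
  have hfinal := arith_final δ (d:ℝ) hδ0 hδ1 (Nat.cast_nonneg d)
  rw [hadef]
  linarith [hnq, hfinal]
end

section
/- Let D be a preferential-attachment degree process started at time t₀. Let δ and t be real numbers with 0 < δ ≤ 1/e², t ≥ 2/δ² and ⌊t⌋ ≥ t₀. Then for every natural number d with ℙ[D(⌊t⌋) = d] > 0, the conditional probability ℙ[ D(⌊(1+δ)t⌋) ≥ (1 + δ/2 + 2δ²)·d | D(⌊t⌋) = d ] is at most ln(2·e·t)·exp(−δ³·d/8). -/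
open MeasureTheory ProbabilityTheory Real

lemma integrable_of_bounds {Ω : Type*} [m0 : MeasurableSpace Ω] {μ : Measure Ω}
    [IsProbabilityMeasure μ] {g : Ω → ℝ} (hg : Measurable g) {C : ℝ}
    (h0 : ∀ ω, 0 ≤ g ω) (hC : ∀ ω, g ω ≤ C) : Integrable g μ := by
  refine (integrable_const C).mono' hg.aestronglyMeasurable (ae_of_all _ fun ω => ?_)
  rw [Real.norm_of_nonneg (h0 ω)]; exact hC ω

lemma exp_le_one_add (δ : ℝ) (h0 : 0 ≤ δ) : Real.exp (δ*(1-δ)) ≤ 1 + δ := by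
  have h1 : 0 < 1 - δ*(1-δ) := by nlinarith [sq_nonneg (δ - 1)]
  have h2 : 1 - δ*(1-δ) ≤ Real.exp (-(δ*(1-δ))) := by
    have := Real.add_one_le_exp (-(δ*(1-δ))); linarith
  have h3 : Real.exp (δ*(1-δ)) ≤ (1 - δ*(1-δ))⁻¹ := by
    rw [le_inv_comm₀ (Real.exp_pos _) h1]
    calc (1 - δ*(1-δ)) ≤ Real.exp (-(δ*(1-δ))) := h2
    _ = (Real.exp (δ*(1-δ)))⁻¹ := by rw [Real.exp_neg]
  refine h3.trans ?_
  rw [inv_le_iff_one_le_mul₀ h1]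
  nlinarith [sq_nonneg δ]

lemma numeric_aux (δ t D Kr nr Tr : ℝ) (hδ0 : 0 < δ) (hδ : δ ≤ 1/7)
    (ht2 : 2 ≤ δ^2*t) (hD : 1 ≤ D)
    (hK1 : (1+δ/2+2*δ^2)*D ≤ Kr) (hK2 : Kr ≤ (1+δ/2+2*δ^2)*D + 1)
    (hn0 : 0 ≤ nr) (hn : nr ≤ δ*t+1) (hT : t - 1 ≤ Tr) :
    nr * (((Kr-1)/(2*Tr+1)) * δ) ≤ -(δ^3*D)/8 + (Kr - D)*(δ*(1-δ)) := by
  have ht98 : 98 ≤ t := by nlinarith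
  have hu : 14 ≤ δ * t := by
    have h2 : 2/δ ≤ δ * t := by rw [div_le_iff₀ hδ0]; nlinarith
    have : 14 ≤ 2/δ := by rw [le_div_iff₀ hδ0]; nlinarith
    linarith
  have h2t : (0:ℝ) < 2*t-1 := by linarith
  have h2T : (0:ℝ) < 2*Tr+1 := by linarith
  have hKr1 : 1 ≤ Kr := by nlinarith
  have step1 : (Kr-1)/(2*Tr+1) ≤ (Kr-1)/(2*t-1) := by
    apply div_le_div_of_nonneg_left (by linarith) h2t (by linarith)
  have step2 : nr * (((Kr-1)/(2*Tr+1)) * δ) ≤ (δ*t+1) * (((Kr-1)/(2*t-1)) * δ) := by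
    have hq : 0 ≤ (Kr-1)/(2*Tr+1) := div_nonneg (by linarith) h2T.le
    have hq2 : 0 ≤ (Kr-1)/(2*Tr+1) * δ := mul_nonneg hq hδ0.le
    exact mul_le_mul hn (by gcongr) hq2 (by linarith)
  refine step2.trans ?_
  -- scalar inequality
  have hX0 : 0 ≤ δ^2*t := by linarith
  have hw : δ^3*t ≤ (1/7)*(δ^2*t) := by
    have := mul_le_mul_of_nonneg_right hδ hX0
    nlinarith
  have hS : (δ*t+1)*(1+δ/2+2*δ^2) ≤ (-(δ^2)/8 + (δ/2+2*δ^2)*(1-δ))*(2*t-1) := by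
    nlinarith [ht2, hw, hδ, hδ0, sq_nonneg δ, mul_pos hδ0 hδ0]
  have hS' : δ*D*((δ*t+1)*(1+δ/2+2*δ^2)) ≤ δ*D*((-(δ^2)/8 + (δ/2+2*δ^2)*(1-δ))*(2*t-1)) := by
    apply mul_le_mul_of_nonneg_left hS (by positivity)
  have hcoef : 0 ≤ (δ*(1-δ)*(2*t-1) - (δ*t+1)*δ) * (Kr - (1+δ/2+2*δ^2)*D) := by
    apply mul_nonneg _ (by linarith)
    have h1 : δ*t ≤ (1/7)*t := by nlinarith
    nlinarith
  have key : (δ*t+1) * ((Kr-1) * δ) ≤ (-(δ^3*D)/8 + (Kr - D)*(δ*(1-δ))) * (2*t-1) := by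
    have h0 : 0 ≤ (δ*t+1)*δ := by positivity
    linarith [hS', hcoef, h0]
  calc (δ*t+1) * (((Kr-1)/(2*t-1)) * δ) = ((δ*t+1) * ((Kr-1) * δ))/(2*t-1) := by ring
  _ ≤ -(δ^3*D)/8 + (Kr - D)*(δ*(1-δ)) := by
      rw [div_le_iff₀ h2t]; exact key

namespace PAProcess

variable {Ω : Type*} [m0 : MeasurableSpace Ω] {μ : Measure Ω} [IsProbabilityMeasure μ]
  {ℱ : Filtration ℕ m0} {t₀ : ℕ} (P : PAProcess μ ℱ t₀)

omit [IsProbabilityMeasure μ] in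
lemma measD (j : ℕ) : Measurable (P.D j) := (P.adapted j).mono (ℱ.le j) le_rfl

lemma step (A : Set Ω) (T : ℕ) (hT : t₀ ≤ T) (hA : MeasurableSet[ℱ T] A)
    (K : ℕ) (θ p : ℝ) (hθ : 1 ≤ θ) (hp : 0 ≤ p)
    (s : ℕ) (hs : T < s) (hps : ((K:ℝ)-1)/(2*(s:ℝ)-1) ≤ p) :
    ∫ ω, A.indicator (fun _ => (1:ℝ)) ω * θ ^ min (P.D s ω) K ∂μ
      ≤ (1 + p*(θ-1)) * ∫ ω, A.indicator (fun _ => (1:ℝ)) ω * θ ^ min (P.D (s-1) ω) K ∂μ := by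
  have hθ0 : (0:ℝ) < θ := lt_of_lt_of_le one_pos hθ
  have ht₀s : t₀ < s := lt_of_le_of_lt hT hs
  set I : Ω → ℝ := A.indicator (fun _ => (1:ℝ)) with hI
  have hAm0 : MeasurableSet A := ℱ.le T A hA
  have hAs1 : MeasurableSet[ℱ (s-1)] A := ℱ.mono (by omega : T ≤ s - 1) A hA
  have hIs1 : Measurable[ℱ (s-1)] I := measurable_const.indicator hAs1
  have hIm : Measurable I := measurable_const.indicator hAm0
  have hI01 : ∀ ω, 0 ≤ I ω ∧ I ω ≤ 1 := by
    intro ω; unfold I; by_cases h : ω ∈ A <;>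
      simp [Set.indicator_of_mem, Set.indicator_of_notMem, h]
  set inc : Set Ω := {ω' | P.D s ω' = P.D (s-1) ω' + 1} with hinc
  have hincm : MeasurableSet inc := by
    have : inc = ⋃ k : ℕ, ((P.D s) ⁻¹' {k+1}) ∩ ((P.D (s-1)) ⁻¹' {k}) := by
      ext ω; simp only [Set.mem_iUnion, Set.mem_inter_iff, Set.mem_preimage,
        Set.mem_singleton_iff, hinc, Set.mem_setOf_eq]
      constructor
      · intro h; exact ⟨P.D (s-1) ω, h, rfl⟩
      · rintro ⟨k, h1, h2⟩; rw [h1, h2]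
    rw [this]
    exact MeasurableSet.iUnion fun k =>
      ((P.measD s) (measurableSet_singleton _)).inter ((P.measD (s-1)) (measurableSet_singleton _))
  -- functions
  set g : Ω → ℝ := fun ω => I ω * (θ ^ min (P.D (s-1) ω + 1) K - θ ^ min (P.D (s-1) ω) K) with hg
  have hfmeas : ∀ j : ℕ, Measurable fun ω => θ ^ min (P.D j ω) K := fun j =>
    (measurable_from_nat (f := fun n => θ ^ min n K)).comp (P.measD j)
  have hfpos : ∀ j ω, 0 < θ ^ min (P.D j ω) K := fun j ω => pow_pos hθ0 _
  have hfle : ∀ j ω, θ ^ min (P.D j ω) K ≤ θ ^ K := fun j ω =>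
    pow_le_pow_right₀ hθ (min_le_right _ _)
  have hg0 : ∀ ω, 0 ≤ g ω := by
    intro ω
    have : θ ^ min (P.D (s-1) ω) K ≤ θ ^ min (P.D (s-1) ω + 1) K :=
      pow_le_pow_right₀ hθ (by omega)
    exact mul_nonneg (hI01 ω).1 (by linarith)
  have hdiff0 : ∀ ω, 0 ≤ θ ^ min (P.D (s-1) ω + 1) K - θ ^ min (P.D (s-1) ω) K := fun ω =>
    sub_nonneg.mpr (pow_le_pow_right₀ hθ (by omega))
  have hgC : ∀ ω, g ω ≤ θ ^ K := by
    intro ω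
    have h1 : θ ^ min (P.D (s-1) ω + 1) K ≤ θ ^ K := pow_le_pow_right₀ hθ (min_le_right _ _)
    have h2 := hfpos (s-1) ω
    calc I ω * (θ ^ min (P.D (s-1) ω + 1) K - θ ^ min (P.D (s-1) ω) K)
        ≤ 1 * (θ ^ min (P.D (s-1) ω + 1) K - θ ^ min (P.D (s-1) ω) K) :=
          mul_le_mul_of_nonneg_right (hI01 ω).2 (hdiff0 ω)
      _ ≤ θ ^ K := by rw [one_mul]; linarith
  have hgmeas : Measurable g := hIm.mul
    (((measurable_from_nat (f := fun n => θ ^ min (n+1) K)).comp (P.measD (s-1))).sub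
      ((measurable_from_nat (f := fun n => θ ^ min n K)).comp (P.measD (s-1))))
  have hgs1 : StronglyMeasurable[ℱ (s-1)] g := by
    refine Measurable.stronglyMeasurable ?_
    exact hIs1.mul
      (((measurable_from_nat (f := fun n => θ ^ min (n+1) K)).comp (P.adapted (s-1))).sub
        ((measurable_from_nat (f := fun n => θ ^ min n K)).comp (P.adapted (s-1))))
  have hint : ∀ j : ℕ, Integrable (fun ω => I ω * θ ^ min (P.D j ω) K) μ := by
    intro j
    refine integrable_of_bounds (hIm.mul (hfmeas j)) (C := θ ^ K) (fun ω => ?_) (fun ω => ?_)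
    · exact mul_nonneg (hI01 ω).1 (hfpos j ω).le
    · calc I ω * θ ^ min (P.D j ω) K ≤ 1 * θ ^ K :=
            mul_le_mul (hI01 ω).2 (hfle j ω) (hfpos j ω).le one_pos.le
        _ = θ ^ K := one_mul _
  have hintg : Integrable g μ := integrable_of_bounds hgmeas hg0 hgC
  have hJ01 : ∀ ω, 0 ≤ inc.indicator (fun _ => (1:ℝ)) ω ∧ inc.indicator (fun _ => (1:ℝ)) ω ≤ 1 := by
    intro ω; by_cases h : ω ∈ inc <;>
      simp [Set.indicator_of_mem, Set.indicator_of_notMem, h]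
  have hint1inc : Integrable (inc.indicator fun _ => (1:ℝ)) μ :=
    (integrable_const (1:ℝ)).indicator hincm
  have hintginc : Integrable (g * inc.indicator fun _ => (1:ℝ)) μ := by
    refine integrable_of_bounds (hgmeas.mul (measurable_const.indicator hincm))
      (C := θ ^ K) (fun ω => ?_) (fun ω => ?_)
    · exact mul_nonneg (hg0 ω) (hJ01 ω).1
    · calc g ω * inc.indicator (fun _ => (1:ℝ)) ω ≤ g ω * 1 :=
            mul_le_mul_of_nonneg_left (hJ01 ω).2 (hg0 ω)
        _ = g ω := mul_one _
        _ ≤ θ ^ K := hgC ω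
  -- a.e. decomposition
  have hdecomp : ∀ᵐ ω ∂μ, I ω * θ ^ min (P.D s ω) K
      = I ω * θ ^ min (P.D (s-1) ω) K + (g * inc.indicator fun _ => (1:ℝ)) ω := by
    filter_upwards [P.incr s ht₀s] with ω hω
    rcases hω with h | h
    · have hnot : ω ∉ inc := by
        rw [hinc]; simp only [Set.mem_setOf_eq]; omega
      simp only [Pi.mul_apply, Set.indicator_of_notMem hnot, mul_zero, add_zero, h]
    · have hmem : ω ∈ inc := by rw [hinc]; exact h
      simp only [Pi.mul_apply, Set.indicator_of_mem hmem, mul_one, hg, h]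
      ring
  have hsplit : ∫ ω, I ω * θ ^ min (P.D s ω) K ∂μ
      = ∫ ω, I ω * θ ^ min (P.D (s-1) ω) K ∂μ + ∫ ω, (g * inc.indicator fun _ => (1:ℝ)) ω ∂μ := by
    rw [← integral_add (hint (s-1)) hintginc]
    exact integral_congr_ae hdecomp
  -- conditional expectation computation
  have hcond := P.cond s ht₀s
  rw [← hinc] at hcond
  have hpull : μ[g * inc.indicator fun _ => (1:ℝ) | ℱ (s-1)]
      =ᵐ[μ] g * μ[inc.indicator fun _ => (1:ℝ) | ℱ (s-1)] :=
    condExp_mul_of_stronglyMeasurable_left hgs1 hintginc hint1inc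
  have hval : ∫ ω, (g * inc.indicator fun _ => (1:ℝ)) ω ∂μ
      = ∫ ω, g ω * ((P.D (s-1) ω : ℝ) / (2*(s:ℝ)-1)) ∂μ := by
    rw [← integral_condExp (ℱ.le (s-1)) (f := g * inc.indicator fun _ => (1:ℝ))]
    refine integral_congr_ae (hpull.trans ?_)
    filter_upwards [hcond] with ω hω
    simp only [Pi.mul_apply, hω]
  -- pointwise bound
  have hptw : ∀ ω, g ω * ((P.D (s-1) ω : ℝ) / (2*(s:ℝ)-1))
      ≤ p*(θ-1) * (I ω * θ ^ min (P.D (s-1) ω) K) := by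
    intro ω
    have hs1 : (1:ℝ) ≤ (s:ℝ) := by exact_mod_cast Nat.one_le_iff_ne_zero.mpr (by omega)
    have hden : (0:ℝ) < 2*(s:ℝ)-1 := by linarith
    have hRHS0 : 0 ≤ p*(θ-1) * (I ω * θ ^ min (P.D (s-1) ω) K) :=
      mul_nonneg (mul_nonneg hp (by linarith)) (mul_nonneg (hI01 ω).1 (hfpos (s-1) ω).le)
    by_cases hAω : ω ∈ A
    · have hIω : I ω = 1 := by rw [hI]; exact Set.indicator_of_mem hAω _
      by_cases hk : P.D (s-1) ω < K
      · have hmin1 : min (P.D (s-1) ω) K = P.D (s-1) ω := min_eq_left (by omega)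
        have hmin2 : min (P.D (s-1) ω + 1) K = P.D (s-1) ω + 1 := min_eq_left (by omega)
        have hcast : ((P.D (s-1) ω : ℝ)) ≤ (K:ℝ) - 1 := by
          have : ((P.D (s-1) ω + 1 : ℕ) : ℝ) ≤ (K:ℝ) := by exact_mod_cast hk
          push_cast at this; linarith
        have hratio0 : 0 ≤ ((P.D (s-1) ω : ℝ)) / (2*(s:ℝ)-1) :=
          div_nonneg (Nat.cast_nonneg _) hden.le
        have hratio : ((P.D (s-1) ω : ℝ)) / (2*(s:ℝ)-1) ≤ p := by
          refine le_trans ?_ hps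
          gcongr
        have hgω : g ω = θ ^ (P.D (s-1) ω) * (θ - 1) := by
          rw [hg]; simp only [hIω, hmin1, hmin2, one_mul, pow_succ]; ring
        rw [hgω, hIω, hmin1, one_mul]
        have h1 : θ ^ (P.D (s-1) ω) * (θ-1) * ((P.D (s-1) ω : ℝ)/(2*(s:ℝ)-1))
            ≤ θ ^ (P.D (s-1) ω) * (θ-1) * p :=
          mul_le_mul_of_nonneg_left hratio (mul_nonneg (pow_pos hθ0 _).le (by linarith))
        linarith [h1]
      · have hmin1 : min (P.D (s-1) ω) K = K := min_eq_right (by omega)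
        have hmin2 : min (P.D (s-1) ω + 1) K = K := min_eq_right (by omega)
        have hgω : g ω = 0 := by rw [hg]; simp only [hmin1, hmin2, sub_self, mul_zero]
        rw [hgω, zero_mul]; exact hRHS0
    · have hIω : I ω = 0 := by rw [hI]; exact Set.indicator_of_notMem hAω _
      have hgω : g ω = 0 := by rw [hg]; simp only [hIω, zero_mul]
      rw [hgω, zero_mul]; exact hRHS0
  have hle2 : ∫ ω, g ω * ((P.D (s-1) ω : ℝ) / (2*(s:ℝ)-1)) ∂μ
      ≤ p*(θ-1) * ∫ ω, I ω * θ ^ min (P.D (s-1) ω) K ∂μ := by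
    rw [← integral_const_mul]
    refine integral_mono_of_nonneg (ae_of_all _ fun ω => ?_)
      ((hint (s-1)).const_mul _) (ae_of_all _ hptw)
    have hs1 : (1:ℝ) ≤ (s:ℝ) := by exact_mod_cast Nat.one_le_iff_ne_zero.mpr (by omega)
    exact mul_nonneg (hg0 ω) (div_nonneg (Nat.cast_nonneg _) (by linarith))
  have hX0 : 0 ≤ ∫ ω, I ω * θ ^ min (P.D (s-1) ω) K ∂μ :=
    integral_nonneg fun ω => mul_nonneg (hI01 ω).1 (hfpos (s-1) ω).le
  rw [hsplit, hval]
  linarith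



lemma iter (A : Set Ω) (T : ℕ) (hT : t₀ ≤ T) (hA : MeasurableSet[ℱ T] A)
    (K : ℕ) (θ p : ℝ) (hθ : 1 ≤ θ) (hp : 0 ≤ p)
    (hmono : ∀ s : ℕ, T < s → ((K:ℝ)-1)/(2*(s:ℝ)-1) ≤ p) (n : ℕ) :
    ∫ ω, A.indicator (fun _ => (1:ℝ)) ω * θ ^ min (P.D (T+n) ω) K ∂μ
      ≤ (1 + p*(θ-1))^n * ∫ ω, A.indicator (fun _ => (1:ℝ)) ω * θ ^ min (P.D T ω) K ∂μ := by
  induction n with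
  | zero => simp
  | succ n ih =>
    have hstep := P.step A T hT hA K θ p hθ hp (T+n+1) (by omega)
      (by exact_mod_cast hmono (T+n+1) (by omega))
    have hrw : T + n + 1 - 1 = T + n := by omega
    rw [hrw] at hstep
    have hρ : (0:ℝ) ≤ 1 + p*(θ-1) := by nlinarith
    calc ∫ ω, A.indicator (fun _ => (1:ℝ)) ω * θ ^ min (P.D (T+(n+1)) ω) K ∂μ
        = ∫ ω, A.indicator (fun _ => (1:ℝ)) ω * θ ^ min (P.D (T+n+1) ω) K ∂μ := by
          rw [show T+(n+1) = T+n+1 by omega]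
      _ ≤ (1 + p*(θ-1)) * ∫ ω, A.indicator (fun _ => (1:ℝ)) ω * θ ^ min (P.D (T+n) ω) K ∂μ :=
          hstep
      _ ≤ (1 + p*(θ-1)) * ((1 + p*(θ-1))^n
            * ∫ ω, A.indicator (fun _ => (1:ℝ)) ω * θ ^ min (P.D T ω) K ∂μ) :=
          mul_le_mul_of_nonneg_left ih hρ
      _ = (1 + p*(θ-1))^(n+1)
            * ∫ ω, A.indicator (fun _ => (1:ℝ)) ω * θ ^ min (P.D T ω) K ∂μ := by ring



end PAProcess

set_option maxHeartbeats 1000000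

theorem short_term_upper_bound
    {Ω : Type*} [m0 : MeasurableSpace Ω] (μ : Measure Ω) [IsProbabilityMeasure μ]
    (ℱ : Filtration ℕ m0) (t₀ : ℕ) (ht₀ : 1 ≤ t₀)
    (P : PAProcess μ ℱ t₀)
    (δ t : ℝ) (hδ0 : 0 < δ) (hδ1 : δ ≤ 1 / Real.exp 1 ^ 2)
    (ht : 2 / δ ^ 2 ≤ t) (ht₀' : t₀ ≤ ⌊t⌋₊)
    (d : ℕ) (hd : 0 < μ {ω | P.D ⌊t⌋₊ ω = d}) :
    (μ[|{ω | P.D ⌊t⌋₊ ω = d}]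
        {ω | (1 + δ / 2 + 2 * δ ^ 2) * d ≤ (P.D ⌊(1 + δ) * t⌋₊ ω : ℝ)}).toReal
      ≤ Real.log (2 * Real.exp 1 * t) * Real.exp (-(δ ^ 3 * d) / 8) := by
  classical
  have hδ7 : δ ≤ 1/7 := by
    have h7 : (7:ℝ) ≤ Real.exp 1 ^ 2 := by nlinarith [Real.exp_one_gt_d9]
    have h8 : 1 / Real.exp 1 ^ 2 ≤ 1/7 :=
      one_div_le_one_div_of_le (by norm_num) h7
    linarith
  have ht2 : 2 ≤ δ^2 * t := by
    rw [div_le_iff₀ (by positivity)] at ht; linarith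
  have htpos : (0:ℝ) < t := lt_of_lt_of_le (by positivity) ht
  have hδsq : δ^2 ≤ 1/49 := by nlinarith
  have ht98 : 98 ≤ t := by nlinarith [mul_le_mul_of_nonneg_right hδsq htpos.le]
  set T := ⌊t⌋₊ with hTdef
  set T' := ⌊(1+δ)*t⌋₊ with hT'def
  set A := {ω | P.D T ω = d} with hAdef
  set ev := {ω | (1 + δ/2 + 2*δ^2) * (d:ℝ) ≤ (P.D T' ω : ℝ)} with hevdef
  -- floor facts
  have hTT' : T ≤ T' := Nat.floor_mono (by nlinarith)
  have hT'le : (T':ℝ) ≤ (1+δ)*t := Nat.floor_le (by nlinarith)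
  have hTge : t - 1 ≤ (T:ℝ) := (Nat.sub_one_lt_floor t).le
  -- measurability
  have hAT : MeasurableSet[ℱ T] A := P.adapted T (measurableSet_singleton d)
  have hAm : MeasurableSet A := ℱ.le T A hAT
  have hevm : MeasurableSet ev :=
    ((measurable_from_nat (f := fun k : ℕ => (k:ℝ))).comp (P.measD T')) measurableSet_Ici
  have hμA0 : μ A ≠ 0 := hd.ne'
  have hμAtop : μ A ≠ ⊤ := measure_ne_top μ A
  have hμAr : 0 < (μ A).toReal := ENNReal.toReal_pos hμA0 hμAtop
  have hlog : 1 ≤ Real.log (2 * Real.exp 1 * t) := by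
    rw [Real.le_log_iff_exp_le (by nlinarith [Real.exp_pos 1])]
    nlinarith [Real.exp_pos 1]
  rw [ProbabilityTheory.cond_apply hAm, ENNReal.toReal_mul, ENNReal.toReal_inv,
    ← div_eq_inv_mul, div_le_iff₀ hμAr]
  have hmemA : ∀ ω : Ω, ω ∈ A ↔ P.D T ω = d := fun ω => Iff.rfl
  have hmemEv : ∀ ω : Ω, ω ∈ ev ↔ (1 + δ/2 + 2*δ^2) * (d:ℝ) ≤ (P.D T' ω : ℝ) :=
    fun ω => Iff.rfl
  clear_value A ev T T'
  have hmono' : (μ (A ∩ ev)).toReal ≤ (μ A).toReal :=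
    ENNReal.toReal_mono hμAtop (measure_mono Set.inter_subset_left)
  rcases Nat.eq_zero_or_pos d with hd0 | hd1
  · subst hd0
    have he1 : Real.exp (-(δ^3*((0:ℕ):ℝ))/8) = 1 := by norm_num
    rw [he1, mul_one]
    nlinarith [hmono', hlog, hμAr]
  -- main case
  · obtain ⟨K, hKdef⟩ : ∃ K : ℕ, K = ⌈(1 + δ/2 + 2*δ^2) * (d:ℝ)⌉₊ := ⟨_, rfl⟩
    have hd1R : (1:ℝ) ≤ (d:ℝ) := by exact_mod_cast hd1
    have hK1 : (1 + δ/2 + 2*δ^2) * (d:ℝ) ≤ (K:ℝ) := by rw [hKdef]; exact Nat.le_ceil _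
    have hK2 : (K:ℝ) ≤ (1 + δ/2 + 2*δ^2) * (d:ℝ) + 1 := by
      rw [hKdef]; exact (Nat.ceil_lt_add_one (by positivity)).le
    have hdKR : (d:ℝ) < (K:ℝ) := by nlinarith
    have hdK : d < K := by exact_mod_cast hdKR
    have hceil : ∀ ω, ω ∈ ev → K ≤ P.D T' ω := by
      intro ω hω
      rw [hKdef]
      exact Nat.ceil_le.mpr ((hmemEv ω).mp hω)
    obtain ⟨θ, hθdef⟩ : ∃ θ : ℝ, θ = 1 + δ := ⟨_, rfl⟩
    have hθ : 1 ≤ θ := by rw [hθdef]; linarith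
    have hθ1 : θ - 1 = δ := by rw [hθdef]; ring
    have hθpos : (0:ℝ) < θ := by linarith
    have hθexp : Real.exp (δ*(1-δ)) ≤ θ := by rw [hθdef]; exact exp_le_one_add δ hδ0.le
    obtain ⟨p, hpdef⟩ : ∃ p : ℝ, p = ((K:ℝ)-1)/(2*(T:ℝ)+1) := ⟨_, rfl⟩
    have hp0 : 0 ≤ p := by
      rw [hpdef]; exact div_nonneg (by linarith) (by positivity)
    have hmono : ∀ s : ℕ, T < s → ((K:ℝ)-1)/(2*(s:ℝ)-1) ≤ p := by
      intro s hs
      rw [hpdef]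
      have hcast : (T:ℝ) + 1 ≤ (s:ℝ) := by exact_mod_cast hs
      have hT0 : (0:ℝ) ≤ (T:ℝ) := Nat.cast_nonneg T
      exact div_le_div_of_nonneg_left (by linarith) (by linarith) (by linarith)
    obtain ⟨n, hndef⟩ : ∃ n : ℕ, n = T' - T := ⟨_, rfl⟩
    have hTn : T + n = T' := by omega
    have hnr : (n:ℝ) ≤ δ*t+1 := by
      have hcast : (T:ℝ) + (n:ℝ) = (T':ℝ) := by exact_mod_cast congrArg (Nat.cast : ℕ → ℝ) hTn
      nlinarith [hcast]
    have hiter := P.iter A T ht₀' hAT K θ p hθ hp0 hmono n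
    rw [hTn] at hiter
    have hbase : ∫ ω, A.indicator (fun _ => (1:ℝ)) ω * θ ^ min (P.D T ω) K ∂μ
        = θ^d * (μ A).toReal := by
      have heq : (fun ω => A.indicator (fun _ => (1:ℝ)) ω * θ ^ min (P.D T ω) K)
          = A.indicator (fun _ => θ^d) := by
        funext ω
        by_cases h : ω ∈ A
        · have hDd : P.D T ω = d := (hmemA ω).mp h
          rw [Set.indicator_of_mem h, Set.indicator_of_mem h, hDd, one_mul,
            min_eq_left hdK.le]
        · rw [Set.indicator_of_notMem h, Set.indicator_of_notMem h, zero_mul]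
      rw [heq, integral_indicator_const _ hAm, smul_eq_mul, mul_comm]; rfl
    have hintT' : Integrable (fun ω => A.indicator (fun _ => (1:ℝ)) ω * θ ^ min (P.D T' ω) K) μ := by
      refine integrable_of_bounds
        ((measurable_const.indicator hAm).mul
          ((measurable_from_nat (f := fun k => θ ^ min k K)).comp (P.measD T')))
        (C := θ ^ K) (fun ω => ?_) (fun ω => ?_)
      · by_cases h : ω ∈ A
        · rw [Set.indicator_of_mem h, one_mul]; exact (pow_pos hθpos _).le
        · rw [Set.indicator_of_notMem h, zero_mul]
      · by_cases h : ω ∈ A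
        · rw [Set.indicator_of_mem h, one_mul]
          exact pow_le_pow_right₀ hθ (min_le_right _ _)
        · rw [Set.indicator_of_notMem h, zero_mul]; exact (pow_pos hθpos _).le
    have hmarkov : θ^K * (μ (A ∩ ev)).toReal
        ≤ ∫ ω, A.indicator (fun _ => (1:ℝ)) ω * θ ^ min (P.D T' ω) K ∂μ := by
      have h1 : θ^K * (μ (A ∩ ev)).toReal = ∫ ω, (A ∩ ev).indicator (fun _ => θ^K) ω ∂μ := by
        rw [integral_indicator_const _ (hAm.inter hevm), smul_eq_mul, mul_comm]; rfl
      rw [h1]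
      refine integral_mono ((integrable_const _).indicator (hAm.inter hevm)) hintT' ?_
      intro ω
      dsimp only
      by_cases h : ω ∈ A ∩ ev
      · rw [Set.indicator_of_mem h, Set.indicator_of_mem h.1, one_mul]
        rw [min_eq_right (hceil ω h.2)]
      · rw [Set.indicator_of_notMem h]
        by_cases h2 : ω ∈ A
        · rw [Set.indicator_of_mem h2, one_mul]; exact (pow_pos hθpos _).le
        · rw [Set.indicator_of_notMem h2, zero_mul]
    -- numeric bound
    have hnumcore := numeric_aux δ t (d:ℝ) (K:ℝ) (n:ℝ) (T:ℝ) hδ0 hδ7 ht2 hd1R hK1 hK2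
      (Nat.cast_nonneg n) hnr hTge
    have hexp1 : (1 + p*(θ-1))^n ≤ Real.exp ((n:ℝ) * (p*δ)) := by
      rw [hθ1]
      calc (1 + p*δ)^n ≤ (Real.exp (p*δ))^n := by
            apply pow_le_pow_left₀ (by positivity)
            linarith [Real.add_one_le_exp (p*δ)]
        _ = Real.exp ((n:ℝ)*(p*δ)) := (Real.exp_nat_mul _ n).symm
    have hexp2 : Real.exp (((K:ℝ)-(d:ℝ)) * (δ*(1-δ))) ≤ θ^(K-d) := by
      calc Real.exp (((K:ℝ)-(d:ℝ)) * (δ*(1-δ)))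
          = Real.exp (((K-d : ℕ):ℝ) * (δ*(1-δ))) := by rw [Nat.cast_sub hdK.le]
        _ = (Real.exp (δ*(1-δ)))^(K-d) := Real.exp_nat_mul _ _
        _ ≤ θ^(K-d) := pow_le_pow_left₀ (Real.exp_pos _).le hθexp _
    have hsplitpow : θ^K = θ^d * θ^(K-d) := by
      rw [← pow_add]; congr 1; omega
    have hnum : (1 + p*(θ-1))^n * θ^d ≤ Real.exp (-(δ^3*(d:ℝ))/8) * θ^K := by
      calc (1 + p*(θ-1))^n * θ^d ≤ Real.exp ((n:ℝ)*(p*δ)) * θ^d :=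
            mul_le_mul_of_nonneg_right hexp1 (pow_pos hθpos d).le
        _ ≤ (Real.exp (-(δ^3*(d:ℝ))/8) * Real.exp (((K:ℝ)-(d:ℝ))*(δ*(1-δ)))) * θ^d := by
            rw [← Real.exp_add]
            refine mul_le_mul_of_nonneg_right (Real.exp_le_exp.mpr ?_) (pow_pos hθpos d).le
            calc (n:ℝ)*(p*δ) = (n:ℝ) * (((K:ℝ)-1)/(2*(T:ℝ)+1) * δ) := by rw [hpdef]
              _ ≤ -(δ^3*(d:ℝ))/8 + ((K:ℝ) - (d:ℝ))*(δ*(1-δ)) := hnumcore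
        _ ≤ (Real.exp (-(δ^3*(d:ℝ))/8) * θ^(K-d)) * θ^d :=
            mul_le_mul_of_nonneg_right
              (mul_le_mul_of_nonneg_left hexp2 (Real.exp_pos _).le) (pow_pos hθpos d).le
        _ = Real.exp (-(δ^3*(d:ℝ))/8) * θ^K := by rw [hsplitpow]; ring
    have hθK : (0:ℝ) < θ^K := pow_pos hθpos K
    have hchain : θ^K * (μ (A ∩ ev)).toReal
        ≤ θ^K * (Real.exp (-(δ^3*(d:ℝ))/8) * (μ A).toReal) := by
      calc θ^K * (μ (A ∩ ev)).toReal
          ≤ ∫ ω, A.indicator (fun _ => (1:ℝ)) ω * θ ^ min (P.D T' ω) K ∂μ := hmarkov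
        _ ≤ (1 + p*(θ-1))^n * ∫ ω, A.indicator (fun _ => (1:ℝ)) ω * θ ^ min (P.D T ω) K ∂μ :=
            hiter
        _ = ((1 + p*(θ-1))^n * θ^d) * (μ A).toReal := by rw [hbase]; ring
        _ ≤ (Real.exp (-(δ^3*(d:ℝ))/8) * θ^K) * (μ A).toReal :=
            mul_le_mul_of_nonneg_right hnum hμAr.le
        _ = θ^K * (Real.exp (-(δ^3*(d:ℝ))/8) * (μ A).toReal) := by ring
    have hx : (μ (A ∩ ev)).toReal ≤ Real.exp (-(δ^3*(d:ℝ))/8) * (μ A).toReal :=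
      le_of_mul_le_mul_left hchain hθK
    calc (μ (A ∩ ev)).toReal ≤ Real.exp (-(δ^3*(d:ℝ))/8) * (μ A).toReal := hx
      _ ≤ Real.log (2*Real.exp 1*t) * Real.exp (-(δ^3*(d:ℝ))/8) * (μ A).toReal :=
          mul_le_mul_of_nonneg_right
            (le_mul_of_one_le_left (Real.exp_pos _).le hlog) hμAr.le
end

section
/- Let 0 < ε ≤ 1/8, let t > 0 be real, and let f : ℝ → ℝ be a monotone increasing nonnegative function. For every integer k ≥ 1 define δₖ = ε/k^{2/3}, hₖ = ∏_{i=1}^{k−1}(1 + δᵢ), and cₖ = ∏_{i=1}^{k−1}(1 + δᵢ/2 − 2δᵢ²). If there exists a natural number n with t < n and f(n) < (1−ε)·√(n/t)·f(t), then there exists an integer k ≥ 1 such that f((1+δₖ)·hₖ·t) < (1 + δₖ/2 − 2δₖ²)·f(hₖ·t) and f(hₖ·t) ≥ cₖ·f(t). -/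
set_option maxHeartbeats 1000000
open Finset Real

lemma aux_rpow_pow (a : ℝ) (ha : 0 ≤ a) (q : ℝ) (n : ℕ) :
    (a ^ q) ^ n = a ^ (q * n) := by
  rw [← Real.rpow_natCast (a ^ q) n, ← Real.rpow_mul ha]

lemma cube_ineq1 (x y : ℝ) (hx : 0 < x) (hxy : x ≤ y) (h3 : y ^ 3 = x ^ 3 + 1) :
    1 / y ^ 4 ≤ 3 / x - 3 / y := by
  have hy : 0 < y := lt_of_lt_of_le hx hxy
  have hfac : (y - x) * (y ^ 2 + x * y + x ^ 2) = 1 := by linear_combination h3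
  rw [div_sub_div _ _ hx.ne' hy.ne', div_le_div_iff₀ (by positivity) (by positivity)]
  have h2 : (y - x) * (y ^ 4 + x * y ^ 3 + x ^ 2 * y ^ 2) = y ^ 2 := by
    linear_combination y ^ 2 * hfac
  nlinarith [h2, mul_nonneg (mul_nonneg (sq_nonneg (y - x)) (sq_nonneg y)) (by linarith : (0:ℝ) ≤ 2 * y + x),
    mul_nonneg (sub_nonneg.2 hxy) hy.le]

lemma cube_ineq2 (x y : ℝ) (hx : 0 ≤ x) (hy : 0 < y) (hxy : x ≤ y) (h3 : y ^ 3 = x ^ 3 + 1) :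
    y - x ≤ 1 / y ^ 2 := by
  have hfac : (y - x) * (y ^ 2 + x * y + x ^ 2) = 1 := by linear_combination h3
  rw [le_div_iff₀ (by positivity)]
  nlinarith [mul_nonneg (sub_nonneg.2 hxy) (mul_nonneg hx hy.le), mul_nonneg (sub_nonneg.2 hxy) (mul_nonneg hx hx)]

lemma xy_facts (m : ℕ) :
    0 ≤ ((m:ℝ) ^ ((1:ℝ)/3)) ∧ 0 < (((m:ℝ)+1) ^ ((1:ℝ)/3)) ∧
    ((m:ℝ) ^ ((1:ℝ)/3)) ≤ (((m:ℝ)+1) ^ ((1:ℝ)/3)) ∧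
    (((m:ℝ)+1) ^ ((1:ℝ)/3)) ^ 3 = ((m:ℝ) ^ ((1:ℝ)/3)) ^ 3 + 1 := by
  have hm : (0:ℝ) ≤ m := Nat.cast_nonneg m
  have h1 : ((m:ℝ) ^ ((1:ℝ)/3)) ^ 3 = m := by
    rw [aux_rpow_pow _ hm]; norm_num
  have h2 : (((m:ℝ)+1) ^ ((1:ℝ)/3)) ^ 3 = (m:ℝ) + 1 := by
    rw [aux_rpow_pow _ (by linarith)]; norm_num
  refine ⟨Real.rpow_nonneg hm _, Real.rpow_pos_of_pos (by linarith) _,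
    Real.rpow_le_rpow hm (by linarith) (by norm_num), by rw [h1, h2]⟩

lemma sum43 (m : ℕ) (hm : 1 ≤ m) :
    ∑ i ∈ Icc 1 m, 1 / (i:ℝ) ^ ((4:ℝ)/3) ≤ 4 - 3 / (m:ℝ) ^ ((1:ℝ)/3) := by
  induction m, hm using Nat.le_induction with
  | base => simp [Real.one_rpow]; norm_num
  | succ m hm ih =>
    rw [Finset.sum_Icc_succ_top (by omega)]
    set x := (m:ℝ) ^ ((1:ℝ)/3) with hxdef
    set y := ((m:ℝ)+1) ^ ((1:ℝ)/3) with hydef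
    obtain ⟨hx0, hy0, hxy, h3⟩ := xy_facts m
    have hx : 0 < x := by
      have : (0:ℝ) < m := by exact_mod_cast hm
      exact Real.rpow_pos_of_pos this _
    have key : 1 / ((m:ℝ)+1) ^ ((4:ℝ)/3) ≤ 3 / x - 3 / y := by
      have h4 : ((m:ℝ)+1) ^ ((4:ℝ)/3) = y ^ 4 := by
        rw [hydef, aux_rpow_pow _ (by positivity)]; norm_num
      rw [h4]; exact cube_ineq1 x y hx hxy h3
    have hc : ((m:ℝ)+1) = ((m+1 : ℕ) : ℝ) := by push_cast; ring
    have h13 : 3 / ((m+1:ℕ):ℝ) ^ ((1:ℝ)/3) = 3 / y := by rw [← hc]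
    rw [h13]
    have := ih
    push_cast
    linarith [key, ih]

lemma sum23 (m : ℕ) :
    (m:ℝ) ^ ((1:ℝ)/3) ≤ ∑ i ∈ Icc 1 m, 1 / (i:ℝ) ^ ((2:ℝ)/3) := by
  induction m with
  | zero => simp [Real.zero_rpow (by norm_num : ((1:ℝ)/3) ≠ 0)]
  | succ m ih =>
    rw [Finset.sum_Icc_succ_top (by omega)]
    set x := (m:ℝ) ^ ((1:ℝ)/3) with hxdef
    set y := ((m:ℝ)+1) ^ ((1:ℝ)/3) with hydef
    obtain ⟨hx0, hy0, hxy, h3⟩ := xy_facts m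
    have key : y - x ≤ 1 / ((m+1:ℕ):ℝ) ^ ((2:ℝ)/3) := by
      have h4 : ((m:ℝ)+1) ^ ((2:ℝ)/3) = y ^ 2 := by
        rw [hydef, aux_rpow_pow _ (by positivity)]; norm_num
      have : ((m+1:ℕ):ℝ) = (m:ℝ)+1 := by push_cast; ring
      rw [this, h4]; exact cube_ineq2 x y hx0 hy0 hxy h3
    have hc : ((m+1:ℕ):ℝ) = (m:ℝ) + 1 := by push_cast; ring
    rw [hc] at key ⊢
    linarith [key, ih]

lemma weier_add (g : ℕ → ℝ) (s : Finset ℕ) (hg : ∀ i ∈ s, 0 ≤ g i) :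
    1 + ∑ i ∈ s, g i ≤ ∏ i ∈ s, (1 + g i) := by
  induction s using Finset.cons_induction with
  | empty => simp
  | cons a s ha ih =>
    rw [Finset.prod_cons, Finset.sum_cons]
    have h1 : ∀ i ∈ s, 0 ≤ g i := fun i hi => hg i (Finset.mem_cons.2 (Or.inr hi))
    have h2 := ih h1
    have hga : 0 ≤ g a := hg a (Finset.mem_cons.2 (Or.inl rfl))
    have hsum : 0 ≤ ∑ i ∈ s, g i := Finset.sum_nonneg h1
    nlinarith

lemma weier_sub (g : ℕ → ℝ) (s : Finset ℕ) (hg : ∀ i ∈ s, 0 ≤ g i) (hg1 : ∀ i ∈ s, g i ≤ 1) :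
    1 - ∑ i ∈ s, g i ≤ ∏ i ∈ s, (1 - g i) := by
  induction s using Finset.cons_induction with
  | empty => simp
  | cons a s ha ih =>
    rw [Finset.prod_cons, Finset.sum_cons]
    have h1 : ∀ i ∈ s, 0 ≤ g i := fun i hi => hg i (Finset.mem_cons.2 (Or.inr hi))
    have h1' : ∀ i ∈ s, g i ≤ 1 := fun i hi => hg1 i (Finset.mem_cons.2 (Or.inr hi))
    have h2 := ih h1 h1'
    have hga : 0 ≤ g a := hg a (Finset.mem_cons.2 (Or.inl rfl))
    have hga1 : g a ≤ 1 := hg1 a (Finset.mem_cons.2 (Or.inl rfl))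
    have hsum : 0 ≤ ∑ i ∈ s, g i := Finset.sum_nonneg h1
    nlinarith

lemma prod_Icc_succ (g : ℕ → ℝ) (k : ℕ) (hk : 1 ≤ k) :
    ∏ i ∈ Icc 1 ((k+1) - 1), g i = (∏ i ∈ Icc 1 (k-1), g i) * g k := by
  obtain ⟨m, rfl⟩ : ∃ m, k = m + 1 := ⟨k - 1, (Nat.succ_pred_eq_of_pos hk).symm⟩
  simp only [Nat.add_sub_cancel]
  exact Finset.prod_Icc_succ_top (by omega) g

theorem monotone_increasing_function_lower
    (ε t : ℝ) (hε0 : 0 < ε) (hε : ε ≤ 1 / 8) (ht : 0 < t)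
    (f : ℝ → ℝ) (hmono : Monotone f) (hnonneg : ∀ x, 0 ≤ f x)
    (δ h c : ℕ → ℝ)
    (hδ : ∀ i : ℕ, δ i = ε / (i : ℝ) ^ ((2 : ℝ) / 3))
    (hh : ∀ k : ℕ, h k = ∏ i ∈ Finset.Icc 1 (k - 1), (1 + δ i))
    (hc : ∀ k : ℕ, c k = ∏ i ∈ Finset.Icc 1 (k - 1), (1 + δ i / 2 - 2 * δ i ^ 2))
    (hex : ∃ n : ℕ, t < n ∧ f n < (1 - ε) * Real.sqrt ((n : ℝ) / t) * f t) :
    ∃ k : ℕ, 1 ≤ k ∧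
      f ((1 + δ k) * h k * t) < (1 + δ k / 2 - 2 * δ k ^ 2) * f (h k * t) ∧
      c k * f t ≤ f (h k * t) := by
  classical
  by_contra hcon
  push_neg at hcon
  -- basic facts about δ
  have hipos : ∀ i : ℕ, 1 ≤ i → (0:ℝ) < (i:ℝ) ^ ((2:ℝ)/3) := by
    intro i hi
    have : (0:ℝ) < i := by exact_mod_cast hi
    positivity
  have hδpos : ∀ i : ℕ, 1 ≤ i → 0 < δ i := by
    intro i hi; rw [hδ]; exact div_pos hε0 (hipos i hi)
  have hδle : ∀ i : ℕ, 1 ≤ i → δ i ≤ ε := by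
    intro i hi; rw [hδ]
    have h1 : (1:ℝ) ≤ (i:ℝ) ^ ((2:ℝ)/3) := by
      rw [show (1:ℝ) = (1:ℝ) ^ ((2:ℝ)/3) by rw [Real.one_rpow]]
      exact Real.rpow_le_rpow (by norm_num) (by exact_mod_cast hi) (by norm_num)
    exact div_le_self hε0.le h1
  have hδ8 : ∀ i : ℕ, 1 ≤ i → δ i ≤ 1/8 := fun i hi => le_trans (hδle i hi) hε
  have hfactpos : ∀ i : ℕ, 1 ≤ i → 0 < 1 + δ i / 2 - 2 * δ i ^ 2 := by
    intro i hi
    have h1 := hδpos i hi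
    have h2 := hδ8 i hi
    nlinarith
  have hhone : ∀ k : ℕ, 1 ≤ h k := by
    intro k; rw [hh]
    calc (1:ℝ) = ∏ i ∈ Icc 1 (k-1), 1 := by rw [Finset.prod_const_one]
      _ ≤ ∏ i ∈ Icc 1 (k-1), (1 + δ i) := by
          apply Finset.prod_le_prod
          · intros; norm_num
          · intro i hi; linarith [hδpos i (Finset.mem_Icc.1 hi).1]
  have hcpos : ∀ k : ℕ, 0 < c k := by
    intro k; rw [hc]
    apply Finset.prod_pos
    intro i hi
    exact hfactpos i (Finset.mem_Icc.1 hi).1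
  -- the inductive lower bound
  have B : ∀ k : ℕ, 1 ≤ k → c k * f t ≤ f (h k * t) := by
    intro k hk
    induction k, hk using Nat.le_induction with
    | base =>
      have h1 : h 1 = 1 := by rw [hh]; simp
      have c1 : c 1 = 1 := by rw [hc]; simp
      rw [h1, c1, one_mul, one_mul]
    | succ k hk ih =>
      have hA : ¬ (f ((1 + δ k) * h k * t) < (1 + δ k / 2 - 2 * δ k ^ 2) * f (h k * t)) := by
        intro hA
        exact absurd ih (not_le.2 (hcon k hk hA))
      push_neg at hA
      have hcs : c (k+1) = c k * (1 + δ k / 2 - 2 * δ k ^ 2) := by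
        rw [hc (k+1), hc k]; exact prod_Icc_succ _ k hk
      have hhs : h (k+1) = h k * (1 + δ k) := by
        rw [hh (k+1), hh k]; exact prod_Icc_succ _ k hk
      have hft : 0 ≤ f t := hnonneg t
      have hfp := hfactpos k hk
      calc c (k+1) * f t = (1 + δ k / 2 - 2 * δ k ^ 2) * (c k * f t) := by
            rw [hcs]; ring
        _ ≤ (1 + δ k / 2 - 2 * δ k ^ 2) * f (h k * t) :=
            mul_le_mul_of_nonneg_left ih hfp.le
        _ ≤ f ((1 + δ k) * h k * t) := hA
        _ = f (h (k+1) * t) := by rw [hhs]; ring_nf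
  -- the key quantitative bound : (1-ε)^2 (1+δ k) h k ≤ (c k)^2
  have key : ∀ k : ℕ, 1 ≤ k → (1 - ε)^2 * ((1 + δ k) * h k) ≤ (c k)^2 := by
    intro k hk
    rcases eq_or_lt_of_le hk with heq | hlt
    · -- k = 1
      subst heq
      have h1 : h 1 = 1 := by rw [hh]; simp
      have c1 : c 1 = 1 := by rw [hc]; simp
      have hδ1 : δ 1 = ε := by rw [hδ]; norm_num
      rw [h1, c1, hδ1]
      nlinarith [mul_nonneg (mul_nonneg hε0.le hε0.le) hε0.le, sq_nonneg ε]
    · -- k ≥ 2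
      have hk2 : 2 ≤ k := hlt
      obtain ⟨m, hm⟩ : ∃ m : ℕ, m = k - 1 := ⟨_, rfl⟩
      have hm1 : 1 ≤ m := by omega
      have hkm : k = m + 1 := by omega
      -- per-factor inequality
      have step1 : ∏ i ∈ Icc 1 m, ((1 + δ i) * (1 - 2 * δ i ^ 2)^2) ≤
          ∏ i ∈ Icc 1 m, (1 + δ i / 2 - 2 * δ i ^ 2)^2 := by
        apply Finset.prod_le_prod
        · intro i hi
          have hip := hδpos i (Finset.mem_Icc.1 hi).1
          have hi8 := hδ8 i (Finset.mem_Icc.1 hi).1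
          nlinarith
        · intro i hi
          have hip := hδpos i (Finset.mem_Icc.1 hi).1
          have hi8 := hδ8 i (Finset.mem_Icc.1 hi).1
          have hsq : δ i ^ 2 ≤ 1/64 := by nlinarith
          have h5 : δ i ^ 5 ≤ (1/64) * δ i ^ 3 := by
            calc δ i ^ 5 = δ i ^ 3 * δ i ^ 2 := by ring
              _ ≤ δ i ^ 3 * (1/64) := mul_le_mul_of_nonneg_left hsq (pow_nonneg hip.le 3)
              _ = (1/64) * δ i ^ 3 := by ring
          nlinarith [sq_nonneg (δ i), h5, pow_nonneg hip.le 3]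
      have step2 : ∏ i ∈ Icc 1 m, ((1 + δ i) * (1 - 2 * δ i ^ 2)^2) =
          h k * (∏ i ∈ Icc 1 m, (1 - 2 * δ i ^ 2))^2 := by
        rw [hh, ← hm, Finset.prod_mul_distrib, Finset.prod_pow]
      have step3 : (c k)^2 = ∏ i ∈ Icc 1 m, (1 + δ i / 2 - 2 * δ i ^ 2)^2 := by
        rw [hc, ← hm, Finset.prod_pow]
      -- bound the sum D
      have hDval : ∑ i ∈ Icc 1 m, 2 * δ i ^ 2 = 2 * ε^2 * ∑ i ∈ Icc 1 m, 1 / (i:ℝ) ^ ((4:ℝ)/3) := by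
        rw [Finset.mul_sum]
        apply Finset.sum_congr rfl
        intro i hi
        have hi1 : 1 ≤ i := (Finset.mem_Icc.1 hi).1
        have hi0 : (0:ℝ) ≤ i := Nat.cast_nonneg i
        have hpow : ((i:ℝ) ^ ((2:ℝ)/3)) ^ 2 = (i:ℝ) ^ ((4:ℝ)/3) := by
          rw [aux_rpow_pow _ hi0]; norm_num
        rw [hδ, div_pow, hpow]; ring
      have hDle : ∑ i ∈ Icc 1 m, 2 * δ i ^ 2 ≤ 2 * ε^2 * (4 - 3 / (m:ℝ) ^ ((1:ℝ)/3)) := by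
        rw [hDval]
        apply mul_le_mul_of_nonneg_left (sum43 m hm1) (by positivity)
      -- scalar inequality
      obtain ⟨u, hu⟩ : ∃ x : ℝ, x = 1 / (m:ℝ) ^ ((1:ℝ)/3) := ⟨_, rfl⟩
      obtain ⟨v, hv⟩ : ∃ x : ℝ, x = 1 / (k:ℝ) ^ ((2:ℝ)/3) := ⟨_, rfl⟩
      have hkpos : (0:ℝ) < k := by exact_mod_cast (by omega : 0 < k)
      have hmpos : (0:ℝ) < m := by exact_mod_cast (by omega : 0 < m)
      have hv0 : 0 < v := by rw [hv]; positivity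
      have hu0 : 0 < u := by rw [hu]; positivity
      have huv : v ≤ u := by
        rw [hu, hv]
        have hle : (m:ℝ) ^ ((1:ℝ)/3) ≤ (k:ℝ) ^ ((2:ℝ)/3) := by
          calc (m:ℝ) ^ ((1:ℝ)/3) ≤ (k:ℝ) ^ ((1:ℝ)/3) :=
              Real.rpow_le_rpow hmpos.le (by exact_mod_cast (by omega : m ≤ k)) (by norm_num)
          _ ≤ (k:ℝ) ^ ((2:ℝ)/3) := by
              apply Real.rpow_le_rpow_of_exponent_le
              · exact_mod_cast (by omega : 1 ≤ k)
              · norm_num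
        exact one_div_le_one_div_of_le (by positivity) hle
      have hu1 : u ≤ 1 := by
        rw [hu, div_le_one (by positivity)]
        have hm1' : (1:ℝ) ≤ (m:ℝ) := by exact_mod_cast hm1
        calc (1:ℝ) = (1:ℝ) ^ ((1:ℝ)/3) := (Real.one_rpow _).symm
          _ ≤ (m:ℝ) ^ ((1:ℝ)/3) := Real.rpow_le_rpow zero_le_one hm1' (by norm_num)
      have hδkv : δ k = ε * v := by rw [hδ, hv]; ring
      obtain ⟨D, hD⟩ : ∃ x : ℝ, x = ∑ i ∈ Icc 1 m, 2 * δ i ^ 2 := ⟨_, rfl⟩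
      rw [← hD] at hDle
      have hD8 : D ≤ 8 * ε^2 - 6 * ε^2 * u := by
        have heq : 2 * ε^2 * (4 - 3 / (m:ℝ) ^ ((1:ℝ)/3)) = 8 * ε^2 - 6 * ε^2 * u := by
          rw [hu]; ring
        linarith [hDle, heq.le, heq.ge]
      have hscalar : (1 - ε) * (1 + δ k / 2) ≤ 1 - D := by
        rw [hδkv]
        nlinarith [mul_nonneg (mul_nonneg hε0.le (by linarith : (0:ℝ) ≤ 1 - 8*ε)) (by linarith : (0:ℝ) ≤ 1 - v/2),
          mul_nonneg (sq_nonneg ε) (by linarith : (0:ℝ) ≤ 6*u - 3.5*v)]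
      have hQD : 1 - D ≤ ∏ i ∈ Icc 1 m, (1 - 2 * δ i ^ 2) := by
        rw [hD]
        apply weier_sub
        · intro i hi
          have := hδpos i (Finset.mem_Icc.1 hi).1
          positivity
        · intro i hi
          have hip := hδpos i (Finset.mem_Icc.1 hi).1
          have hi8 := hδ8 i (Finset.mem_Icc.1 hi).1
          nlinarith
      obtain ⟨Q, hQ⟩ : ∃ x : ℝ, x = ∏ i ∈ Icc 1 m, (1 - 2 * δ i ^ 2) := ⟨_, rfl⟩
      rw [← hQ] at hQD step2
      have hDpos : 0 ≤ 1 - D := by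
        have h1 : 0 ≤ (1 - ε) * (1 + δ k / 2) :=
          mul_nonneg (by linarith) (by linarith [hδpos k hk])
        linarith [hscalar]
      have hQ2 : ((1 - ε) * (1 + δ k / 2))^2 ≤ Q^2 := by
        apply sq_le_sq'
        · nlinarith [hQD, hDpos, hδpos k hk]
        · linarith [hQD, hscalar]
      have hsq : (1 - ε)^2 * (1 + δ k) ≤ ((1 - ε) * (1 + δ k / 2))^2 := by
        have := hδpos k hk
        nlinarith [mul_nonneg (sq_nonneg (1 - ε)) (sq_nonneg (δ k))]
      calc (1 - ε)^2 * ((1 + δ k) * h k) = ((1 - ε)^2 * (1 + δ k)) * h k := by ring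
        _ ≤ ((1 - ε) * (1 + δ k / 2))^2 * h k :=
            mul_le_mul_of_nonneg_right hsq (by linarith [hhone k])
        _ ≤ Q^2 * h k := mul_le_mul_of_nonneg_right hQ2 (by linarith [hhone k])
        _ = h k * Q^2 := by ring
        _ ≤ (c k)^2 := by rw [step3, ← step2]; exact step1
  -- now derive the contradiction
  obtain ⟨n, hn1, hn2⟩ := hex
  -- find m with n < h m * t
  obtain ⟨M, hM⟩ := exists_nat_gt ((n:ℝ) / (ε * t))
  have hex2 : ∃ k : ℕ, (n:ℝ) < h k * t := by
    refine ⟨M^3 + 1, ?_⟩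
    have h1 : 1 + ∑ i ∈ Icc 1 (M^3), δ i ≤ h (M^3 + 1) := by
      rw [hh]
      simp only [Nat.add_sub_cancel]
      apply weier_add
      intro i hi
      exact (hδpos i (Finset.mem_Icc.1 hi).1).le
    have h2 : ε * ((M^3:ℕ):ℝ) ^ ((1:ℝ)/3) ≤ ∑ i ∈ Icc 1 (M^3), δ i := by
      have : ∑ i ∈ Icc 1 (M^3), δ i = ε * ∑ i ∈ Icc 1 (M^3), 1 / (i:ℝ) ^ ((2:ℝ)/3) := by
        rw [Finset.mul_sum]
        apply Finset.sum_congr rfl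
        intro i hi
        rw [hδ]; ring
      rw [this]
      exact mul_le_mul_of_nonneg_left (sum23 (M^3)) hε0.le
    have h3 : ((M^3:ℕ):ℝ) ^ ((1:ℝ)/3) = M := by
      push_cast
      rw [← Real.rpow_natCast (M:ℝ) 3, ← Real.rpow_mul (Nat.cast_nonneg M)]
      norm_num
    rw [h3] at h2
    have h4 : (n:ℝ) < ε * M * t := by
      rw [div_lt_iff₀ (by positivity)] at hM
      calc (n:ℝ) < M * (ε * t) := hM
        _ = ε * M * t := by ring
    have h5 : 1 + ε * M ≤ h (M^3 + 1) := le_trans (by linarith) h1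
    calc (n:ℝ) < ε * M * t := h4
      _ ≤ (1 + ε * M) * t := by nlinarith
      _ ≤ h (M^3 + 1) * t := mul_le_mul_of_nonneg_right h5 ht.le
  set k0 := Nat.find hex2 with hk0
  have hspec : (n:ℝ) < h k0 * t := Nat.find_spec hex2
  have hone : ∀ j : ℕ, j ≤ 1 → ¬ ((n:ℝ) < h j * t) := by
    intro j hj
    have : h j = 1 := by
      rw [hh]
      interval_cases j <;> simp
    rw [this, one_mul]
    push_neg
    exact hn1.le
  have hk02 : 2 ≤ k0 := by
    by_contra hlt
    push_neg at hlt
    exact hone k0 (by omega) hspec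
  set k := k0 - 1 with hkdef
  have hk1 : 1 ≤ k := by omega
  have hkmin : ¬ ((n:ℝ) < h k * t) := Nat.find_min hex2 (by omega)
  push_neg at hkmin
  have hksucc : k0 = k + 1 := by omega
  have hhs : h (k+1) = h k * (1 + δ k) := by
    rw [hh (k+1), hh k]; exact prod_Icc_succ _ k hk1
  -- n/t < (1+δ k) * h k
  have hnt : (n:ℝ) / t < (1 + δ k) * h k := by
    rw [div_lt_iff₀ ht]
    rw [hksucc, hhs] at hspec
    calc (n:ℝ) < h k * (1 + δ k) * t := hspec
      _ = (1 + δ k) * h k * t := by ring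
  have hnt0 : 0 ≤ (n:ℝ) / t := by positivity
  -- (1-ε) √(n/t) ≤ c k
  have hsqrt : (1 - ε) * Real.sqrt ((n:ℝ)/t) ≤ c k := by
    have h1 : ((1 - ε) * Real.sqrt ((n:ℝ)/t))^2 ≤ (c k)^2 := by
      have : ((1 - ε) * Real.sqrt ((n:ℝ)/t))^2 = (1-ε)^2 * ((n:ℝ)/t) := by
        rw [mul_pow, Real.sq_sqrt hnt0]
      rw [this]
      calc (1-ε)^2 * ((n:ℝ)/t) ≤ (1-ε)^2 * ((1 + δ k) * h k) := by
            apply mul_le_mul_of_nonneg_left (le_of_lt hnt) (sq_nonneg _)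
        _ ≤ (c k)^2 := key k hk1
    have h2 : 0 ≤ (1 - ε) * Real.sqrt ((n:ℝ)/t) := by
      apply mul_nonneg (by linarith) (Real.sqrt_nonneg _)
    nlinarith [hcpos k, h1, h2]
  -- final chain
  have hchain : c k * f t ≤ f n := by
    calc c k * f t ≤ f (h k * t) := B k hk1
      _ ≤ f n := hmono hkmin
  have : (1 - ε) * Real.sqrt ((n:ℝ)/t) * f t ≤ c k * f t :=
    mul_le_mul_of_nonneg_right hsqrt (hnonneg t)
  linarith [hn2, hchain, this]
end

section
/- Let 0 < ε ≤ 1/40, let t > 0 be real, and let f : ℝ → ℝ be a monotone increasing nonnegative function. For every integer k ≥ 1 define δₖ = ε/k^{2/3}, hₖ = ∏_{i=1}^{k−1}(1 + δᵢ), and cₖ = ∏_{i=1}^{k−1}(1 + δᵢ/2 + 2δᵢ²). If there exists a natural number n with t < n and f(n) > (1+ε)·√(n/t)·f(t), then there exists an integer k ≥ 1 such that f((1+δₖ)·hₖ·t) > (1 + δₖ/2 + 2δₖ²)·f(hₖ·t) and f(hₖ·t) ≤ cₖ·f(t). -/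
open Finset Real

private lemma cube_of_third (x : ℝ) (hx : 0 ≤ x) : (x ^ ((1:ℝ)/3)) ^ 3 = x := by
  rw [← Real.rpow_natCast (x ^ ((1:ℝ)/3)) 3, ← Real.rpow_mul hx]
  norm_num

private lemma third_of_cube (x : ℝ) (hx : 0 ≤ x) : (x ^ 3) ^ ((1:ℝ)/3) = x := by
  rw [← Real.rpow_natCast x 3, ← Real.rpow_mul hx]
  norm_num

private lemma two_thirds_sq (x : ℝ) (hx : 0 ≤ x) : (x ^ ((1:ℝ)/3)) ^ 2 = x ^ ((2:ℝ)/3) := by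
  rw [← Real.rpow_natCast (x ^ ((1:ℝ)/3)) 2, ← Real.rpow_mul hx]
  norm_num

private lemma sum_inv_cube2 (m : ℕ) :
    ((m:ℝ)) ^ ((1:ℝ)/3) ≤ ∑ i ∈ Icc 1 m, 1 / ((i:ℝ) ^ ((1:ℝ)/3)) ^ 2 := by
  induction m with
  | zero => simp [Real.zero_rpow]
  | succ m ih =>
    set a : ℝ := (m:ℝ) ^ ((1:ℝ)/3) with hadef
    set b : ℝ := ((m:ℝ)+1) ^ ((1:ℝ)/3) with hbdef
    have ha0 : 0 ≤ a := Real.rpow_nonneg (by positivity) _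
    have hb0 : 0 < b := Real.rpow_pos_of_pos (by positivity) _
    have hab : a ≤ b := Real.rpow_le_rpow (by positivity) (by linarith) (by norm_num)
    have ha3 : a ^ 3 = (m:ℝ) := cube_of_third _ (by positivity)
    have hb3 : b ^ 3 = (m:ℝ) + 1 := cube_of_third _ (by positivity)
    rw [Finset.sum_Icc_succ_top (by omega)]
    have hcast : ((m+1 : ℕ) : ℝ) = (m:ℝ) + 1 := by push_cast; ring
    rw [hcast]
    have hstep : b - a ≤ 1 / b ^ 2 := by
      rw [le_div_iff₀ (by positivity)]
      nlinarith [mul_le_mul_of_nonneg_left (mul_self_le_mul_self ha0 hab) ha0]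
    linarith

private lemma sum_inv_cube4 (m : ℕ) :
    ∑ i ∈ Icc 1 m, 1 / ((i:ℝ) ^ ((1:ℝ)/3)) ^ 4 ≤ 4 := by
  rcases Nat.eq_zero_or_pos m with hm | hm
  · subst hm; simp
  · have main : ∀ m : ℕ, 1 ≤ m →
        ∑ i ∈ Icc 1 m, 1 / ((i:ℝ) ^ ((1:ℝ)/3)) ^ 4 ≤ 4 - 3 / (m:ℝ) ^ ((1:ℝ)/3) := by
      intro m hm
      induction m, hm using Nat.le_induction with
      | base => simp [Real.one_rpow]; norm_num
      | succ m hm ih =>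
        set a : ℝ := (m:ℝ) ^ ((1:ℝ)/3) with hadef
        set b : ℝ := ((m:ℝ)+1) ^ ((1:ℝ)/3) with hbdef
        have ha0 : 0 < a := Real.rpow_pos_of_pos (by exact_mod_cast hm) _
        have hb0 : 0 < b := Real.rpow_pos_of_pos (by positivity) _
        have hab : a ≤ b := Real.rpow_le_rpow (by positivity) (by linarith) (by norm_num)
        have ha3 : a ^ 3 = (m:ℝ) := cube_of_third _ (by positivity)
        have hb3 : b ^ 3 = (m:ℝ) + 1 := cube_of_third _ (by positivity)
        rw [Finset.sum_Icc_succ_top (by omega)]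
        have hcast : ((m+1 : ℕ) : ℝ) = (m:ℝ) + 1 := by push_cast; ring
        rw [hcast]
        have hfac : (b - a) * (a^2 + a*b + b^2) = 1 := by nlinarith
        have h3b : a^2 + a*b + b^2 ≤ 3*b^2 := by nlinarith
        have key : 1 ≤ 3 * (b - a) * b ^ 2 := by
          nlinarith [mul_le_mul_of_nonneg_left h3b (sub_nonneg.2 hab)]
        have hstep : 1 / b ^ 4 ≤ 3 / a - 3 / b := by
          rw [div_sub_div _ _ (ne_of_gt ha0) (ne_of_gt hb0),
            div_le_div_iff₀ (by positivity) (by positivity)]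
          nlinarith [mul_le_mul_of_nonneg_right key (sq_nonneg b),
            mul_le_mul_of_nonneg_right hab hb0.le]
        linarith
    calc ∑ i ∈ Icc 1 m, 1 / ((i:ℝ) ^ ((1:ℝ)/3)) ^ 4
        ≤ 4 - 3 / (m:ℝ) ^ ((1:ℝ)/3) := main m hm
      _ ≤ 4 := by
          have : 0 < (m:ℝ) ^ ((1:ℝ)/3) := Real.rpow_pos_of_pos (by exact_mod_cast hm) _
          have : 0 ≤ 3 / (m:ℝ) ^ ((1:ℝ)/3) := by positivity
          linarith

private lemma one_add_sum_le_prod (s : Finset ℕ) (g : ℕ → ℝ) (hg : ∀ i ∈ s, 0 ≤ g i) :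
    1 + ∑ i ∈ s, g i ≤ ∏ i ∈ s, (1 + g i) := by
  classical
  induction s using Finset.induction_on with
  | empty => simp
  | @insert x s' hx ih =>
    rw [Finset.sum_insert hx, Finset.prod_insert hx]
    have h1 : ∀ i ∈ s', 0 ≤ g i := fun i hi => hg i (Finset.mem_insert_of_mem hi)
    have h2 := ih h1
    have hx0 : 0 ≤ g x := hg x (Finset.mem_insert_self x s')
    have hsum : 0 ≤ ∑ i ∈ s', g i := Finset.sum_nonneg h1
    nlinarith

set_option maxHeartbeats 1000000 in
theorem monotone_increasing_function_upper
    (ε t : ℝ) (hε0 : 0 < ε) (hε : ε ≤ 1 / 40) (ht : 0 < t)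
    (f : ℝ → ℝ) (hmono : Monotone f) (hnonneg : ∀ x, 0 ≤ f x)
    (δ h c : ℕ → ℝ)
    (hδ : ∀ i : ℕ, δ i = ε / (i : ℝ) ^ ((2 : ℝ) / 3))
    (hh : ∀ k : ℕ, h k = ∏ i ∈ Finset.Icc 1 (k - 1), (1 + δ i))
    (hc : ∀ k : ℕ, c k = ∏ i ∈ Finset.Icc 1 (k - 1), (1 + δ i / 2 + 2 * δ i ^ 2))
    (hex : ∃ n : ℕ, t < n ∧ (1 + ε) * Real.sqrt ((n : ℝ) / t) * f t < f n) :
    ∃ k : ℕ, 1 ≤ k ∧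
      (1 + δ k / 2 + 2 * δ k ^ 2) * f (h k * t) < f ((1 + δ k) * h k * t) ∧
      f (h k * t) ≤ c k * f t := by
  classical
  by_contra hcon
  push_neg at hcon
  -- basic facts about δ
  have hδpos : ∀ i : ℕ, 1 ≤ i → 0 < δ i := by
    intro i hi
    rw [hδ]
    exact div_pos hε0 (Real.rpow_pos_of_pos (by exact_mod_cast hi) _)
  have hδle : ∀ i : ℕ, 1 ≤ i → δ i ≤ ε := by
    intro i hi
    rw [hδ]
    have h1 : (1:ℝ) ≤ (i:ℝ) ^ ((2:ℝ)/3) :=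
      Real.one_le_rpow (by exact_mod_cast hi) (by norm_num)
    calc ε / (i:ℝ) ^ ((2:ℝ)/3) ≤ ε / 1 := by
          apply div_le_div_of_nonneg_left hε0.le (by linarith) h1
      _ = ε := by ring
  have hδexpr : ∀ i : ℕ, δ i = ε * (1 / ((i:ℝ) ^ ((1:ℝ)/3)) ^ 2) := by
    intro i
    rw [hδ, two_thirds_sq _ (Nat.cast_nonneg i)]
    ring
  have hhpos : ∀ k : ℕ, 1 ≤ h k := by
    intro k
    rw [hh]
    calc (1:ℝ) = ∏ _i ∈ Finset.Icc 1 (k-1), (1:ℝ) := by simp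
      _ ≤ ∏ i ∈ Finset.Icc 1 (k-1), (1 + δ i) := by
          apply Finset.prod_le_prod (fun i _ => by norm_num)
          intro i hi
          have := hδpos i (Finset.mem_Icc.1 hi).1
          linarith
  have hcpos : ∀ k : ℕ, 1 ≤ c k := by
    intro k
    rw [hc]
    calc (1:ℝ) = ∏ _i ∈ Finset.Icc 1 (k-1), (1:ℝ) := by simp
      _ ≤ ∏ i ∈ Finset.Icc 1 (k-1), (1 + δ i / 2 + 2 * δ i ^ 2) := by
          apply Finset.prod_le_prod (fun i _ => by norm_num)
          intro i hi
          have h1 := hδpos i (Finset.mem_Icc.1 hi).1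
          nlinarith
  -- the main induction: f (h k * t) ≤ c k * f t for all k ≥ 1
  have key : ∀ k : ℕ, 1 ≤ k → f (h k * t) ≤ c k * f t := by
    intro k hk
    induction k, hk using Nat.le_induction with
    | base =>
      rw [hh, hc]
      simp
    | succ k hk ih =>
      have hδk := hδpos k hk
      have hnA : ¬ ((1 + δ k / 2 + 2 * δ k ^ 2) * f (h k * t) < f ((1 + δ k) * h k * t)) :=
        fun hA => absurd ih (not_le.2 (hcon k hk hA))
      push_neg at hnA
      obtain ⟨k', rfl⟩ : ∃ k', k = k' + 1 := ⟨k - 1, (Nat.succ_pred_eq_of_pos hk).symm⟩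
      have hh1 : h (k' + 1 + 1) = h (k' + 1) * (1 + δ (k' + 1)) := by
        rw [hh, hh]
        simp only [Nat.add_sub_cancel]
        exact Finset.prod_Icc_succ_top (by omega) _
      have hc1 : c (k' + 1 + 1) = c (k' + 1) * (1 + δ (k' + 1) / 2 + 2 * δ (k' + 1) ^ 2) := by
        rw [hc, hc]
        simp only [Nat.add_sub_cancel]
        exact Finset.prod_Icc_succ_top (by omega) _
      have heq : h (k' + 1 + 1) * t = (1 + δ (k' + 1)) * h (k' + 1) * t := by
        rw [hh1]; ring
      rw [heq, hc1]
      have hfac0 : (0:ℝ) ≤ 1 + δ (k' + 1) / 2 + 2 * δ (k' + 1) ^ 2 := by nlinarith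
      calc f ((1 + δ (k' + 1)) * h (k' + 1) * t)
          ≤ (1 + δ (k' + 1) / 2 + 2 * δ (k' + 1) ^ 2) * f (h (k' + 1) * t) := hnA
        _ ≤ (1 + δ (k' + 1) / 2 + 2 * δ (k' + 1) ^ 2) * (c (k' + 1) * f t) :=
            mul_le_mul_of_nonneg_left ih hfac0
        _ = c (k' + 1) * (1 + δ (k' + 1) / 2 + 2 * δ (k' + 1) ^ 2) * f t := by ring
  obtain ⟨n, hn, hfn⟩ := hex
  set B : ℝ := (n : ℝ) / t with hBdef
  have hB1 : 1 < B := (one_lt_div ht).2 hn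
  -- divergence: some h m exceeds B
  have hdiv : ∃ m : ℕ, B < h m := by
    have hC : 0 < B / ε := div_pos (by linarith) hε0
    obtain ⟨N, hN⟩ := exists_nat_ge ((B / ε) ^ 3)
    refine ⟨N + 1, ?_⟩
    have hsum : (N:ℝ) ^ ((1:ℝ)/3) ≤ ∑ i ∈ Icc 1 N, 1 / ((i:ℝ) ^ ((1:ℝ)/3)) ^ 2 :=
      sum_inv_cube2 N
    have hN3 : B / ε ≤ (N:ℝ) ^ ((1:ℝ)/3) := by
      have := Real.rpow_le_rpow (by positivity) hN (by norm_num : (0:ℝ) ≤ 1/3)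
      rwa [third_of_cube _ hC.le] at this
    have hδsum : ∑ i ∈ Icc 1 N, δ i = ε * ∑ i ∈ Icc 1 N, 1 / ((i:ℝ) ^ ((1:ℝ)/3)) ^ 2 := by
      rw [Finset.mul_sum]
      exact Finset.sum_congr rfl fun i _ => hδexpr i
    have h1 : B ≤ ∑ i ∈ Icc 1 N, δ i := by
      rw [hδsum]
      calc B = ε * (B / ε) := by field_simp
        _ ≤ ε * ∑ i ∈ Icc 1 N, 1 / ((i:ℝ) ^ ((1:ℝ)/3)) ^ 2 := by
            apply mul_le_mul_of_nonneg_left (le_trans hN3 hsum) hε0.le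
    have h2 : 1 + ∑ i ∈ Icc 1 N, δ i ≤ h (N + 1) := by
      rw [hh]
      simp only [Nat.add_sub_cancel]
      exact one_add_sum_le_prod _ _ fun i hi => (hδpos i (Finset.mem_Icc.1 hi).1).le
    linarith
  have hK : B < h (Nat.find hdiv) := Nat.find_spec hdiv
  have hK2 : 2 ≤ Nat.find hdiv := by
    rw [Nat.le_find_iff]
    intro m hm
    have hm1 : h m = 1 := by
      rw [hh]
      interval_cases m <;> simp
    rw [hm1]
    exact not_lt.2 hB1.le
  obtain ⟨k, hKeq⟩ : ∃ k, Nat.find hdiv = k + 1 := ⟨Nat.find hdiv - 1, by omega⟩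
  rw [hKeq] at hK
  have hk1 : 1 ≤ k := by omega
  have hkle : h k ≤ B := not_lt.1 (Nat.find_min hdiv (by omega))
  -- f n ≤ f (h (k+1) * t) ≤ c (k+1) * f t
  have hfn1 : f (n : ℝ) ≤ f (h (k + 1) * t) := by
    apply hmono
    rw [hBdef] at hK
    calc (n:ℝ) = (n:ℝ) / t * t := by field_simp
      _ ≤ h (k + 1) * t := mul_le_mul_of_nonneg_right hK.le ht.le
  have hfn2 := key (k + 1) (by omega)
  -- c (k+1) ≤ (1+ε) * sqrt B
  obtain ⟨k', rfl⟩ : ∃ k', k = k' + 1 := ⟨k - 1, (Nat.succ_pred_eq_of_pos hk1).symm⟩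
  have hcsq : c (k' + 1 + 1) ^ 2 ≤ (1 + ε) ^ 2 * B := by
    have hck : c (k' + 1 + 1) = c (k' + 1) * (1 + δ (k' + 1) / 2 + 2 * δ (k' + 1) ^ 2) := by
      rw [hc, hc]
      simp only [Nat.add_sub_cancel]
      exact Finset.prod_Icc_succ_top (by omega) _
    -- c(k'+1)^2 ≤ h(k'+1) * exp(20 ε²)
    have hterm : ∀ i ∈ Icc 1 k', (1 + δ i / 2 + 2 * δ i ^ 2) ^ 2 ≤
        (1 + δ i) * (1 + 5 * δ i ^ 2) := by
      intro i hi
      have h1 := hδpos i (Finset.mem_Icc.1 hi).1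
      have h2 := hδle i (Finset.mem_Icc.1 hi).1
      have h40 : δ i ≤ 1/40 := le_trans h2 hε
      have hcube : 0 ≤ δ i ^ 3 := by positivity
      nlinarith [mul_le_mul_of_nonneg_right h40 hcube, hcube, sq_nonneg (δ i)]
    have hsumδsq : ∑ i ∈ Icc 1 k', 5 * δ i ^ 2 ≤ 20 * ε ^ 2 := by
      have : ∀ i ∈ Icc 1 k', 5 * δ i ^ 2 =
          5 * ε ^ 2 * (1 / ((i:ℝ) ^ ((1:ℝ)/3)) ^ 4) := by
        intro i _
        rw [hδexpr i]
        ring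
      rw [Finset.sum_congr rfl this, ← Finset.mul_sum]
      have := sum_inv_cube4 k'
      nlinarith
    have hprodsq : c (k' + 1) ^ 2 ≤ h (k' + 1) * Real.exp (20 * ε ^ 2) := by
      rw [hc, hh]
      simp only [Nat.add_sub_cancel]
      rw [← Finset.prod_pow]
      calc ∏ i ∈ Icc 1 k', (1 + δ i / 2 + 2 * δ i ^ 2) ^ 2
          ≤ ∏ i ∈ Icc 1 k', (1 + δ i) * (1 + 5 * δ i ^ 2) := by
            apply Finset.prod_le_prod (fun i _ => sq_nonneg _) hterm
        _ = (∏ i ∈ Icc 1 k', (1 + δ i)) * ∏ i ∈ Icc 1 k', (1 + 5 * δ i ^ 2) :=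
            Finset.prod_mul_distrib
        _ ≤ (∏ i ∈ Icc 1 k', (1 + δ i)) * Real.exp (20 * ε ^ 2) := by
            apply mul_le_mul_of_nonneg_left _ (Finset.prod_nonneg fun i hi => by
              have := hδpos i (Finset.mem_Icc.1 hi).1; linarith)
            calc ∏ i ∈ Icc 1 k', (1 + 5 * δ i ^ 2)
                ≤ ∏ i ∈ Icc 1 k', Real.exp (5 * δ i ^ 2) := by
                  apply Finset.prod_le_prod (fun i _ => by positivity)
                  intro i _
                  have := Real.add_one_le_exp (5 * δ i ^ 2)
                  linarith
              _ = Real.exp (∑ i ∈ Icc 1 k', 5 * δ i ^ 2) := (Real.exp_sum _ _).symm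
              _ ≤ Real.exp (20 * ε ^ 2) := Real.exp_le_exp.2 hsumδsq
    have hlast : (1 + δ (k' + 1) / 2 + 2 * δ (k' + 1) ^ 2) ^ 2 ≤ (1 + ε / 2 + 2 * ε ^ 2) ^ 2 := by
      have h1 := hδpos (k' + 1) (by omega)
      have h2 := hδle (k' + 1) (by omega)
      have hin : 1 + δ (k' + 1) / 2 + 2 * δ (k' + 1) ^ 2 ≤ 1 + ε / 2 + 2 * ε ^ 2 := by
        nlinarith [mul_self_le_mul_self h1.le h2]
      have h0 : (0:ℝ) ≤ 1 + δ (k' + 1) / 2 + 2 * δ (k' + 1) ^ 2 := by nlinarith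
      exact pow_le_pow_left₀ h0 hin 2
    have hexpnum : Real.exp (20 * ε ^ 2) * (1 + ε / 2 + 2 * ε ^ 2) ^ 2 ≤ (1 + ε) ^ 2 := by
      have he1 : Real.exp (20 * ε ^ 2) ≤ 1 / (1 - 20 * ε ^ 2) := by
        have h20 : 20 * ε ^ 2 < 1 := by nlinarith
        have := Real.add_one_le_exp (-(20 * ε ^ 2))
        have hpos : 0 < Real.exp (-(20 * ε ^ 2)) := Real.exp_pos _
        rw [Real.exp_neg] at this hpos
        rw [le_div_iff₀ (by linarith)]
        have h3 : 0 < Real.exp (20 * ε ^ 2) := Real.exp_pos _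
        calc Real.exp (20 * ε ^ 2) * (1 - 20 * ε ^ 2)
            ≤ Real.exp (20 * ε ^ 2) * (Real.exp (20 * ε ^ 2))⁻¹ := by
              apply mul_le_mul_of_nonneg_left (by linarith) h3.le
          _ = 1 := mul_inv_cancel₀ (ne_of_gt h3)
      have h20 : 20 * ε ^ 2 < 1 := by nlinarith
      have hnum : (1 + ε / 2 + 2 * ε ^ 2) ^ 2 ≤ (1 + ε) ^ 2 * (1 - 20 * ε ^ 2) := by
        nlinarith
      calc Real.exp (20 * ε ^ 2) * (1 + ε / 2 + 2 * ε ^ 2) ^ 2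
          ≤ (1 / (1 - 20 * ε ^ 2)) * (1 + ε / 2 + 2 * ε ^ 2) ^ 2 :=
            mul_le_mul_of_nonneg_right he1 (sq_nonneg _)
        _ ≤ (1 + ε) ^ 2 := by
            rw [div_mul_eq_mul_div, div_le_iff₀ (by linarith)]
            linarith [hnum]
    have hh1 : 1 ≤ h (k' + 1) := hhpos _
    calc c (k' + 1 + 1) ^ 2
        = c (k' + 1) ^ 2 * (1 + δ (k' + 1) / 2 + 2 * δ (k' + 1) ^ 2) ^ 2 := by
          rw [hck]; ring
      _ ≤ (h (k' + 1) * Real.exp (20 * ε ^ 2)) * (1 + ε / 2 + 2 * ε ^ 2) ^ 2 := by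
          apply mul_le_mul hprodsq hlast (sq_nonneg _) (by positivity)
      _ = h (k' + 1) * (Real.exp (20 * ε ^ 2) * (1 + ε / 2 + 2 * ε ^ 2) ^ 2) := by ring
      _ ≤ h (k' + 1) * (1 + ε) ^ 2 := mul_le_mul_of_nonneg_left hexpnum (by linarith)
      _ ≤ B * (1 + ε) ^ 2 := mul_le_mul_of_nonneg_right hkle (sq_nonneg _)
      _ = (1 + ε) ^ 2 * B := by ring
  have hcle : c (k' + 1 + 1) ≤ (1 + ε) * Real.sqrt B := by
    have hc0 : 0 ≤ c (k' + 1 + 1) := by linarith [hcpos (k' + 1 + 1)]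
    have := Real.sqrt_le_sqrt hcsq
    rwa [Real.sqrt_sq hc0, Real.sqrt_mul (by positivity) B,
      Real.sqrt_sq (by linarith : (0:ℝ) ≤ 1 + ε)] at this
  have hft := hnonneg t
  have : f (n:ℝ) ≤ (1 + ε) * Real.sqrt B * f t := by
    calc f (n:ℝ) ≤ f (h (k' + 1 + 1) * t) := hfn1
      _ ≤ c (k' + 1 + 1) * f t := hfn2
      _ ≤ (1 + ε) * Real.sqrt B * f t := mul_le_mul_of_nonneg_right hcle hft
  linarith
end

section
/- Let D be a preferential-attachment degree process started at time t₀. Let 0 < ε ≤ 1/40 and let t be a real number with t > 1/ε⁶ and ⌊t⌋ ≥ t₀. For every integer k ≥ 1 define δₖ = ε/k^{2/3}, hₖ = ∏_{i=1}^{k−1}(1 + δᵢ), and c⁻ₖ = ∏_{i=1}^{k−1}(1 + δᵢ/2 − 2δᵢ²). Then for every integer k ≥ 1 and every natural number d with ℙ[D(⌊t⌋) = d] > 0: ℙ[ D(⌊(1+δₖ)·hₖ·t⌋) < (1 + δₖ/2 − 2δₖ²)·D(⌊hₖ·t⌋) and D(⌊hₖ·t⌋) ≥ c⁻ₖ·d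 | D(⌊t⌋) = d ] ≤ exp(−(1/16)·δₖ³·c⁻ₖ·d). -/
open MeasureTheory ProbabilityTheory Real

lemma exp_sub_sq_le {y : ℝ} (h0 : 0 ≤ y) : rexp (y - y^2) ≤ 1 + y := by
  have h2 : (0:ℝ) < 1 - (y - y^2) := by nlinarith
  have h3 := Real.add_one_le_exp (-(y - y^2))
  have h4 : rexp (y - y^2) * rexp (-(y - y^2)) = 1 := by
    rw [← Real.exp_add]; simp
  nlinarith [Real.exp_pos (y - y^2), Real.exp_pos (-(y-y^2))]

lemma exp_neg_le {y : ℝ} (h0 : 0 ≤ y) : rexp (-y) ≤ 1 - y + y^2 := by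
  have h3 := Real.add_one_le_exp y
  have h4 : rexp (-y) * rexp y = 1 := by rw [← Real.exp_add]; simp
  nlinarith [Real.exp_pos y, Real.exp_pos (-y)]

lemma sum_inv_rpow_ge (n : ℕ) :
    3 * (((n:ℝ)+1) ^ ((1:ℝ)/3) - 1) ≤ ∑ i ∈ Finset.Icc 1 n, 1/((i:ℝ)) ^ ((2:ℝ)/3) := by
  induction n with
  | zero => simp
  | succ m ih =>
    rw [Finset.sum_Icc_succ_top (by omega)]
    have hy : (0:ℝ) < (m:ℝ) + 1 := by positivity
    have hA1 : 1 ≤ ((m:ℝ)+1) ^ ((1:ℝ)/3) :=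
      Real.one_le_rpow (le_add_of_nonneg_left (Nat.cast_nonneg m)) (by norm_num)
    set A : ℝ := ((m:ℝ)+1) ^ ((1:ℝ)/3) with hA
    have hA0 : 0 < A := lt_of_lt_of_le one_pos hA1
    have hA3 : A ^ (3:ℕ) = (m:ℝ)+1 := by
      rw [hA, ← Real.rpow_natCast (((m:ℝ)+1) ^ ((1:ℝ)/3)) 3, ← Real.rpow_mul hy.le]
      norm_num
    have hA2 : ((m:ℝ)+1) ^ ((2:ℝ)/3) = A ^ (2:ℕ) := by
      rw [hA, ← Real.rpow_natCast (((m:ℝ)+1) ^ ((1:ℝ)/3)) 2, ← Real.rpow_mul hy.le]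
      norm_num
    set B : ℝ := A + 1/(3*A^2) with hB
    have hB0 : 0 < B := by positivity
    have hB3 : (m:ℝ) + 1 + 1 ≤ B ^ (3:ℕ) := by
      have hexp : B ^ (3:ℕ) = A^3 + 1 + 1/(3*A^3) + 1/(27*A^6) := by
        rw [hB]; field_simp; ring
      rw [hexp]
      have h7 : 0 < 1/(3*A^3) := by positivity
      have h8 : 0 < 1/(27*A^6) := by positivity
      rw [hA3] at *
      linarith
    have hroot : ((m:ℝ)+1+1) ^ ((1:ℝ)/3) ≤ B := by
      have h5 : ((m:ℝ)+1+1) ^ ((1:ℝ)/3) ≤ (B ^ (3:ℕ)) ^ ((1:ℝ)/3) :=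
        Real.rpow_le_rpow (by positivity) hB3 (by norm_num)
      have h6 : (B ^ (3:ℕ)) ^ ((1:ℝ)/3) = B := by
        rw [← Real.rpow_natCast B 3, ← Real.rpow_mul hB0.le]
        norm_num
      rw [h6] at h5; exact h5
    have hterm : 3 * (((m:ℝ)+1+1) ^ ((1:ℝ)/3) - A) ≤ 1/((m:ℝ)+1) ^ ((2:ℝ)/3) := by
      rw [hA2]
      have h9 : 3 * (B - A) = 1/A^2 := by rw [hB]; field_simp; ring
      nlinarith [hroot]
    push_cast
    push_cast at ih
    linarith

set_option maxHeartbeats 1000000 in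
lemma lemX (ε : ℝ) (hε0 : 0 < ε) (hε : ε ≤ 1/40) (k : ℕ) (hk : 1 ≤ k) :
    1/(ε/(k:ℝ) ^ ((2:ℝ)/3))^2
      ≤ (∏ i ∈ Finset.Icc 1 (k-1), (1 + ε/(i:ℝ) ^ ((2:ℝ)/3))) * (1/ε^6) := by
  have hk1 : (1:ℝ) ≤ (k:ℝ) := by exact_mod_cast hk
  have hk0 : (0:ℝ) < (k:ℝ) := lt_of_lt_of_le one_pos hk1
  have hu1 : 1 ≤ (k:ℝ) ^ ((1:ℝ)/3) := Real.one_le_rpow hk1 (by norm_num)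
  set u : ℝ := (k:ℝ) ^ ((1:ℝ)/3) with hu
  have hu0 : 0 < u := lt_of_lt_of_le one_pos hu1
  have hu2 : (k:ℝ) ^ ((2:ℝ)/3) = u^2 := by
    rw [hu, ← Real.rpow_natCast ((k:ℝ) ^ ((1:ℝ)/3)) 2, ← Real.rpow_mul hk0.le]
    norm_num
  -- the product
  set Pr : ℝ := ∏ i ∈ Finset.Icc 1 (k-1), (1 + ε/(i:ℝ) ^ ((2:ℝ)/3)) with hPr
  have hterm_nonneg : ∀ i ∈ Finset.Icc 1 (k-1), (0:ℝ) ≤ ε/(i:ℝ) ^ ((2:ℝ)/3) := by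
    intro i hi
    have : (0:ℝ) ≤ (i:ℝ) ^ ((2:ℝ)/3) := Real.rpow_nonneg (Nat.cast_nonneg i) _
    positivity
  have hPr1 : 1 ≤ Pr := by
    rw [hPr]
    calc (1:ℝ) = ∏ _i ∈ Finset.Icc 1 (k-1), (1:ℝ) := by simp
      _ ≤ ∏ i ∈ Finset.Icc 1 (k-1), (1 + ε/(i:ℝ) ^ ((2:ℝ)/3)) := by
          apply Finset.prod_le_prod
          · intro i hi; norm_num
          · intro i hi; have := hterm_nonneg i hi; linarith
  -- it suffices to show ε^4 u^4 ≤ Pr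
  have hgoal_eq : 1/(ε/(k:ℝ) ^ ((2:ℝ)/3))^2 = u^4/ε^2 := by
    rw [hu2]; field_simp
  rw [hgoal_eq]
  have hsuff : ∀ _ : ε^4 * u^4 ≤ Pr, u^4/ε^2 ≤ Pr * (1/ε^6) := by
    intro hP
    have h1 : u^4/ε^2 = (ε^4*u^4) * (1/ε^6) := by field_simp
    rw [h1]
    apply mul_le_mul_of_nonneg_right hP (by positivity)
  apply hsuff
  by_cases hs : ε * u ≤ 1
  · have : ε^4*u^4 = (ε*u)^4 := by ring
    rw [this]
    calc (ε*u)^4 ≤ 1 := pow_le_one₀ (mul_pos hε0 hu0).le hs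
      _ ≤ Pr := hPr1
  push_neg at hs
  -- exponential lower bound for the product
  have hsum : 3*(u - 1) ≤ ∑ i ∈ Finset.Icc 1 (k-1), 1/((i:ℝ)) ^ ((2:ℝ)/3) := by
    have h2 := sum_inv_rpow_ge (k-1)
    have h3 : ((k-1:ℕ):ℝ) + 1 = (k:ℝ) := by
      have : (k-1) + 1 = k := by omega
      exact_mod_cast congrArg (Nat.cast (R := ℝ)) this
    rw [h3] at h2
    exact h2
  have hexp_le : rexp ((1-ε) * ε * ∑ i ∈ Finset.Icc 1 (k-1), 1/((i:ℝ)) ^ ((2:ℝ)/3)) ≤ Pr := by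
    rw [Finset.mul_sum, Real.exp_sum, hPr]
    apply Finset.prod_le_prod
    · intro i hi; positivity
    · intro i hi
      have hi1 : 1 ≤ i := (Finset.mem_Icc.mp hi).1
      have hi1' : (1:ℝ) ≤ (i:ℝ) := by exact_mod_cast hi1
      have hipow : 1 ≤ (i:ℝ) ^ ((2:ℝ)/3) := Real.one_le_rpow hi1' (by norm_num)
      set di : ℝ := ε/(i:ℝ) ^ ((2:ℝ)/3) with hdi
      have hdi0 : 0 ≤ di := by positivity
      have hdile : di ≤ ε := by
        rw [hdi, div_le_iff₀ (by linarith)]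
        nlinarith
      have harg : (1-ε) * ε * (1/(i:ℝ) ^ ((2:ℝ)/3)) ≤ di - di^2 := by
        have h5 : (1-ε) * ε * (1/(i:ℝ) ^ ((2:ℝ)/3)) = di - ε*di := by
          rw [hdi]; field_simp
        rw [h5]
        nlinarith
      calc rexp ((1-ε) * ε * (1/(i:ℝ) ^ ((2:ℝ)/3))) ≤ rexp (di - di^2) :=
            Real.exp_le_exp.mpr harg
        _ ≤ 1 + di := exp_sub_sq_le hdi0
  -- numeric estimate: ε^4 u^4 = s^4 ≤ exp(...)
  set s : ℝ := ε * u with hs_def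
  have hs0 : 0 < s := mul_pos hε0 hu0
  have hw := Real.sq_sqrt hs0.le
  have hw0 := Real.sqrt_nonneg s
  have hlog : Real.log s ≤ 2*(Real.sqrt s - 1) := by
    have h6 : Real.log (Real.sqrt s) ≤ Real.sqrt s - 1 :=
      Real.log_le_sub_one_of_pos (Real.sqrt_pos.mpr hs0)
    rw [Real.log_sqrt hs0.le] at h6
    linarith
  have hkey : 4 * Real.log s ≤ (1-ε) * ε * (3*(u-1)) := by
    have h7 : 8 * (Real.sqrt s - 1) ≤ 2.9 * s - 0.0725 := by
      nlinarith [sq_nonneg (29*Real.sqrt s - 40)]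
    have h8 : 2.9 * s - 0.0725 ≤ (1-ε) * ε * (3*(u-1)) := by
      have hεu : 1 < ε * u := hs
      have hY : ε*(ε*u) ≤ (1/40)*(ε*u) :=
        mul_le_mul_of_nonneg_right hε (mul_pos hε0 hu0).le
      have hexpand : (1-ε)*ε*(3*(u-1)) = 3*(ε*u) - 3*ε - 3*(ε*(ε*u)) + 3*ε^2 := by ring
      rw [hs_def, hexpand]
      nlinarith [sq_nonneg ε]
    linarith
  have hfin : ε^4*u^4 = rexp (4 * Real.log s) := by
    rw [show (4:ℝ) * Real.log s = Real.log (s^4) by rw [Real.log_pow]; push_cast; ring]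
    rw [Real.exp_log (by positivity)]
    rw [hs_def]; ring
  rw [hfin]
  calc rexp (4*Real.log s) ≤ rexp ((1-ε) * ε * (3*(u-1))) := Real.exp_le_exp.mpr hkey
    _ ≤ rexp ((1-ε) * ε * ∑ i ∈ Finset.Icc 1 (k-1), 1/((i:ℝ)) ^ ((2:ℝ)/3)) := by
        apply Real.exp_le_exp.mpr
        apply mul_le_mul_of_nonneg_left hsum
        exact mul_nonneg (by linarith) hε0.le
    _ ≤ Pr := hexp_le

set_option maxHeartbeats 1600000 in
lemma kappa_le (dl x : ℝ) (N n2 : ℕ) (hdl0 : 0 < dl) (hdl : dl ≤ 1/40)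
    (hx : 1/dl^2 ≤ x) (hn2_1 : 1 ≤ n2)
    (hNlb : dl*x - 1 ≤ (N:ℝ)) (hn2ub : (n2:ℝ) ≤ (1+dl)*x) :
    dl*(dl/2 - 2*dl^2) + (rexp (-dl) - 1) * (N:ℝ) / (2*(n2:ℝ) - 1) ≤ -dl^3/16 := by
  have h40 : (40:ℝ) ≤ 1/dl := by rw [le_div_iff₀ hdl0]; linarith
  have hδx : 40 ≤ dl * x := by
    have h1 : dl * (1/dl^2) ≤ dl * x := mul_le_mul_of_nonneg_left hx hdl0.le
    have h2 : dl * (1/dl^2) = 1/dl := by field_simp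
    linarith [h2 ▸ h1]
  have hx0 : 0 < x := by nlinarith
  have hdl2x : 1 ≤ dl^2 * x := by
    have h1 : dl^2 * (1/dl^2) ≤ dl^2 * x := mul_le_mul_of_nonneg_left hx (by positivity)
    have h2 : dl^2 * (1/dl^2) = 1 := by field_simp
    linarith [h2 ▸ h1]
  have hn2_1' : (1:ℝ) ≤ (n2:ℝ) := by exact_mod_cast hn2_1
  have hden : (0:ℝ) < 2*(n2:ℝ) - 1 := by linarith
  have hdenle : 2*(n2:ℝ) - 1 ≤ 2*((1+dl)*x) := by linarith
  have hr : (dl*x - 1)/(2*((1+dl)*x)) ≤ (N:ℝ)/(2*(n2:ℝ)-1) :=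
    div_le_div₀ (Nat.cast_nonneg N) hNlb hden hdenle
  have hE : rexp (-dl) - 1 ≤ -(dl - dl^2) := by
    have := exp_neg_le hdl0.le
    linarith
  have hEneg : -(dl - dl^2) ≤ 0 := by nlinarith
  have hrw : (rexp (-dl) - 1) * (N:ℝ) / (2*(n2:ℝ) - 1)
      = (rexp (-dl) - 1) * ((N:ℝ) / (2*(n2:ℝ) - 1)) := by ring
  have hrnn : 0 ≤ (N:ℝ)/(2*(n2:ℝ)-1) := div_nonneg (Nat.cast_nonneg N) hden.le
  have h1 : (rexp (-dl) - 1) * ((N:ℝ)/(2*(n2:ℝ)-1))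
      ≤ -(dl - dl^2) * ((N:ℝ)/(2*(n2:ℝ)-1)) :=
    mul_le_mul_of_nonneg_right hE hrnn
  have h2 : -(dl - dl^2) * ((N:ℝ)/(2*(n2:ℝ)-1))
      ≤ -(dl - dl^2) * ((dl*x - 1)/(2*((1+dl)*x))) :=
    mul_le_mul_of_nonpos_left hr hEneg
  -- lower bound the ratio by a polynomial
  have hq1 : ((dl - dl^2)*x)/(2*((1+dl)*x)) = (dl - dl^2)/(2*(1+dl)) := by
    rw [mul_comm (2:ℝ) ((1+dl)*x)]
    rw [show (1+dl)*x*2 = ((1+dl)*2)*x by ring]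
    rw [mul_div_mul_right _ _ (ne_of_gt hx0)]
    ring_nf
  have hq2 : (dl - dl^2)/(2*(1+dl)) ≤ (dl*x - 1)/(2*((1+dl)*x)) := by
    rw [← hq1]
    exact div_le_div_of_nonneg_right (by nlinarith) (by positivity)
  have h3 : -(dl - dl^2) * ((dl*x - 1)/(2*((1+dl)*x)))
      ≤ -(dl - dl^2) * ((dl - dl^2)/(2*(1+dl))) :=
    mul_le_mul_of_nonpos_left hq2 hEneg
  have h4 : -(dl - dl^2) * ((dl - dl^2)/(2*(1+dl))) ≤ -(dl - dl^2)^2*(1-dl)/2 := by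
    have h5 : (dl - dl^2)^2*(1-dl)/2 ≤ (dl - dl^2)^2/(2*(1+dl)) := by
      rw [div_le_div_iff₀ (by norm_num) (by positivity)]
      nlinarith [sq_nonneg (dl - dl^2)]
    have h6 : -(dl - dl^2) * ((dl - dl^2)/(2*(1+dl))) = -((dl - dl^2)^2/(2*(1+dl))) := by
      ring
    rw [h6]
    linarith
  have hfinal : dl*(dl/2 - 2*dl^2) + (-(dl - dl^2)^2*(1-dl)/2) ≤ -dl^3/16 := by
    nlinarith [pow_pos hdl0 3, pow_pos hdl0 4, pow_pos hdl0 5, sq_nonneg dl]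
  rw [hrw]
  linarith



lemma one_le_prod_eps (ε : ℝ) (hε0 : 0 ≤ ε) (m : ℕ) :
    1 ≤ ∏ i ∈ Finset.Icc 1 m, (1 + ε/(i:ℝ) ^ ((2:ℝ)/3)) := by
  calc (1:ℝ) = ∏ _i ∈ Finset.Icc 1 m, (1:ℝ) := by simp
    _ ≤ ∏ i ∈ Finset.Icc 1 m, (1 + ε/(i:ℝ) ^ ((2:ℝ)/3)) := by
        apply Finset.prod_le_prod
        · intro i _; norm_num
        · intro i _
          have h1 : (0:ℝ) ≤ (i:ℝ) ^ ((2:ℝ)/3) := Real.rpow_nonneg (Nat.cast_nonneg i) _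
          have : 0 ≤ ε/(i:ℝ) ^ ((2:ℝ)/3) := by positivity
          linarith

lemma PA_Dbound {Ω : Type*} [m0 : MeasurableSpace Ω] {μ : Measure Ω} [IsProbabilityMeasure μ]
    {ℱ : Filtration ℕ m0} {t₀ : ℕ} (P : PAProcess μ ℱ t₀) :
    ∀ s : ℕ, t₀ ≤ s → ∀ᵐ ω ∂μ, P.D s ω ≤ 2*t₀ + s := by
  intro s hs
  induction s with
  | zero =>
    have h0 : t₀ = 0 := Nat.le_zero.mp hs
    subst h0
    filter_upwards [P.init] with ω hω
    omega
  | succ n ih =>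
    rcases Nat.lt_or_ge n t₀ with hlt | hge
    · have he : t₀ = n+1 := by omega
      subst he
      filter_upwards [P.init] with ω hω
      omega
    · filter_upwards [ih hge, P.incr (n+1) (by omega)] with ω h1 h2
      simp only [Nat.add_sub_cancel] at h2
      omega

set_option maxHeartbeats 4000000 in
theorem single_delta_step_lower
    {Ω : Type*} [m0 : MeasurableSpace Ω] (μ : Measure Ω) [IsProbabilityMeasure μ]
    (ℱ : Filtration ℕ m0) (t₀ : ℕ) (ht₀ : 1 ≤ t₀)
    (P : PAProcess μ ℱ t₀)
    (ε t : ℝ) (hε0 : 0 < ε) (hε : ε ≤ 1 / 40) (ht : 1 / ε ^ 6 < t) (ht₀' : t₀ ≤ ⌊t⌋₊)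
    (δ h c : ℕ → ℝ)
    (hδ : ∀ i : ℕ, δ i = ε / (i : ℝ) ^ ((2 : ℝ) / 3))
    (hh : ∀ k : ℕ, h k = ∏ i ∈ Finset.Icc 1 (k - 1), (1 + δ i))
    (hc : ∀ k : ℕ, c k = ∏ i ∈ Finset.Icc 1 (k - 1), (1 + δ i / 2 - 2 * δ i ^ 2))
    (k : ℕ) (hk : 1 ≤ k)
    (d : ℕ) (hd : 0 < μ {ω | P.D ⌊t⌋₊ ω = d}) :
    (μ[|{ω | P.D ⌊t⌋₊ ω = d}]
        {ω | (P.D ⌊(1 + δ k) * h k * t⌋₊ ω : ℝ)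
              < (1 + δ k / 2 - 2 * δ k ^ 2) * (P.D ⌊h k * t⌋₊ ω : ℝ) ∧
            c k * d ≤ (P.D ⌊h k * t⌋₊ ω : ℝ)}).toReal
      ≤ Real.exp (-(1 / 16) * δ k ^ 3 * c k * d) := by
  classical
  set A : Set Ω := {ω | P.D ⌊t⌋₊ ω = d} with hA_def
  have hAmeasF : MeasurableSet[ℱ ⌊t⌋₊] A := P.adapted ⌊t⌋₊ (measurableSet_singleton d)
  have hAmeas : MeasurableSet A := ℱ.le _ _ hAmeasF
  have hk1 : (1:ℝ) ≤ (k:ℝ) := by exact_mod_cast hk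
  set dl : ℝ := δ k with hdl_def
  have hkpow1 : (1:ℝ) ≤ (k:ℝ) ^ ((2:ℝ)/3) := Real.one_le_rpow hk1 (by norm_num)
  have hdlpos : 0 < dl := by
    rw [hdl_def, hδ k]
    positivity
  have hdlle : dl ≤ ε := by
    rw [hdl_def, hδ k, div_le_iff₀ (by linarith)]
    nlinarith
  have hdl40 : dl ≤ 1/40 := le_trans hdlle hε
  have ht_pos : 0 < t := lt_trans (by positivity) ht
  set H : ℝ := h k with hH_def
  set C : ℝ := c k with hC_def
  -- bounds on the products
  have hHeq : H = ∏ i ∈ Finset.Icc 1 (k-1), (1 + ε/(i:ℝ) ^ ((2:ℝ)/3)) := by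
    rw [hH_def, hh k]
    exact Finset.prod_congr rfl (fun i _ => by rw [hδ i])
  have hH1 : 1 ≤ H := by rw [hHeq]; exact one_le_prod_eps ε hε0.le (k-1)
  have hC1 : 1 ≤ C := by
    rw [hC_def, hc k]
    calc (1:ℝ) = ∏ _i ∈ Finset.Icc 1 (k-1), (1:ℝ) := by simp
      _ ≤ ∏ i ∈ Finset.Icc 1 (k-1), (1 + δ i / 2 - 2 * δ i ^ 2) := by
          apply Finset.prod_le_prod
          · intro i _; norm_num
          · intro i hi
            have hi1 : 1 ≤ i := (Finset.mem_Icc.mp hi).1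
            have hi1' : (1:ℝ) ≤ (i:ℝ) := by exact_mod_cast hi1
            have hipow : (1:ℝ) ≤ (i:ℝ) ^ ((2:ℝ)/3) := Real.one_le_rpow hi1' (by norm_num)
            have hδi0 : 0 ≤ δ i := by rw [hδ i]; positivity
            have hδile : δ i ≤ ε := by
              rw [hδ i, div_le_iff₀ (by linarith)]
              nlinarith
            nlinarith
  set x : ℝ := H * t with hx_def
  have hxt : t ≤ x := by
    rw [hx_def]; nlinarith
  have hx0 : 0 < x := lt_of_lt_of_le ht_pos hxt
  have hx_ge : 1/dl^2 ≤ x := by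
    calc 1/dl^2 = 1/(ε/(k:ℝ) ^ ((2:ℝ)/3))^2 := by rw [hdl_def, hδ k]
      _ ≤ (∏ i ∈ Finset.Icc 1 (k-1), (1 + ε/(i:ℝ) ^ ((2:ℝ)/3))) * (1/ε^6) :=
          lemX ε hε0 hε k hk
      _ ≤ H * t := by
          rw [hHeq]
          have h1 : (0:ℝ) ≤ ∏ i ∈ Finset.Icc 1 (k-1), (1 + ε/(i:ℝ) ^ ((2:ℝ)/3)) := by
            linarith [one_le_prod_eps ε hε0.le (k-1)]
          exact mul_le_mul_of_nonneg_left ht.le h1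
  have hx1 : 1 ≤ x := by
    have : (1:ℝ) ≤ 1/dl^2 := by
      rw [le_div_iff₀ (by positivity)]
      nlinarith
    linarith
  -- floors
  set n1 : ℕ := ⌊x⌋₊ with hn1_def
  set n2 : ℕ := ⌊(1 + dl) * H * t⌋₊ with hn2_def
  have hy2 : (1 + dl) * H * t = (1+dl) * x := by rw [hx_def]; ring
  have hn1le : (n1:ℝ) ≤ x := Nat.floor_le hx0.le
  have hn1gt : x - 1 < (n1:ℝ) := by
    have := Nat.lt_floor_add_one x; linarith
  have hn2ub : (n2:ℝ) ≤ (1+dl)*x := by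
    rw [hn2_def, hy2]
    exact Nat.floor_le (by nlinarith)
  have hn2lb : (1+dl)*x - 1 < (n2:ℝ) := by
    rw [hn2_def, hy2]
    have := Nat.lt_floor_add_one ((1+dl)*x); linarith
  have hn12 : n1 ≤ n2 := by
    rw [hn1_def, hn2_def, hy2]
    exact Nat.floor_mono (by nlinarith)
  have hn2_1 : 1 ≤ n2 := by
    rw [hn2_def, hy2]
    apply Nat.le_floor
    push_cast
    nlinarith
  have hn2R : (1:ℝ) ≤ (n2:ℝ) := by exact_mod_cast hn2_1
  have hden : (0:ℝ) < 2*(n2:ℝ) - 1 := by linarith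
  have ht₀n1 : t₀ ≤ n1 := le_trans ht₀' (Nat.floor_mono hxt)
  -- key real quantities
  set β : ℝ := 1 + dl / 2 - 2 * dl ^ 2 with hβ_def
  set a : ℝ := C * (d:ℝ) with ha_def
  have ha0 : 0 ≤ a := by rw [ha_def]; positivity
  have hβ1 : 1 ≤ β := by rw [hβ_def]; nlinarith
  have hdlβ : 0 ≤ dl * β := by nlinarith
  set q : ℝ := (rexp (-dl) - 1) / (2*(n2:ℝ) - 1) with hq_def
  have hq0 : q ≤ 0 := by
    rw [hq_def]
    apply div_nonpos_of_nonpos_of_nonneg _ hden.le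
    have : rexp (-dl) ≤ 1 := Real.exp_le_one_iff.mpr (by linarith)
    linarith
  set θ : ℕ → ℝ := fun s => -dl + q * ((n2 - s : ℕ):ℝ) with hθ_def
  have hθle : ∀ s : ℕ, θ s ≤ -dl := by
    intro s
    simp only [hθ_def]
    have h1 : (0:ℝ) ≤ ((n2 - s : ℕ):ℝ) := Nat.cast_nonneg _
    nlinarith
  have hθ0 : ∀ s : ℕ, θ s ≤ 0 := fun s => le_trans (hθle s) (by linarith)
  -- N relation
  have hNcast : ((n2 - n1 : ℕ):ℝ) = (n2:ℝ) - (n1:ℝ) := by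
    exact Nat.cast_sub hn12
  have hNlb : dl*x - 1 ≤ ((n2 - n1 : ℕ):ℝ) := by
    rw [hNcast]; nlinarith
  -- kappa
  set κ : ℝ := dl * β + θ n1 with hκ_def
  have hκle : κ ≤ -dl^3/16 := by
    have hkl := kappa_le dl x (n2 - n1) n2 hdlpos hdl40 hx_ge hn2_1 hNlb hn2ub
    have heq : κ = dl*(dl/2 - 2*dl^2) + (rexp (-dl) - 1) * ((n2 - n1 : ℕ):ℝ) / (2*(n2:ℝ) - 1) := by
      rw [hκ_def, hθ_def, hβ_def, hq_def]; ring
    rw [heq]; exact hkl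
  have hκ0 : κ ≤ 0 := le_trans hκle (by have := pow_pos hdlpos 3; linarith)
  have hn1t : ⌊t⌋₊ ≤ n1 := Nat.floor_mono hxt
  -- the weight function
  set B : Set Ω := A ∩ {ω | a ≤ (P.D n1 ω : ℝ)} with hB_def
  have hcastD : ∀ s : ℕ, Measurable[ℱ s] (fun ω => (P.D s ω : ℝ)) := fun s =>
    measurable_from_top.comp (P.adapted s)
  have hBmeasF : MeasurableSet[ℱ n1] B := by
    apply MeasurableSet.inter
    · exact (ℱ.mono hn1t) _ hAmeasF
    · exact (hcastD n1) measurableSet_Ici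
  set G : Ω → ℝ := Set.indicator B (fun ω => rexp (dl * β * (P.D n1 ω : ℝ))) with hG_def
  have hGmeasF : Measurable[ℱ n1] G := by
    rw [hG_def]
    exact Measurable.indicator (measurable_exp.comp ((hcastD n1).const_mul (dl*β))) hBmeasF
  have hGmeas0 : Measurable G := hGmeasF.mono (ℱ.le n1) le_rfl
  have hGnn : ∀ ω, 0 ≤ G ω := by
    intro ω
    rw [hG_def]
    apply Set.indicator_nonneg
    intro ω' _
    positivity
  set C1 : ℝ := rexp (dl * β * ((2*t₀ + n1 : ℕ):ℝ)) with hC1_def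
  have hGbd : ∀ᵐ ω ∂μ, G ω ≤ C1 := by
    filter_upwards [PA_Dbound P n1 ht₀n1] with ω hω
    rw [hG_def, hC1_def]
    by_cases hmem : ω ∈ B
    · rw [Set.indicator_of_mem hmem]
      apply Real.exp_le_exp.mpr
      apply mul_le_mul_of_nonneg_left _ hdlβ
      exact_mod_cast hω
    · rw [Set.indicator_of_notMem hmem]
      positivity
  have intbd : ∀ (f : Ω → ℝ) (Cb : ℝ), AEStronglyMeasurable f μ →
      (∀ᵐ ω ∂μ, ‖f ω‖ ≤ Cb) → Integrable f μ := by
    intro f Cb hmf hb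
    exact Integrable.mono' (integrable_const Cb) hmf hb
  set I : ℕ → ℝ := fun s => ∫ ω, G ω * rexp (θ s * (P.D s ω : ℝ)) ∂μ with hI_def
  have hIntegrand : ∀ (s : ℕ) (θ' : ℝ), θ' ≤ 0 →
      Integrable (fun ω => G ω * rexp (θ' * (P.D s ω : ℝ))) μ := by
    intro s θ' hθ'
    apply intbd _ C1
    · exact (hGmeas0.mul (measurable_exp.comp
        ((measurable_from_top.comp ((P.adapted s).mono (ℱ.le s) le_rfl)).const_mul
          θ'))).aestronglyMeasurable
    · filter_upwards [hGbd] with ω hω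
      have hexp1 : rexp (θ' * (P.D s ω : ℝ)) ≤ 1 := by
        apply Real.exp_le_one_iff.mpr
        exact mul_nonpos_iff.mpr (Or.inr ⟨hθ', Nat.cast_nonneg _⟩)
      have hnn : 0 ≤ G ω * rexp (θ' * (P.D s ω : ℝ)) :=
        mul_nonneg (hGnn ω) (Real.exp_pos _).le
      rw [Real.norm_eq_abs, abs_of_nonneg hnn]
      calc G ω * rexp (θ' * (P.D s ω : ℝ)) ≤ G ω * 1 :=
            mul_le_mul_of_nonneg_left hexp1 (hGnn ω)
        _ = G ω := mul_one _
        _ ≤ C1 := hω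
  -- the supermartingale step
  have step : ∀ s : ℕ, n1 ≤ s → s + 1 ≤ n2 → I (s+1) ≤ I s := by
    intro s hs1 hs2
    have ht₀s' : t₀ ≤ s := le_trans ht₀n1 hs1
    have ht₀s : t₀ < s + 1 := by omega
    have hcond := P.cond (s+1) ht₀s
    simp only [Nat.add_sub_cancel] at hcond
    have hm : ℱ s ≤ m0 := ℱ.le s
    have hθsucc : θ s = θ (s+1) + q := by
      simp only [hθ_def]
      have h1 : n2 - s = (n2 - (s+1)) + 1 := by omega
      rw [h1]
      push_cast
      ring
    have hθu : θ (s+1) ≤ -dl := hθle (s+1)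
    set inc : Set Ω := {ω' | P.D (s+1) ω' = P.D s ω' + 1} with hinc_def
    have hDs1m : Measurable (P.D (s+1)) := (P.adapted (s+1)).mono (ℱ.le (s+1)) le_rfl
    have hDsm : Measurable (P.D s) := (P.adapted s).mono (ℱ.le s) le_rfl
    have hincmeas : MeasurableSet inc :=
      measurableSet_eq_fun hDs1m
        (Measurable.comp (measurable_from_top (f := fun n : ℕ => n + 1)) hDsm)
    set Y : Ω → ℝ := fun ω => G ω * rexp (θ (s+1) * (P.D s ω : ℝ)) with hY_def
    have hYsm : StronglyMeasurable[ℱ s] Y := by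
      apply StronglyMeasurable.mul
      · exact (hGmeasF.mono (ℱ.mono hs1) le_rfl).stronglyMeasurable
      · exact (measurable_exp.comp ((hcastD s).const_mul _)).stronglyMeasurable
    have hYnn : ∀ ω, 0 ≤ Y ω := fun ω => mul_nonneg (hGnn ω) (Real.exp_pos _).le
    have hYbd : ∀ᵐ ω ∂μ, ‖Y ω‖ ≤ C1 := by
      filter_upwards [hGbd] with ω hω
      have hexp1 : rexp (θ (s+1) * (P.D s ω : ℝ)) ≤ 1 := by
        apply Real.exp_le_one_iff.mpr
        exact mul_nonpos_iff.mpr (Or.inr ⟨hθ0 (s+1), Nat.cast_nonneg _⟩)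
      rw [Real.norm_eq_abs, abs_of_nonneg (hYnn ω), hY_def]
      calc G ω * rexp (θ (s+1) * (P.D s ω : ℝ)) ≤ G ω * 1 :=
            mul_le_mul_of_nonneg_left hexp1 (hGnn ω)
        _ = G ω := mul_one _
        _ ≤ C1 := hω
    have hYm0 : Measurable Y := (hYsm.mono hm).measurable
    have intY : Integrable Y μ := intbd _ C1 (hYm0.aestronglyMeasurable) hYbd
    have intInd : Integrable (Set.indicator inc fun _ => (1:ℝ)) μ :=
      (integrable_const (1:ℝ)).indicator hincmeas
    have hIndbd : ∀ ω, ‖Set.indicator inc (fun _ => (1:ℝ)) ω‖ ≤ 1 := by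
      intro ω
      by_cases hmem : ω ∈ inc
      · rw [Set.indicator_of_mem hmem]; simp
      · rw [Set.indicator_of_notMem hmem]; simp
    have intYInd : Integrable (Y * Set.indicator inc fun _ => (1:ℝ)) μ := by
      apply intbd _ C1
      · exact (hYm0.mul ((measurable_const (a := (1:ℝ))).indicator
          hincmeas)).aestronglyMeasurable
      · filter_upwards [hYbd] with ω hω
        rw [Pi.mul_apply, norm_mul]
        calc ‖Y ω‖ * ‖Set.indicator inc (fun _ => (1:ℝ)) ω‖ ≤ ‖Y ω‖ * 1 :=
              mul_le_mul_of_nonneg_left (hIndbd ω) (norm_nonneg _)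
          _ = ‖Y ω‖ := mul_one _
          _ ≤ C1 := hω
    have hmul := condExp_mul_of_stronglyMeasurable_left hYsm intYInd intInd
    have key : ∫ ω, (Y * Set.indicator inc fun _ => (1:ℝ)) ω ∂μ
        = ∫ ω, Y ω * ((P.D s ω : ℝ) / (2*((s+1:ℕ):ℝ) - 1)) ∂μ := by
      calc ∫ ω, (Y * Set.indicator inc fun _ => (1:ℝ)) ω ∂μ
          = ∫ ω, (μ[Y * Set.indicator inc fun _ => (1:ℝ)|ℱ s]) ω ∂μ :=
            (integral_condExp hm).symm
        _ = ∫ ω, Y ω * ((P.D s ω : ℝ) / (2*((s+1:ℕ):ℝ) - 1)) ∂μ := by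
            apply integral_congr_ae
            refine hmul.trans ?_
            filter_upwards [hcond] with ω hω
            rw [Pi.mul_apply, hω]
    have hincr := P.incr (s+1) ht₀s
    simp only [Nat.add_sub_cancel] at hincr
    have expand : I (s+1) = ∫ ω, (Y ω + (rexp (θ (s+1)) - 1) *
        ((Y * Set.indicator inc fun _ => (1:ℝ)) ω)) ∂μ := by
      simp only [hI_def]
      apply integral_congr_ae
      filter_upwards [hincr] with ω hω
      rcases hω with h1 | h1
      · have hnot : ω ∉ inc := by
          rw [hinc_def]
          simp only [Set.mem_setOf_eq, h1]
          omega
        rw [Pi.mul_apply, Set.indicator_of_notMem hnot, h1]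
        simp [hY_def]
      · have hmem : ω ∈ inc := h1
        rw [Pi.mul_apply, Set.indicator_of_mem hmem, h1]
        push_cast
        have harg : θ (s+1) * ((P.D s ω : ℝ) + 1) = θ (s+1) * (P.D s ω : ℝ) + θ (s+1) := by
          ring
        rw [harg, Real.exp_add]
        simp only [hY_def]
        ring
    have hpos1 : (0:ℝ) < 2*((s+1:ℕ):ℝ) - 1 := by
      have : (0:ℝ) ≤ (s:ℝ) := Nat.cast_nonneg s
      push_cast
      linarith
    have intYp : Integrable (fun ω => Y ω * ((P.D s ω : ℝ)/(2*((s+1:ℕ):ℝ)-1))) μ := by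
      apply intbd _ (C1 * ((2*t₀ + s : ℕ):ℝ))
      · exact (hYm0.mul (((measurable_from_top.comp hDsm)).div_const _)).aestronglyMeasurable
      · filter_upwards [hYbd, PA_Dbound P s ht₀s'] with ω hω hω2
        rw [norm_mul]
        have hD0 : (0:ℝ) ≤ (P.D s ω : ℝ) := Nat.cast_nonneg _
        have hDle : (P.D s ω : ℝ) ≤ ((2*t₀ + s : ℕ):ℝ) := by exact_mod_cast hω2
        have hden1 : (1:ℝ) ≤ 2*((s+1:ℕ):ℝ) - 1 := by
          have : (0:ℝ) ≤ (s:ℝ) := Nat.cast_nonneg s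
          push_cast
          linarith
        have hp_nn : 0 ≤ (P.D s ω : ℝ)/(2*((s+1:ℕ):ℝ)-1) := div_nonneg hD0 hpos1.le
        have h2t : (0:ℝ) ≤ ((2*t₀ + s : ℕ):ℝ) := Nat.cast_nonneg _
        have hp_le : (P.D s ω : ℝ)/(2*((s+1:ℕ):ℝ)-1) ≤ ((2*t₀ + s : ℕ):ℝ) := by
          rw [div_le_iff₀ hpos1]
          calc (P.D s ω : ℝ) ≤ ((2*t₀ + s : ℕ):ℝ) := hDle
            _ = ((2*t₀ + s : ℕ):ℝ) * 1 := (mul_one _).symm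
            _ ≤ ((2*t₀ + s : ℕ):ℝ) * (2*((s+1:ℕ):ℝ)-1) :=
                mul_le_mul_of_nonneg_left hden1 h2t
        rw [Real.norm_eq_abs (((P.D s ω : ℝ))/(2*((s+1:ℕ):ℝ)-1)), abs_of_nonneg hp_nn]
        have hC1nn : (0:ℝ) ≤ C1 := by rw [hC1_def]; positivity
        calc ‖Y ω‖ * ((P.D s ω : ℝ)/(2*((s+1:ℕ):ℝ)-1))
            ≤ C1 * ((P.D s ω : ℝ)/(2*((s+1:ℕ):ℝ)-1)) :=
              mul_le_mul_of_nonneg_right hω hp_nn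
          _ ≤ C1 * ((2*t₀ + s : ℕ):ℝ) := mul_le_mul_of_nonneg_left hp_le hC1nn
    have hIs1 : I (s+1) = (∫ ω, Y ω ∂μ) + (rexp (θ (s+1)) - 1) *
        ∫ ω, Y ω * ((P.D s ω : ℝ)/(2*((s+1:ℕ):ℝ)-1)) ∂μ := by
      rw [expand, integral_add intY (intYInd.const_mul _), integral_const_mul, key]
    set Z : Ω → ℝ := fun ω => Y ω + (rexp (θ (s+1)) - 1) *
        (Y ω * ((P.D s ω : ℝ)/(2*((s+1:ℕ):ℝ)-1))) with hZ_def
    have intZ : Integrable Z μ := intY.add (intYp.const_mul _)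
    have hZint : I (s+1) = ∫ ω, Z ω ∂μ := by
      rw [hIs1]
      simp only [hZ_def]
      rw [integral_add intY (intYp.const_mul _), integral_const_mul]
    have hratio : (rexp (θ (s+1)) - 1)/(2*((s+1:ℕ):ℝ)-1) ≤ q := by
      rw [hq_def, div_le_div_iff₀ hpos1 hden]
      have e1 : rexp (θ (s+1)) ≤ rexp (-dl) := Real.exp_le_exp.mpr hθu
      have e2 : rexp (-dl) ≤ 1 := Real.exp_le_one_iff.mpr (by linarith)
      have d12 : 2*((s+1:ℕ):ℝ)-1 ≤ 2*(n2:ℝ)-1 := by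
        have : ((s+1:ℕ):ℝ) ≤ (n2:ℝ) := by exact_mod_cast hs2
        linarith
      have hh1 : (rexp (θ (s+1)) - 1)*(2*(n2:ℝ)-1) ≤ (rexp (-dl) - 1)*(2*(n2:ℝ)-1) :=
        mul_le_mul_of_nonneg_right (by linarith) hden.le
      have hh2 : (rexp (-dl) - 1)*(2*(n2:ℝ)-1) ≤ (rexp (-dl) - 1)*(2*((s+1:ℕ):ℝ)-1) :=
        mul_le_mul_of_nonpos_left d12 (by linarith)
      linarith
    have hpoint : ∀ ω, Z ω ≤ G ω * rexp (θ s * (P.D s ω : ℝ)) := by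
      intro ω
      have hD0 : (0:ℝ) ≤ (P.D s ω : ℝ) := Nat.cast_nonneg _
      have hcp : (rexp (θ (s+1)) - 1) * ((P.D s ω : ℝ)/(2*((s+1:ℕ):ℝ)-1))
          ≤ q * (P.D s ω : ℝ) := by
        have hrw2 : (rexp (θ (s+1)) - 1) * ((P.D s ω : ℝ)/(2*((s+1:ℕ):ℝ)-1))
            = ((rexp (θ (s+1)) - 1)/(2*((s+1:ℕ):ℝ)-1)) * (P.D s ω : ℝ) := by
          ring
        rw [hrw2]
        exact mul_le_mul_of_nonneg_right hratio hD0
      have h1p : 1 + (rexp (θ (s+1)) - 1) * ((P.D s ω : ℝ)/(2*((s+1:ℕ):ℝ)-1))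
          ≤ rexp (q * (P.D s ω : ℝ)) := by
        have := Real.add_one_le_exp (q * (P.D s ω : ℝ))
        linarith
      have hZeq : Z ω = Y ω * (1 + (rexp (θ (s+1)) - 1) *
          ((P.D s ω : ℝ)/(2*((s+1:ℕ):ℝ)-1))) := by
        simp only [hZ_def]
        ring
      have hfinal : Y ω * rexp (q * (P.D s ω : ℝ)) = G ω * rexp (θ s * (P.D s ω : ℝ)) := by
        have harg : θ s * (P.D s ω : ℝ) = θ (s+1) * (P.D s ω : ℝ) + q * (P.D s ω : ℝ) := by
          rw [hθsucc]
          ring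
        rw [harg, Real.exp_add]
        simp only [hY_def]
        ring
      rw [hZeq, ← hfinal]
      exact mul_le_mul_of_nonneg_left h1p (hYnn ω)
    have intIs : Integrable (fun ω => G ω * rexp (θ s * (P.D s ω : ℝ))) μ :=
      hIntegrand s (θ s) (hθ0 s)
    calc I (s+1) = ∫ ω, Z ω ∂μ := hZint
      _ ≤ ∫ ω, G ω * rexp (θ s * (P.D s ω : ℝ)) ∂μ := integral_mono intZ intIs hpoint
      _ = I s := by simp only [hI_def]
  -- iterate the step
  have mono : ∀ j : ℕ, n1 + j ≤ n2 → I (n1 + j) ≤ I n1 := by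
    intro j
    induction j with
    | zero => intro _; simp
    | succ i ih =>
      intro hle
      have h1 : n1 + i ≤ n2 := by omega
      have h2 := step (n1+i) (by omega) (by omega)
      have h3 : n1 + (i+1) = (n1 + i) + 1 := by omega
      rw [h3]
      exact le_trans h2 (ih h1)
  have hIn2n1 : I n2 ≤ I n1 := by
    have := mono (n2 - n1) (by omega)
    rwa [Nat.add_sub_cancel' hn12] at this
  -- the event
  set S : Set Ω := {ω | (P.D n2 ω : ℝ) < β * (P.D n1 ω : ℝ) ∧ a ≤ (P.D n1 ω : ℝ)}
    with hS_def
  have hSmeas : MeasurableSet S := by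
    apply MeasurableSet.inter
    · exact measurableSet_lt ((measurable_from_top.comp ((P.adapted n2).mono (ℱ.le n2) le_rfl)))
        ((measurable_from_top.comp ((P.adapted n1).mono (ℱ.le n1) le_rfl)).const_mul β)
    · exact (measurable_from_top.comp ((P.adapted n1).mono (ℱ.le n1) le_rfl)) measurableSet_Ici
  have hSAmeas : MeasurableSet (S ∩ A) := hSmeas.inter hAmeas
  have hθn2 : θ n2 = -dl := by
    simp only [hθ_def, Nat.sub_self, Nat.cast_zero, mul_zero, add_zero]
  -- (μ (S ∩ A)).toReal ≤ I n2
  have hle1 : (μ (S ∩ A)).toReal ≤ I n2 := by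
    rw [← measureReal_def, ← integral_indicator_one hSAmeas]
    simp only [hI_def]
    apply integral_mono ((integrable_const (1:ℝ)).indicator hSAmeas)
      (hIntegrand n2 (θ n2) (hθ0 n2))
    intro ω
    dsimp only
    by_cases hmem : ω ∈ S ∩ A
    · rw [Set.indicator_of_mem hmem]
      have hS' : ω ∈ S := hmem.1
      have hA' : ω ∈ A := hmem.2
      rw [hS_def] at hS'
      obtain ⟨hS1, hS2⟩ := hS'
      have hB' : ω ∈ B := ⟨hA', hS2⟩
      rw [hG_def, Set.indicator_of_mem hB', ← Real.exp_add, hθn2]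
      have harg : (0:ℝ) ≤ dl * β * (P.D n1 ω : ℝ) + -dl * (P.D n2 ω : ℝ) := by
        have h9 : (0:ℝ) ≤ dl * (β * (P.D n1 ω : ℝ) - (P.D n2 ω : ℝ)) :=
          mul_nonneg hdlpos.le (sub_nonneg.mpr hS1.le)
        linarith [h9, show dl * (β * (P.D n1 ω : ℝ) - (P.D n2 ω : ℝ))
          = dl * β * (P.D n1 ω : ℝ) + -dl * (P.D n2 ω : ℝ) from by ring]
      calc (1 : Ω → ℝ) ω = rexp 0 := by simp
        _ ≤ rexp (dl * β * (P.D n1 ω : ℝ) + -dl * (P.D n2 ω : ℝ)) :=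
            Real.exp_le_exp.mpr harg
    · rw [Set.indicator_of_notMem hmem]
      exact mul_nonneg (hGnn ω) (Real.exp_pos _).le
  -- I n1 ≤ exp(κ a) * μ(A).toReal
  have hle3 : I n1 ≤ rexp (κ * a) * (μ A).toReal := by
    have hBm0 : MeasurableSet B := (ℱ.le n1) _ hBmeasF
    have heq1 : I n1 = ∫ ω, Set.indicator B (fun ω' => rexp (κ * (P.D n1 ω' : ℝ))) ω ∂μ := by
      simp only [hI_def]
      apply integral_congr_ae
      apply Filter.Eventually.of_forall
      intro ω
      dsimp only
      by_cases hmem : ω ∈ B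
      · rw [hG_def, Set.indicator_of_mem hmem, Set.indicator_of_mem hmem, ← Real.exp_add]
        congr 1
        rw [hκ_def]
        ring
      · rw [hG_def, Set.indicator_of_notMem hmem, Set.indicator_of_notMem hmem, zero_mul]
    have hint1 : Integrable (Set.indicator B (fun ω' => rexp (κ * (P.D n1 ω' : ℝ)))) μ := by
      apply intbd _ 1
      · exact ((measurable_exp.comp ((measurable_from_top.comp
          ((P.adapted n1).mono (ℱ.le n1) le_rfl)).const_mul κ)).indicator
            hBm0).aestronglyMeasurable
      · apply Filter.Eventually.of_forall
        intro ω
        by_cases hmem : ω ∈ B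
        · rw [Set.indicator_of_mem hmem, Real.norm_eq_abs, abs_of_nonneg (Real.exp_pos _).le]
          apply Real.exp_le_one_iff.mpr
          exact mul_nonpos_iff.mpr (Or.inr ⟨hκ0, Nat.cast_nonneg _⟩)
        · rw [Set.indicator_of_notMem hmem]; simp
    have hint2 : Integrable (Set.indicator B (fun _ => rexp (κ * a))) μ :=
      (integrable_const _).indicator hBm0
    have hle4 : ∫ ω, Set.indicator B (fun ω' => rexp (κ * (P.D n1 ω' : ℝ))) ω ∂μ
        ≤ ∫ ω, Set.indicator B (fun _ => rexp (κ * a)) ω ∂μ := by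
      apply integral_mono hint1 hint2
      intro ω
      dsimp only
      by_cases hmem : ω ∈ B
      · rw [Set.indicator_of_mem hmem, Set.indicator_of_mem hmem]
        apply Real.exp_le_exp.mpr
        exact mul_le_mul_of_nonpos_left hmem.2 hκ0
      · rw [Set.indicator_of_notMem hmem, Set.indicator_of_notMem hmem]
    have hle5 : ∫ ω, Set.indicator B (fun _ => rexp (κ * a)) ω ∂μ
        = (μ B).toReal * rexp (κ * a) := by
      rw [integral_indicator_const _ hBm0]
      simp [smul_eq_mul, measureReal_def]
    have hμBA : (μ B).toReal ≤ (μ A).toReal :=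
      ENNReal.toReal_mono (measure_ne_top μ A) (measure_mono Set.inter_subset_left)
    calc I n1 = ∫ ω, Set.indicator B (fun ω' => rexp (κ * (P.D n1 ω' : ℝ))) ω ∂μ := heq1
      _ ≤ ∫ ω, Set.indicator B (fun _ => rexp (κ * a)) ω ∂μ := hle4
      _ = (μ B).toReal * rexp (κ * a) := hle5
      _ ≤ (μ A).toReal * rexp (κ * a) :=
          mul_le_mul_of_nonneg_right hμBA (Real.exp_pos _).le
      _ = rexp (κ * a) * (μ A).toReal := by ring
  -- final assembly
  have hμA_pos : 0 < (μ A).toReal := ENNReal.toReal_pos hd.ne' (measure_ne_top μ A)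
  have hchain : (μ (S ∩ A)).toReal ≤ rexp (κ * a) * (μ A).toReal :=
    le_trans hle1 (le_trans hIn2n1 hle3)
  rw [cond_apply hAmeas, Set.inter_comm, ENNReal.toReal_mul, ENNReal.toReal_inv]
  have hexp2 : rexp (κ * a) ≤ rexp (-(1/16) * dl^3 * C * (d:ℝ)) := by
    apply Real.exp_le_exp.mpr
    have h1 : κ * a ≤ (-dl^3/16) * a := mul_le_mul_of_nonneg_right hκle ha0
    have h2 : (-dl^3/16) * a = -(1/16) * dl^3 * C * (d:ℝ) := by
      rw [ha_def]
      ring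
    linarith
  calc (μ A).toReal⁻¹ * (μ (S ∩ A)).toReal
      ≤ (μ A).toReal⁻¹ * (rexp (κ * a) * (μ A).toReal) :=
        mul_le_mul_of_nonneg_left hchain (by positivity)
    _ = rexp (κ * a) := by field_simp
    _ ≤ rexp (-(1/16) * dl^3 * C * (d:ℝ)) := hexp2
end

section
/- Let (Aₙ) be a ([1,1,0,2], 1, 0) Pólya urn process (Aₙ has the distribution of the degree of the first vertex of the preferential attachment graph G₁ⁿ with parameter m = 1). Then for every real ε > 0 there exists N ∈ ℕ such that for all natural numbers n > N: ℙ[Aₙ ≤ ε·√n] ≥ 1/n. -/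
open MeasureTheory ProbabilityTheory Real Finset

/-- A `([1,1,0,2], a₀, b₀)` Pólya urn process: `A n` counts the balls of color `A`
after `n` steps in the balanced two-color urn with replacement matrix `[[1,1],[0,2]]`,
started from `a₀` balls of color `A` and `b₀` balls of color `B`.  The increments are
in `{0,1}` a.s. and the conditional probability of an increment, given `A 0, …, A n`,
is `A n / (a₀ + b₀ + 2 n)`. -/
structure PolyaUrn112 {Ω : Type*} [m0 : MeasurableSpace Ω] (μ : Measure Ω)
    (a₀ b₀ : ℕ) where
  A : ℕ → Ω → ℕ
  meas : ∀ n : ℕ, Measurable (A n)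
  init : ∀ ω, A 0 ω = a₀
  incr : ∀ n : ℕ, ∀ᵐ ω ∂μ, A (n + 1) ω = A n ω ∨ A (n + 1) ω = A n ω + 1
  cond : ∀ n : ℕ,
      μ[Set.indicator {ω' | A (n + 1) ω' = A n ω' + 1} (fun _ => (1 : ℝ))
        | ⨆ i ∈ Finset.range (n + 1), MeasurableSpace.comap (A i) inferInstance]
        =ᵐ[μ] fun ω => (A n ω : ℝ) / (a₀ + b₀ + 2 * n)

/-- The ordinary binomial coefficient of two integers, equal to `0` when the lower
index exceeds the upper index or when an index is negative. -/
def intChoose (a b : ℤ) : ℕ :=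
  if 0 ≤ b ∧ b ≤ a then a.toNat.choose b.toNat else 0

section Aux
variable {Ω : Type*} [m0 : MeasurableSpace Ω] {μ : Measure Ω} [IsProbabilityMeasure μ]
  (U : PolyaUrn112 μ 1 0)

lemma aux_key (n a : ℕ) :
    (μ (U.A n ⁻¹' {a} ∩ {ω | U.A (n+1) ω = U.A n ω + 1})).toReal
      = (a : ℝ) / (2*n+1) * (μ (U.A n ⁻¹' {a})).toReal := by
  set S := U.A n ⁻¹' {a} with hSdef
  set T := {ω | U.A (n+1) ω = U.A n ω + 1} with hTdef
  have hT : MeasurableSet T := by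
    have : T = (fun ω => (U.A (n+1) ω, U.A n ω)) ⁻¹' {p : ℕ × ℕ | p.1 = p.2 + 1} := rfl
    rw [this]
    exact ((U.meas (n+1)).prodMk (U.meas n)) (by measurability)
  have hS : MeasurableSet S := U.meas n (measurableSet_singleton a)
  have hm : (⨆ i ∈ Finset.range (n+1),
      MeasurableSpace.comap (U.A i) inferInstance) ≤ m0 := by
    refine iSup₂_le fun i _ => ?_
    exact measurable_iff_comap_le.mp (U.meas i)
  have hSm : MeasurableSet[⨆ i ∈ Finset.range (n+1),
      MeasurableSpace.comap (U.A i) inferInstance] S := by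
    have h1 : MeasurableSet[MeasurableSpace.comap (U.A n) inferInstance] S :=
      ⟨{a}, measurableSet_singleton a, rfl⟩
    exact (le_iSup₂ (f := fun i (_ : i ∈ Finset.range (n+1)) =>
      MeasurableSpace.comap (U.A i) inferInstance) n (Finset.self_mem_range_succ n)) _ h1
  have hint : Integrable (T.indicator fun _ => (1:ℝ)) μ :=
    (integrable_const 1).indicator hT
  have h1 : ∫ ω in S, T.indicator (fun _ => (1:ℝ)) ω ∂μ
      = ∫ ω in S, (U.A n ω : ℝ) / ((1:ℕ) + (0:ℕ) + 2*(n:ℝ)) ∂μ := by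
    rw [← setIntegral_condExp hm hint hSm]
    refine setIntegral_congr_ae hS ?_
    filter_upwards [U.cond n] with ω h _
    simpa using h
  rw [setIntegral_indicator hT, setIntegral_const, smul_eq_mul, mul_one, measureReal_def] at h1
  have h2 : ∫ ω in S, (U.A n ω : ℝ) / ((1:ℕ) + (0:ℕ) + 2*(n:ℝ)) ∂μ
      = (μ S).toReal * ((a:ℝ) / (2*n+1)) := by
    rw [setIntegral_congr_fun hS (g := fun _ => (a:ℝ) / (2*(n:ℝ)+1))
      (fun ω hω => by simp only [hSdef, Set.mem_preimage, Set.mem_singleton_iff] at hω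
                      simp [hω]; ring_nf), setIntegral_const, smul_eq_mul, measureReal_def]
  rw [h1, h2]
  ring

lemma aux_compl (n a : ℕ) :
    (μ (U.A n ⁻¹' {a} ∩ {ω | U.A (n+1) ω = U.A n ω})).toReal
      = (1 - (a : ℝ) / (2*n+1)) * (μ (U.A n ⁻¹' {a})).toReal := by
  set S := U.A n ⁻¹' {a} with hSdef
  set T := {ω | U.A (n+1) ω = U.A n ω + 1} with hTdef
  set T' := {ω | U.A (n+1) ω = U.A n ω} with hT'def
  have hT : MeasurableSet T := by
    have : T = (fun ω => (U.A (n+1) ω, U.A n ω)) ⁻¹' {p : ℕ × ℕ | p.1 = p.2 + 1} := rfl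
    rw [this]; exact ((U.meas (n+1)).prodMk (U.meas n)) (by measurability)
  have hT' : MeasurableSet T' := by
    have : T' = (fun ω => (U.A (n+1) ω, U.A n ω)) ⁻¹' {p : ℕ × ℕ | p.1 = p.2} := rfl
    rw [this]; exact ((U.meas (n+1)).prodMk (U.meas n)) (by measurability)
  have hS : MeasurableSet S := U.meas n (measurableSet_singleton a)
  have hdisj : Disjoint (S ∩ T) (S ∩ T') := by
    rw [Set.disjoint_left]
    rintro ω ⟨_, h1⟩ ⟨_, h2⟩
    simp only [hTdef, hT'def, Set.mem_setOf_eq] at h1 h2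
    omega
  have hae : ((S ∩ T) ∪ (S ∩ T') : Set Ω) =ᵐ[μ] S := by
    rw [Filter.eventuallyEq_set]
    filter_upwards [U.incr n] with ω hω
    simp only [Set.mem_union, Set.mem_inter_iff, hTdef, hT'def, Set.mem_setOf_eq]
    tauto
  have hadd : μ (S ∩ T) + μ (S ∩ T') = μ S := by
    rw [← measure_union hdisj (hS.inter hT'), measure_congr hae]
  have h1 : (μ (S ∩ T)).toReal + (μ (S ∩ T')).toReal = (μ S).toReal := by
    rw [← ENNReal.toReal_add (measure_ne_top μ _) (measure_ne_top μ _), hadd]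
  have h2 := aux_key U n a
  rw [← hSdef, ← hTdef] at h2
  nlinarith [h1, h2]

lemma aux_step (n b : ℕ) :
    (μ (U.A (n+1) ⁻¹' {b+1})).toReal
      = (b:ℝ)/(2*n+1) * (μ (U.A n ⁻¹' {b})).toReal
        + (1 - ((b:ℝ)+1)/(2*n+1)) * (μ (U.A n ⁻¹' {b+1})).toReal := by
  set T := {ω | U.A (n+1) ω = U.A n ω + 1} with hTdef
  set T' := {ω | U.A (n+1) ω = U.A n ω} with hT'def
  have hT : MeasurableSet T := by
    have : T = (fun ω => (U.A (n+1) ω, U.A n ω)) ⁻¹' {p : ℕ × ℕ | p.1 = p.2 + 1} := rfl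
    rw [this]; exact ((U.meas (n+1)).prodMk (U.meas n)) (by measurability)
  have hT' : MeasurableSet T' := by
    have : T' = (fun ω => (U.A (n+1) ω, U.A n ω)) ⁻¹' {p : ℕ × ℕ | p.1 = p.2} := rfl
    rw [this]; exact ((U.meas (n+1)).prodMk (U.meas n)) (by measurability)
  have hae : (U.A (n+1) ⁻¹' {b+1} : Set Ω)
      =ᵐ[μ] (((U.A n ⁻¹' {b} ∩ T) ∪ (U.A n ⁻¹' {b+1} ∩ T')) : Set Ω) := by
    rw [Filter.eventuallyEq_set]
    filter_upwards [U.incr n] with ω hω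
    simp only [Set.mem_union, Set.mem_inter_iff, Set.mem_preimage,
      Set.mem_singleton_iff, hTdef, hT'def, Set.mem_setOf_eq]
    constructor
    · intro h
      rcases hω with h' | h'
      · right; omega
      · left; omega
    · rintro (⟨h1, h2⟩ | ⟨h1, h2⟩) <;> omega
  have hdisj : Disjoint (U.A n ⁻¹' {b} ∩ T) (U.A n ⁻¹' {b+1} ∩ T') := by
    rw [Set.disjoint_left]
    rintro ω ⟨h1, _⟩ ⟨h2, _⟩
    simp only [Set.mem_preimage, Set.mem_singleton_iff] at h1 h2
    omega
  have hSb : MeasurableSet (U.A n ⁻¹' {b+1}) := U.meas n (measurableSet_singleton _)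
  rw [measure_congr hae, measure_union hdisj (hSb.inter hT'),
    ENNReal.toReal_add (measure_ne_top μ _) (measure_ne_top μ _),
    aux_key U n b, aux_compl U n (b+1)]
  push_cast
  ring

lemma p0_1 : (μ (U.A 0 ⁻¹' {1})).toReal = 1 := by
  have : U.A 0 ⁻¹' {1} = Set.univ := by
    ext ω; simp [U.init ω]
  rw [this]
  simp

lemma p0_2 : (μ (U.A 0 ⁻¹' {2})).toReal = 0 := by
  have : U.A 0 ⁻¹' {2} = ∅ := by
    ext ω; simp [U.init ω]
  rw [this]; simp

lemma p_1 : ∀ n : ℕ, 1 ≤ n → (μ (U.A n ⁻¹' {1})).toReal = 0 := by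
  intro n hn
  induction n, hn using Nat.le_induction with
  | base =>
    have h := aux_step U 0 0
    norm_num at h
    exact h
  | succ n hn ih =>
    have h := aux_step U n 0
    norm_num at h
    rw [h, ih]
    ring

lemma p_2 : ∀ n : ℕ, 1 ≤ n → (μ (U.A n ⁻¹' {2})).toReal = 1 / (2*(n:ℝ) - 1) := by
  intro n hn
  induction n, hn using Nat.le_induction with
  | base =>
    have h := aux_step U 0 1
    norm_num [p0_1 U, p0_2 U] at h
    rw [h]; norm_num
  | succ n hn ih =>
    have h := aux_step U n 1
    rw [h, ih, p_1 U n hn]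
    have h1 : (2*(n:ℝ) - 1) ≠ 0 := by
      have : (1:ℝ) ≤ (n:ℝ) := by exact_mod_cast hn
      nlinarith
    have h2 : (2*(n:ℝ) + 1) ≠ 0 := by positivity
    push_cast
    rw [mul_zero, zero_add]
    have h5 : 2*((n:ℝ)+1) - 1 = 2*(n:ℝ)+1 := by ring
    have e1 : (1:ℝ) - (1+1)/(2*(n:ℝ)+1) = (2*(n:ℝ)-1)/(2*(n:ℝ)+1) := by
      rw [eq_div_iff h2, sub_mul, div_mul_cancel₀ _ h2]; ring
    rw [h5, e1, div_mul_div_comm, mul_one,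
      div_eq_div_iff (mul_ne_zero h2 h1) h2]
    ring

lemma p_3 : ∀ n : ℕ, 2 ≤ n → (μ (U.A n ⁻¹' {3})).toReal = 2 / (2*(n:ℝ) - 1) := by
  intro n hn
  induction n, hn using Nat.le_induction with
  | base =>
    have h := aux_step U 1 2
    rw [p_2 U 1 le_rfl] at h
    norm_num at h
    rw [h]; norm_num
  | succ n hn ih =>
    have h := aux_step U n 2
    rw [h, ih, p_2 U n (by omega)]
    have h1 : (2*(n:ℝ) - 1) ≠ 0 := by
      have : (2:ℝ) ≤ (n:ℝ) := by exact_mod_cast hn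
      nlinarith
    have h2 : (2*(n:ℝ) + 1) ≠ 0 := by positivity
    push_cast
    have h5 : 2*((n:ℝ)+1) - 1 = 2*(n:ℝ)+1 := by ring
    have e1 : (1:ℝ) - (2+1)/(2*(n:ℝ)+1) = (2*(n:ℝ)-2)/(2*(n:ℝ)+1) := by
      rw [eq_div_iff h2, sub_mul, div_mul_cancel₀ _ h2]; ring
    rw [h5, e1, div_mul_div_comm, div_mul_div_comm, ← add_div,
      div_eq_div_iff (mul_ne_zero h2 h1) h2]
    ring

end Aux

theorem polya_urn_first_vertex_small_degree
    {Ω : Type*} [m0 : MeasurableSpace Ω] (μ : Measure Ω) [IsProbabilityMeasure μ]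
    (U : PolyaUrn112 μ 1 0) (ε : ℝ) (hε : 0 < ε) :
    ∃ N : ℕ, ∀ n : ℕ, N < n →
      1 / (n : ℝ) ≤ (μ {ω | (U.A n ω : ℝ) ≤ ε * Real.sqrt n}).toReal := by
  refine ⟨max 1 ⌈(3/ε)^2⌉₊, fun n hn => ?_⟩
  have hn2 : 2 ≤ n := by
    have := le_max_left 1 ⌈(3/ε)^2⌉₊
    omega
  have hnR : (0:ℝ) < n := by positivity
  have hceil : ((3/ε)^2 : ℝ) ≤ n := by
    calc ((3/ε)^2 : ℝ) ≤ (⌈(3/ε)^2⌉₊ : ℝ) := Nat.le_ceil _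
    _ ≤ n := by
      have : ⌈(3/ε)^2⌉₊ ≤ n := le_of_lt (lt_of_le_of_lt (le_max_right 1 _) hn)
      exact_mod_cast this
  have h3 : (3:ℝ) ≤ ε * Real.sqrt n := by
    have hs : (3/ε) ≤ Real.sqrt n := by
      have h0 : (0:ℝ) ≤ 3/ε := by positivity
      calc (3/ε) = Real.sqrt ((3/ε)^2) := (Real.sqrt_sq h0).symm
      _ ≤ Real.sqrt n := Real.sqrt_le_sqrt hceil
    calc (3:ℝ) = ε * (3/ε) := by field_simp
    _ ≤ ε * Real.sqrt n := by nlinarith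
  have hsub : U.A n ⁻¹' {3} ⊆ {ω | (U.A n ω : ℝ) ≤ ε * Real.sqrt n} := by
    intro ω hω
    simp only [Set.mem_preimage, Set.mem_singleton_iff] at hω
    simp only [Set.mem_setOf_eq, hω]
    exact_mod_cast h3
  have hmono : (μ (U.A n ⁻¹' {3})).toReal
      ≤ (μ {ω | (U.A n ω : ℝ) ≤ ε * Real.sqrt n}).toReal :=
    ENNReal.toReal_mono (measure_ne_top μ _) (measure_mono hsub)
  have hval := p_3 U n hn2
  have hn2R : (2:ℝ) ≤ (n:ℝ) := by exact_mod_cast hn2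
  have hfinal : 1/(n:ℝ) ≤ 2/(2*(n:ℝ)-1) := by
    rw [div_le_div_iff₀ hnR (by nlinarith : (0:ℝ) < 2*(n:ℝ)-1)]
    nlinarith
  linarith [hmono, hval.symm.le, hval.le]
end

section
/- Let a₀ ≥ 1 and b₀ ≥ 0 be integers. Let (Aₙ^{M,a₀,b₀}) and (Aₙ^{M,a₀,0}) be ([1,1,0,2], a₀, b₀) and ([1,1,0,2], a₀, 0) Pólya urn processes respectively, and let (Aₙ^{I,a₀,b₀}) be a ([2,0,0,2], a₀, b₀) Pólya urn process. Then for every natural number n and every integer k ≥ 0: ℙ[Aₙ^{M,a₀,b₀} = a₀ + k] = ∑_{i=0}^{n} ℙ[Aᵢ^{M,a₀,0} = a₀ + k] · ℙ[Aₙ^{I,a₀,b₀} = a₀ + 2i]. -/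
open MeasureTheory ProbabilityTheory Real Finset

/-- A `([2,0,0,2], a₀, b₀)` Pólya urn process: `A n` counts the balls of color `A`
after `n` steps in the classical two-color Pólya urn with replacement matrix
`[[2,0],[0,2]]`, started from `a₀` balls of color `A` and `b₀` balls of color `B`.
The increments are in `{0,2}` a.s. and the conditional probability of an increment,
given `A 0, …, A n`, is `A n / (a₀ + b₀ + 2 n)`. -/
structure PolyaUrn2002 {Ω : Type*} [m0 : MeasurableSpace Ω] (μ : Measure Ω)
    (a₀ b₀ : ℕ) where
  A : ℕ → Ω → ℕ
  meas : ∀ n : ℕ, Measurable (A n)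
  init : ∀ ω, A 0 ω = a₀
  incr : ∀ n : ℕ, ∀ᵐ ω ∂μ, A (n + 1) ω = A n ω ∨ A (n + 1) ω = A n ω + 2
  cond : ∀ n : ℕ,
      μ[Set.indicator {ω' | A (n + 1) ω' = A n ω' + 2} (fun _ => (1 : ℝ))
        | ⨆ i ∈ Finset.range (n + 1), MeasurableSpace.comap (A i) inferInstance]
        =ᵐ[μ] fun ω => (A n ω : ℝ) / (a₀ + b₀ + 2 * n)

noncomputable def urnF (a₀ s : ℕ) (T : ℕ → ℝ) : ℕ → ℕ → ℝ
  | 0, a => if a = a₀ then 1 else 0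
  | n+1, a => urnF a₀ s T n a * (1 - a / T n) +
      (if a < s then 0 else urnF a₀ s T n (a - s) * ((a - s : ℕ) / T n))


lemma urnF_lt {a₀ s : ℕ} {T : ℕ → ℝ} : ∀ n a, a < a₀ → urnF a₀ s T n a = 0 := by
  intro n
  induction n with
  | zero => intro a ha; simp [urnF]; omega
  | succ n ih =>
    intro a ha
    rw [urnF, ih a ha]
    rcases lt_or_ge a s with h | h
    · simp [h]
    · rw [if_neg (not_lt.mpr h), ih (a - s) (by omega)]; ring
lemma urnF_gt {a₀ s : ℕ} {T : ℕ → ℝ} : ∀ n a, a₀ + s * n < a → urnF a₀ s T n a = 0 := by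
  intro n
  induction n with
  | zero => intro a ha; simp [urnF]; omega
  | succ n ih =>
    intro a ha
    have hmul : s * (n+1) = s * n + s := by ring
    rw [urnF, ih a (by omega)]
    rcases lt_or_ge a s with h | h
    · simp [h]
    · rw [if_neg (not_lt.mpr h), ih (a - s) (by omega)]; ring


theorem urn_step_prob {Ω} [m0 : MeasurableSpace Ω] (μ : Measure Ω) [IsProbabilityMeasure μ]
    (A : ℕ → Ω → ℕ) (meas : ∀ n, Measurable (A n)) (s : ℕ) (hs : 1 ≤ s) (n : ℕ)
    (T : ℝ)
    (incr : ∀ᵐ ω ∂μ, A (n+1) ω = A n ω ∨ A (n+1) ω = A n ω + s)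
    (cnd : μ[Set.indicator {ω' | A (n+1) ω' = A n ω' + s} (fun _ => (1:ℝ))
        | ⨆ i ∈ Finset.range (n+1), MeasurableSpace.comap (A i) inferInstance]
        =ᵐ[μ] fun ω => (A n ω : ℝ) / T)
    (a : ℕ) :
    (μ {ω | A (n+1) ω = a}).toReal =
      (μ {ω | A n ω = a}).toReal * (1 - a / T) +
      (if a < s then 0 else (μ {ω | A n ω = a - s}).toReal * ((a - s : ℕ) / T)) := by
  have hGm : (⨆ i ∈ Finset.range (n+1), MeasurableSpace.comap (A i) inferInstance) ≤ m0 :=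
    iSup₂_le fun i _ => measurable_iff_comap_le.mp (meas i)
  have hVmeas : MeasurableSet {ω | A (n+1) ω = A n ω + s} :=
    measurableSet_eq_fun (meas (n+1)) ((meas n).add_const s)
  have hInt : Integrable (Set.indicator {ω | A (n+1) ω = A n ω + s} (fun _ => (1:ℝ))) μ :=
    (integrable_const (1:ℝ)).indicator hVmeas
  have key : ∀ b : ℕ, (μ ({ω | A (n+1) ω = A n ω + s} ∩ {ω | A n ω = b})).toReal
      = (b / T) * (μ {ω | A n ω = b}).toReal := by
    intro b
    have hsG : MeasurableSet[⨆ i ∈ Finset.range (n+1),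
        MeasurableSpace.comap (A i) inferInstance] {ω | A n ω = b} := by
      have h1 : MeasurableSpace.comap (A n) inferInstance ≤
          ⨆ i ∈ Finset.range (n+1), MeasurableSpace.comap (A i) inferInstance :=
        le_iSup₂ (f := fun i (_ : i ∈ Finset.range (n+1)) =>
          MeasurableSpace.comap (A i) inferInstance) n (Finset.mem_range.mpr (Nat.lt_succ_self n))
      exact h1 _ ⟨{b}, measurableSet_singleton _, rfl⟩
    have hsm : MeasurableSet {ω | A n ω = b} := hGm _ hsG
    have h1 := (setIntegral_condExp hGm hInt hsG).symm
    have h2 : ∫ ω in {ω | A n ω = b},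
        (μ[Set.indicator {ω' | A (n+1) ω' = A n ω' + s} (fun _ => (1:ℝ)) | ⨆ i ∈ Finset.range (n+1),
          MeasurableSpace.comap (A i) inferInstance]) ω ∂μ
        = ∫ ω in {ω | A n ω = b}, (A n ω : ℝ) / T ∂μ :=
      setIntegral_congr_ae hsm (cnd.mono fun ω h _ => h)
    have h3 : ∫ ω in {ω | A n ω = b}, (A n ω : ℝ) / T ∂μ
        = (b / T) * (μ {ω | A n ω = b}).toReal := by
      rw [setIntegral_congr_fun hsm (g := fun _ => (b:ℝ)/T)
        (fun ω hω => by rw [Set.mem_setOf_eq.mp hω]), setIntegral_const, smul_eq_mul, measureReal_def]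
      ring
    have h4 : ∫ ω in {ω | A n ω = b},
        (Set.indicator {ω' | A (n+1) ω' = A n ω' + s} (fun _ => (1:ℝ))) ω ∂μ
        = (μ ({ω | A (n+1) ω = A n ω + s} ∩ {ω | A n ω = b})).toReal := by
      rw [integral_indicator hVmeas, setIntegral_const, measureReal_def, Measure.restrict_apply hVmeas]
      simp
    rw [← h4, h1, h2, h3]
  -- splitting along the increment
  have hUmeas : MeasurableSet {ω | A (n+1) ω = A n ω} :=
    measurableSet_eq_fun (meas (n+1)) (meas n)
  have hae : μ ({ω | A (n+1) ω = A n ω} ∪ {ω | A (n+1) ω = A n ω + s})ᶜ = 0 := by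
    have h := ae_iff.mp incr
    have e : ({ω | A (n+1) ω = A n ω} ∪ {ω | A (n+1) ω = A n ω + s})ᶜ
        = {ω | ¬(A (n+1) ω = A n ω ∨ A (n+1) ω = A n ω + s)} := by
      ext ω; simp [Set.mem_setOf_eq]
    rw [e]; exact h
  have hdisj : Disjoint {ω | A (n+1) ω = A n ω} {ω | A (n+1) ω = A n ω + s} := by
    rw [Set.disjoint_left]
    intro ω h1 h2
    simp only [Set.mem_setOf_eq] at h1 h2
    omega
  have cover : ∀ S : Set Ω, MeasurableSet S →
      μ S = μ ({ω | A (n+1) ω = A n ω} ∩ S) + μ ({ω | A (n+1) ω = A n ω + s} ∩ S) := by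
    intro S hS
    have e1 : μ S = μ (S ∩ ({ω | A (n+1) ω = A n ω} ∪ {ω | A (n+1) ω = A n ω + s}))
        + μ (S \ ({ω | A (n+1) ω = A n ω} ∪ {ω | A (n+1) ω = A n ω + s})) :=
      (measure_inter_add_diff S (hUmeas.union hVmeas)).symm
    have e2 : μ (S \ ({ω | A (n+1) ω = A n ω} ∪ {ω | A (n+1) ω = A n ω + s})) = 0 :=
      measure_mono_null (Set.diff_subset_compl _ _) hae
    have e3 : S ∩ ({ω | A (n+1) ω = A n ω} ∪ {ω | A (n+1) ω = A n ω + s})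
        = ({ω | A (n+1) ω = A n ω} ∩ S) ∪ ({ω | A (n+1) ω = A n ω + s} ∩ S) := by
      rw [Set.inter_union_distrib_left, Set.inter_comm S, Set.inter_comm S]
    rw [e1, e2, add_zero, e3, measure_union (hdisj.mono Set.inter_subset_left
      Set.inter_subset_left) (hVmeas.inter hS)]
  have hAnm : ∀ m b, MeasurableSet {ω | A m ω = b} := fun m b => (meas m) (measurableSet_singleton b)
  -- identifications of intersections
  have idU : {ω | A (n+1) ω = A n ω} ∩ {ω | A (n+1) ω = a}
      = {ω | A (n+1) ω = A n ω} ∩ {ω | A n ω = a} := by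
    ext ω; simp only [Set.mem_inter_iff, Set.mem_setOf_eq]; constructor <;> rintro ⟨h1, h2⟩ <;> omega
  have toRealAdd : ∀ x y : ENNReal, x ≠ ⊤ → y ≠ ⊤ → (x + y).toReal = x.toReal + y.toReal :=
    fun x y hx hy => ENNReal.toReal_add hx hy
  -- μ (U ∩ {A n = b}) in real terms
  have keyU : ∀ b : ℕ, (μ ({ω | A (n+1) ω = A n ω} ∩ {ω | A n ω = b})).toReal
      = (μ {ω | A n ω = b}).toReal * (1 - b / T) := by
    intro b
    have := cover {ω | A n ω = b} (hAnm n b)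
    have h := congrArg ENNReal.toReal this
    rw [toRealAdd _ _ (measure_ne_top μ _) (measure_ne_top μ _), key b] at h
    rw [mul_one_sub]
    linarith [h]
  have main := cover {ω | A (n+1) ω = a} (hAnm (n+1) a)
  have hmain := congrArg ENNReal.toReal main
  rw [toRealAdd _ _ (measure_ne_top μ _) (measure_ne_top μ _)] at hmain
  rw [hmain, idU, keyU a]
  congr 1
  by_cases ha : a < s
  · simp only [if_pos ha]
    have : {ω | A (n+1) ω = A n ω + s} ∩ {ω | A (n+1) ω = a} = ∅ := by
      ext ω; simp only [Set.mem_inter_iff, Set.mem_setOf_eq, Set.mem_empty_iff_false]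
      exact iff_false_intro (by rintro ⟨h1, h2⟩; omega)
    rw [this]; simp
  · simp only [if_neg ha]
    push_neg at ha
    have : {ω | A (n+1) ω = A n ω + s} ∩ {ω | A (n+1) ω = a}
        = {ω | A (n+1) ω = A n ω + s} ∩ {ω | A n ω = a - s} := by
      ext ω; simp only [Set.mem_inter_iff, Set.mem_setOf_eq]; constructor <;> rintro ⟨h1, h2⟩ <;>
        constructor <;> omega
    rw [this, key (a - s)]
    ring

theorem urn_dist {Ω} [m0 : MeasurableSpace Ω] (μ : Measure Ω) [IsProbabilityMeasure μ]
    (A : ℕ → Ω → ℕ) (meas : ∀ n, Measurable (A n)) (s : ℕ) (hs : 1 ≤ s)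
    (a₀ b₀ : ℕ) (init : ∀ ω, A 0 ω = a₀)
    (incr : ∀ n : ℕ, ∀ᵐ ω ∂μ, A (n + 1) ω = A n ω ∨ A (n + 1) ω = A n ω + s)
    (cond : ∀ n : ℕ,
      μ[Set.indicator {ω' | A (n + 1) ω' = A n ω' + s} (fun _ => (1 : ℝ))
        | ⨆ i ∈ Finset.range (n + 1), MeasurableSpace.comap (A i) inferInstance]
        =ᵐ[μ] fun ω => (A n ω : ℝ) / (a₀ + b₀ + 2 * n)) :
    ∀ n a, (μ {ω | A n ω = a}).toReal =
      urnF a₀ s (fun m => (a₀:ℝ) + (b₀:ℕ) + 2 * m) n a := by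
  intro n
  induction n with
  | zero =>
    intro a
    by_cases h : a = a₀
    · have : {ω | A 0 ω = a} = Set.univ := by
        ext ω; simp [init ω, h]
      rw [this]
      simp [urnF, h]
    · have : {ω | A 0 ω = a} = ∅ := by
        ext ω; simp [init ω]; exact fun hh => h hh.symm
      rw [this]
      simp [urnF, h]
  | succ n ih =>
    intro a
    rw [urn_step_prob μ A meas s hs n ((a₀:ℝ) + (b₀:ℕ) + 2 * n) (incr n) (cond n) a,
      ih a]
    show _ = urnF a₀ s _ (n+1) a
    rw [urnF]
    rcases lt_or_ge a s with h | h
    · rw [if_pos h, if_pos h]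
    · rw [if_neg (not_lt.mpr h), if_neg (not_lt.mpr h), ih (a - s)]

lemma key_id (a₀ b₀ : ℕ) (ha₀ : 1 ≤ a₀) :
    ∀ n K, urnF a₀ 1 (fun m => (a₀:ℝ) + (b₀:ℕ) + 2 * m) n K =
      ∑ i ∈ range (n+1), urnF a₀ 1 (fun m => (a₀:ℝ) + (0:ℕ) + 2 * m) i K *
        urnF a₀ 2 (fun m => (a₀:ℝ) + (b₀:ℕ) + 2 * m) n (a₀ + 2 * i) := by
  set T0 : ℕ → ℝ := fun m => (a₀:ℝ) + (0:ℕ) + 2 * m with hT0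
  set Tb : ℕ → ℝ := fun m => (a₀:ℝ) + (b₀:ℕ) + 2 * m with hTb
  have hT0pos : ∀ m, (0:ℝ) < T0 m := by
    intro m; simp only [hT0]; push_cast
    have : (1:ℝ) ≤ a₀ := by exact_mod_cast ha₀
    positivity
  have hTbpos : ∀ m, (0:ℝ) < Tb m := by
    intro m; simp only [hTb]; push_cast
    have : (1:ℝ) ≤ a₀ := by exact_mod_cast ha₀
    positivity
  intro n
  induction n with
  | zero =>
    intro K
    rw [Finset.sum_range_one]
    by_cases h : K = a₀ <;> simp [urnF, h]
  | succ n ih =>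
    intro K
    rcases Nat.eq_zero_or_pos K with hK | hK
    · subst hK
      rw [urnF_lt (n+1) 0 ha₀]
      exact (Finset.sum_eq_zero fun i _ => by rw [urnF_lt i 0 ha₀, zero_mul]).symm
    obtain ⟨m, rfl⟩ : ∃ m, K = m + 1 := ⟨K - 1, by omega⟩
    -- unfold LHS
    rw [urnF, if_neg (by omega : ¬ m + 1 < 1), ih (m+1), ih ((m+1) - 1)]
    have hm1 : (m + 1) - 1 = m := rfl
    rw [hm1]
    -- RHS: unfold urnF at level n+1
    have hRHS : ∀ i, urnF a₀ 2 Tb (n+1) (a₀ + 2 * i) =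
        urnF a₀ 2 Tb n (a₀ + 2*i) * (1 - (a₀ + 2*i : ℕ) / Tb n) +
        (if a₀ + 2*i < 2 then 0 else urnF a₀ 2 Tb n (a₀ + 2*i - 2) * ((a₀ + 2*i - 2 : ℕ) / Tb n)) :=
      fun i => rfl
    -- second summand per index
    have hsplit : ∑ i ∈ range (n+2),
        urnF a₀ 1 T0 i (m+1) * urnF a₀ 2 Tb (n+1) (a₀ + 2 * i)
        = (∑ i ∈ range (n+2), urnF a₀ 1 T0 i (m+1) * (urnF a₀ 2 Tb n (a₀ + 2*i) * (1 - (a₀ + 2*i : ℕ) / Tb n)))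
        + ∑ i ∈ range (n+2), urnF a₀ 1 T0 i (m+1) *
            (if a₀ + 2*i < 2 then 0 else urnF a₀ 2 Tb n (a₀ + 2*i - 2) * ((a₀ + 2*i - 2 : ℕ) / Tb n)) := by
      rw [← Finset.sum_add_distrib]
      refine Finset.sum_congr rfl fun i _ => ?_
      rw [hRHS i]; ring
    rw [hsplit]
    -- first sum: drop the i = n+1 term (it vanishes)
    have hfirst : ∑ i ∈ range (n+2), urnF a₀ 1 T0 i (m+1) *
        (urnF a₀ 2 Tb n (a₀ + 2*i) * (1 - (a₀ + 2*i : ℕ) / Tb n))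
        = ∑ i ∈ range (n+1), urnF a₀ 1 T0 i (m+1) *
        (urnF a₀ 2 Tb n (a₀ + 2*i) * (1 - (a₀ + 2*i : ℕ) / Tb n)) := by
      rw [Finset.sum_range_succ, urnF_gt n (a₀ + 2*(n+1)) (by omega)]
      simp
    -- second sum: reindex
    have hsecond : ∑ i ∈ range (n+2), urnF a₀ 1 T0 i (m+1) *
        (if a₀ + 2*i < 2 then 0 else urnF a₀ 2 Tb n (a₀ + 2*i - 2) * ((a₀ + 2*i - 2 : ℕ) / Tb n))
        = ∑ j ∈ range (n+1), urnF a₀ 1 T0 (j+1) (m+1) *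
            (urnF a₀ 2 Tb n (a₀ + 2*j) * ((a₀ + 2*j : ℕ) / Tb n)) := by
      rw [Finset.sum_range_succ']
      have h0 : urnF a₀ 1 T0 0 (m+1) *
          (if a₀ + 2*0 < 2 then 0 else urnF a₀ 2 Tb n (a₀ + 2*0 - 2) * ((a₀ + 2*0 - 2 : ℕ) / Tb n)) = 0 := by
        rcases lt_or_ge (a₀ + 2*0) 2 with h | h
        · rw [if_pos h]; ring
        · rw [if_neg (not_lt.mpr h), urnF_lt n (a₀ + 2*0 - 2) (by omega)]; ring
      rw [h0, add_zero]
      refine Finset.sum_congr rfl fun j _ => ?_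
      have e2 : a₀ + 2*(j+1) - 2 = a₀ + 2*j := by omega
      rw [if_neg (by omega : ¬ a₀ + 2*(j+1) < 2), e2]
    rw [hfirst, hsecond, ← Finset.sum_add_distrib, Finset.sum_mul, Finset.sum_mul,
      ← Finset.sum_add_distrib]
    refine Finset.sum_congr rfl fun i hi => ?_
    -- termwise identity
    have hrec : urnF a₀ 1 T0 (i+1) (m+1) = urnF a₀ 1 T0 i (m+1) * (1 - (m+1 : ℕ) / T0 i) +
        urnF a₀ 1 T0 i m * ((m : ℕ) / T0 i) := by
      rw [urnF, if_neg (by omega : ¬ m + 1 < 1), hm1]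
    rw [hrec]
    have hS : T0 i = (a₀ : ℝ) + 2 * i := by simp [hT0]
    have hSnat : ((a₀ + 2*i : ℕ) : ℝ) = T0 i := by rw [hS]; push_cast; ring
    have hS0 : T0 i ≠ 0 := ne_of_gt (hT0pos i)
    have hTb0 : Tb n ≠ 0 := ne_of_gt (hTbpos n)
    rw [hSnat]
    push_cast
    field_simp
    ring

theorem polya_urn_split
    {Ω : Type*} [m0 : MeasurableSpace Ω] (μ : Measure Ω) [IsProbabilityMeasure μ]
    (a₀ b₀ : ℕ) (ha₀ : 1 ≤ a₀)
    (UM : PolyaUrn112 μ a₀ b₀) (UM0 : PolyaUrn112 μ a₀ 0) (UI : PolyaUrn2002 μ a₀ b₀)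
    (n k : ℕ) :
    (μ {ω | UM.A n ω = a₀ + k}).toReal =
      ∑ i ∈ Finset.range (n + 1),
        (μ {ω | UM0.A i ω = a₀ + k}).toReal * (μ {ω | UI.A n ω = a₀ + 2 * i}).toReal := by
  have dM := urn_dist μ UM.A UM.meas 1 le_rfl a₀ b₀ UM.init UM.incr UM.cond
  have dM0 := urn_dist μ UM0.A UM0.meas 1 le_rfl a₀ 0 UM0.init UM0.incr UM0.cond
  have dI := urn_dist μ UI.A UI.meas 2 (by norm_num) a₀ b₀ UI.init UI.incr UI.cond
  rw [dM n (a₀ + k), key_id a₀ b₀ ha₀ n (a₀ + k)]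
  exact Finset.sum_congr rfl fun i _ => by rw [dM0 i (a₀ + k), dI n (a₀ + 2 * i)]
end

section
/- Let (Ω, 𝓕, ℙ) be a probability space, let l ≥ 1 be an integer, and let A₀, …, A_{l−1} and B₁, …, B_{l−1} be events such that ℙ[Ā₀ ∩ … ∩ Ā_{i−1} ∩ Bᵢ] > 0 for every 1 ≤ i ≤ l−1 (where Ē denotes the complement of an event E). Then ℙ[Ā₀ ∩ Ā₁ ∩ … ∩ Ā_{l−1}] ≤ ∑_{i=1}^{l−1} ℙ[B̄ᵢ] + ∏_{i=1}^{l−1} ℙ[Āᵢ | Ā₀ ∩ … ∩ Ā_{i−1} ∩ Bᵢ]. -/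
open MeasureTheory ProbabilityTheory Finset

private lemma cond_mul_meas_aux {Ω : Type*} [MeasurableSpace Ω] (μ : Measure Ω)
    [IsProbabilityMeasure μ] (s t : Set Ω) (hs : 0 < μ s) :
    μ (t ∩ s) ≤ μ[|s] t * μ s := by
  have h1 : μ (t ∩ s) ≤ μ.restrict s t := Measure.le_restrict_apply s t
  have hne : μ s ≠ 0 := hs.ne'
  have hfin : μ s ≠ ⊤ := (measure_lt_top μ s).ne
  have heq : μ[|s] t * μ s = μ.restrict s t := by
    simp only [ProbabilityTheory.cond, Measure.smul_apply, smul_eq_mul]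
    rw [mul_comm ((μ s)⁻¹) _, mul_assoc, ENNReal.inv_mul_cancel hne hfin, mul_one]
  rw [heq]; exact h1

private lemma cond_le_one_aux {Ω : Type*} [MeasurableSpace Ω] (μ : Measure Ω)
    [IsProbabilityMeasure μ] (s t : Set Ω) (hs : 0 < μ s) :
    μ[|s] t ≤ 1 := by
  have hne : μ s ≠ 0 := hs.ne'
  have hfin : μ s ≠ ⊤ := (measure_lt_top μ s).ne
  have h1 : μ.restrict s t ≤ μ s := by
    have := measure_mono (μ := μ.restrict s) (Set.subset_univ t)
    simpa using this
  calc μ[|s] t = (μ s)⁻¹ * μ.restrict s t := by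
        simp [ProbabilityTheory.cond, Measure.smul_apply, smul_eq_mul]
    _ ≤ (μ s)⁻¹ * μ s := mul_le_mul_right h1 _
    _ = 1 := ENNReal.inv_mul_cancel hne hfin

private lemma key_aux {Ω : Type*} [MeasurableSpace Ω] (μ : Measure Ω)
    [IsProbabilityMeasure μ] (A B : ℕ → Set Ω) :
    ∀ m : ℕ, (∀ i, 1 ≤ i → i ≤ m → 0 < μ ((⋂ j ∈ Finset.range i, (A j)ᶜ) ∩ B i)) →
      μ (⋂ i ∈ Finset.range (m + 1), (A i)ᶜ) ≤
        (∑ i ∈ Finset.Icc 1 m, μ (B i)ᶜ) +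
        ∏ i ∈ Finset.Icc 1 m, μ[|(⋂ j ∈ Finset.range i, (A j)ᶜ) ∩ B i] (A i)ᶜ := by
  intro m
  induction m with
  | zero =>
    intro _
    simp [prob_le_one]
  | succ m ih =>
    intro hpos
    have ihm := ih (fun i h1 h2 => hpos i h1 (h2.trans (Nat.le_succ m)))
    set C := ⋂ i ∈ Finset.range (m + 1), (A i)ᶜ with hC
    set s := C ∩ B (m + 1) with hs
    have hspos : 0 < μ s := hpos (m + 1) (Nat.le_add_left 1 m) le_rfl
    set p := μ[|s] (A (m + 1))ᶜ with hp
    have hstep : μ (⋂ i ∈ Finset.range (m + 2), (A i)ᶜ) ≤ μ (B (m + 1))ᶜ + p * μ s := by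
      have h0 : (⋂ i ∈ Finset.range (m + 2), (A i)ᶜ) = (A (m + 1))ᶜ ∩ C := by
        rw [Finset.range_add_one, Finset.set_biInter_insert]
      rw [h0]
      have hsub : (A (m + 1))ᶜ ∩ C ⊆ (B (m + 1))ᶜ ∪ ((A (m + 1))ᶜ ∩ s) := by
        intro x hx
        by_cases hb : x ∈ B (m + 1)
        · exact Or.inr ⟨hx.1, hx.2, hb⟩
        · exact Or.inl hb
      calc μ ((A (m + 1))ᶜ ∩ C) ≤ μ ((B (m + 1))ᶜ ∪ ((A (m + 1))ᶜ ∩ s)) := measure_mono hsub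
        _ ≤ μ (B (m + 1))ᶜ + μ ((A (m + 1))ᶜ ∩ s) := measure_union_le _ _
        _ ≤ μ (B (m + 1))ᶜ + p * μ s :=
            add_le_add_right (cond_mul_meas_aux μ s _ hspos) _
    have hp1 : p ≤ 1 := cond_le_one_aux μ s _ hspos
    have hmuC : μ s ≤ μ C := measure_mono Set.inter_subset_left
    have hchain : p * μ s ≤
        (∑ i ∈ Finset.Icc 1 m, μ (B i)ᶜ) +
        p * ∏ i ∈ Finset.Icc 1 m, μ[|(⋂ j ∈ Finset.range i, (A j)ᶜ) ∩ B i] (A i)ᶜ := by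
      calc p * μ s ≤ p * μ C := mul_le_mul_right hmuC p
        _ ≤ p * ((∑ i ∈ Finset.Icc 1 m, μ (B i)ᶜ) +
            ∏ i ∈ Finset.Icc 1 m, μ[|(⋂ j ∈ Finset.range i, (A j)ᶜ) ∩ B i] (A i)ᶜ) :=
            mul_le_mul_right ihm p
        _ = p * (∑ i ∈ Finset.Icc 1 m, μ (B i)ᶜ) +
            p * ∏ i ∈ Finset.Icc 1 m, μ[|(⋂ j ∈ Finset.range i, (A j)ᶜ) ∩ B i] (A i)ᶜ := by
            ring
        _ ≤ 1 * (∑ i ∈ Finset.Icc 1 m, μ (B i)ᶜ) +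
            p * ∏ i ∈ Finset.Icc 1 m, μ[|(⋂ j ∈ Finset.range i, (A j)ᶜ) ∩ B i] (A i)ᶜ :=
            add_le_add_left (mul_le_mul_left hp1 _) _
        _ = _ := by rw [one_mul]
    rw [Finset.sum_Icc_succ_top (Nat.le_add_left 1 m), Finset.prod_Icc_succ_top (Nat.le_add_left 1 m)]
    calc μ (⋂ i ∈ Finset.range (m + 1 + 1), (A i)ᶜ) ≤ μ (B (m + 1))ᶜ + p * μ s := hstep
      _ ≤ μ (B (m + 1))ᶜ + ((∑ i ∈ Finset.Icc 1 m, μ (B i)ᶜ) +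
          p * ∏ i ∈ Finset.Icc 1 m, μ[|(⋂ j ∈ Finset.range i, (A j)ᶜ) ∩ B i] (A i)ᶜ) :=
          add_le_add_right hchain _
      _ = _ := by ring

theorem sequence_events_bound
    {Ω : Type*} [m0 : MeasurableSpace Ω] (μ : Measure Ω) [IsProbabilityMeasure μ]
    (l : ℕ) (hl : 1 ≤ l) (A B : ℕ → Set Ω)
    (hpos : ∀ i : ℕ, 1 ≤ i → i ≤ l - 1 →
      0 < μ ((⋂ j ∈ Finset.range i, (A j)ᶜ) ∩ B i)) :
    (μ (⋂ i ∈ Finset.range l, (A i)ᶜ)).toReal ≤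
      (∑ i ∈ Finset.Icc 1 (l - 1), (μ (B i)ᶜ).toReal) +
      ∏ i ∈ Finset.Icc 1 (l - 1),
        (μ[|(⋂ j ∈ Finset.range i, (A j)ᶜ) ∩ B i] (A i)ᶜ).toReal := by
  obtain ⟨m, rfl⟩ : ∃ m, l = m + 1 := ⟨l - 1, (Nat.succ_pred_eq_of_pos hl).symm⟩
  simp only [Nat.add_sub_cancel] at hpos ⊢
  have h := key_aux μ A B m hpos
  have hfin : ((∑ i ∈ Finset.Icc 1 m, μ (B i)ᶜ) +
      ∏ i ∈ Finset.Icc 1 m, μ[|(⋂ j ∈ Finset.range i, (A j)ᶜ) ∩ B i] (A i)ᶜ) ≠ ⊤ := by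
    apply ENNReal.add_ne_top.2
    constructor
    · exact (ENNReal.sum_lt_top.2 fun i _ => measure_lt_top μ _).ne
    · exact (ENNReal.prod_lt_top fun i _ => measure_lt_top _ _).ne
  have := ENNReal.toReal_mono hfin h
  rwa [ENNReal.toReal_add, ENNReal.toReal_sum, ENNReal.toReal_prod] at this
  · exact fun i _ => (measure_lt_top μ _).ne
  · exact (ENNReal.sum_lt_top.2 fun i _ => measure_lt_top μ _).ne
  · exact (ENNReal.prod_lt_top fun i _ => measure_lt_top _ _).ne
end

section
/- For all integers n ≥ 1 and k with 1 ≤ k ≤ n: ∑_{i=0}^{k} (−1)^i · C(k, i) · b(n − i/2 − 1, n) = (k/n) · 2^{k} · C(2n − k − 1, n − 1) / C(2n, n) · Γ(n + 1/2) / (Γ(n + 1) · Γ(1/2)), where C(·,·) is the ordinary binomial coefficient, Γ is the real Gamma function, and for a real number x and a natural number n, b(x, n) := (∏_{j=0}^{n−1} (x − j)) / n! is the generalized (descending-factorial) binomial coefficient. -/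
open Finset Real

/-- The generalized (descending-factorial) binomial coefficient
`b(x, n) = (∏_{j=0}^{n−1} (x − j)) / n!` for a real `x` and a natural number `n`. -/
noncomputable def genBinom (x : ℝ) (n : ℕ) : ℝ :=
  (∏ j ∈ Finset.range n, (x - j)) / n.factorial

lemma pascalSum (g : ℕ → ℝ) (k : ℕ) :
    ∑ i ∈ Finset.range (k+2), (-1:ℝ)^i * ((k+1).choose i) * g i
      = ∑ i ∈ Finset.range (k+1), (-1:ℝ)^i * (k.choose i) * g i
        - ∑ i ∈ Finset.range (k+1), (-1:ℝ)^i * (k.choose i) * g (i+1) := by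
  rw [Finset.sum_range_succ' (fun i => (-1:ℝ)^i * ((k+1).choose i) * g i) (k+1),
      Finset.sum_range_succ' (fun i => (-1:ℝ)^i * (k.choose i) * g i) k]
  have key : ∀ i ∈ Finset.range (k+1),
      (-1:ℝ)^(i+1) * ((k+1).choose (i+1)) * g (i+1)
        = (-1:ℝ)^(i+1) * (k.choose (i+1)) * g (i+1)
          - (-1:ℝ)^i * (k.choose i) * g (i+1) := by
    intro i _
    rw [Nat.choose_succ_succ]
    push_cast
    ring
  rw [Finset.sum_congr rfl key, Finset.sum_sub_distrib,
      Finset.sum_range_succ (fun i => (-1:ℝ)^(i+1) * (k.choose (i+1)) * g (i+1)) k,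
      Nat.choose_succ_self]
  simp only [Nat.choose_zero_right, Nat.cast_zero, Nat.cast_one]
  ring

lemma genBinom_pascal (x : ℝ) (n : ℕ) :
    genBinom x (n+1) = genBinom (x-1) (n+1) + genBinom (x-1) n := by
  unfold genBinom
  have h1 : ∏ j ∈ Finset.range (n+1), (x - j) = x * ∏ j ∈ Finset.range n, (x - 1 - j) := by
    rw [Finset.prod_range_succ' (fun j => x - j)]
    push_cast
    ring_nf
  have h2 : ∏ j ∈ Finset.range (n+1), (x - 1 - j)
      = (∏ j ∈ Finset.range n, (x - 1 - j)) * (x - 1 - n) := Finset.prod_range_succ _ _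
  rw [h1, h2, Nat.factorial_succ]
  have hn : (n.factorial : ℝ) ≠ 0 := Nat.cast_ne_zero.mpr n.factorial_ne_zero
  have hn1 : ((n:ℝ) + 1) ≠ 0 := by positivity
  field_simp
  push_cast
  ring

lemma gamma_half (n : ℕ) :
    Real.Gamma ((n:ℝ) + 1/2) = Real.sqrt π * (2*n).factorial / (4^n * n.factorial) := by
  induction n with
  | zero =>
    rw [show ((0:ℕ):ℝ) + 1/2 = 1/2 by norm_num, Real.Gamma_one_half_eq]
    simp
  | succ m ih =>
    have h : ((m:ℝ) + 1 + 1/2) = ((m:ℝ) + 1/2) + 1 := by ring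
    rw [Nat.cast_succ, h, Real.Gamma_add_one (by positivity), ih]
    have h2 : 2*(m+1) = (2*m+1)+1 := by ring
    rw [h2, Nat.factorial_succ, Nat.factorial_succ, Nat.factorial_succ]
    push_cast
    have : (4:ℝ)^(m+1) = 4 * 4^m := by ring
    rw [this]
    have hm : (m.factorial : ℝ) ≠ 0 := Nat.cast_ne_zero.mpr m.factorial_ne_zero
    field_simp
    ring

noncomputable def auxS (n k : ℕ) : ℝ :=
  ∑ i ∈ Finset.range (k+1), (-1:ℝ)^i * (k.choose i) * genBinom ((n:ℝ) - i/2 - 1) n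

noncomputable def auxT (n k : ℕ) : ℝ :=
  ∑ i ∈ Finset.range (k+1), (-1:ℝ)^i * (k.choose i) * genBinom ((n:ℝ) - i/2 - 3/2) n

lemma auxS_succ (n k : ℕ) : auxS n (k+1) = auxS n k - auxT n k := by
  unfold auxS auxT
  have := pascalSum (fun i => genBinom ((n:ℝ) - i/2 - 1) n) k
  rw [show k+1+1 = k+2 from rfl, this]
  congr 1
  apply Finset.sum_congr rfl
  intro i _
  congr 2
  push_cast
  ring

lemma auxT_succ (n k : ℕ) (hn : 1 ≤ n) :
    auxT n (k+1) = auxT n k - (auxS n k - auxS (n-1) k) := by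
  unfold auxS auxT
  have := pascalSum (fun i => genBinom ((n:ℝ) - i/2 - 3/2) n) k
  rw [show k+1+1 = k+2 from rfl, this]
  congr 1
  rw [← Finset.sum_sub_distrib]
  apply Finset.sum_congr rfl
  intro i _
  obtain ⟨m, rfl⟩ : ∃ m, n = m + 1 := ⟨n - 1, by omega⟩
  have hcast : ((m+1:ℕ):ℝ) - (↑(i+1))/2 - 3/2 = (((m+1:ℕ):ℝ) - i/2 - 1) - 1 := by
    push_cast; ring
  have hp := genBinom_pascal (((m+1:ℕ):ℝ) - i/2 - 1) m
  have harg : ((m+1:ℕ):ℝ) - i/2 - 1 - 1 = ((m:ℕ):ℝ) - i/2 - 1 := by push_cast; ring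
  rw [harg] at hp
  rw [hcast, harg, show (m+1) - 1 = m from rfl]
  linear_combination (-(-1:ℝ)^i * (k.choose i)) * hp


lemma auxS_rec (n k : ℕ) (hn : 2 ≤ n) (hk : 1 ≤ k) :
    auxS n (k+1) = 2 * auxS n k - auxS (n-1) (k-1) := by
  obtain ⟨j, rfl⟩ : ∃ j, k = j+1 := ⟨k-1, by omega⟩
  have h1 := auxS_succ n (j+1)
  have h2 := auxS_succ n j
  have h3 := auxT_succ n j (by omega)
  simp only [show j+1-1 = j from rfl]
  linarith [h1, h2, h3]

lemma auxS_zero (n : ℕ) (hn : 1 ≤ n) : auxS n 0 = 0 := by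
  unfold auxS
  rw [Finset.sum_range_one]
  have : genBinom ((n:ℝ) - ((0:ℕ):ℝ)/2 - 1) n = 0 := by
    unfold genBinom
    rw [Finset.prod_eq_zero (Finset.mem_range.mpr (show n-1 < n by omega))]
    · simp
    · rw [Nat.cast_sub hn]
      push_cast
      ring
  rw [this]
  ring

lemma gb_three_half : ∀ p : ℕ,
    genBinom (((p+1:ℕ):ℝ) - 3/2) (p+1)
      = -(2 * (((2*p).choose p : ℕ) : ℝ) / ((p+1) * 4^(p+1))) := by
  intro p
  induction p with
  | zero =>
    unfold genBinom
    norm_num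
  | succ q ih =>
    have hprod : ∏ j ∈ Finset.range (q+2), (((q+2:ℕ):ℝ) - 3/2 - j)
        = (∏ j ∈ Finset.range (q+1), (((q+1:ℕ):ℝ) - 3/2 - j)) * (((q+2:ℕ):ℝ) - 3/2) := by
      rw [Finset.prod_range_succ' (fun j => ((q+2:ℕ):ℝ) - 3/2 - j) (q+1)]
      congr 1
      · apply Finset.prod_congr rfl
        intro j _
        push_cast
        ring
      · push_cast
        ring
    have hstep : genBinom (((q+2:ℕ):ℝ) - 3/2) (q+2)
        = ((((q+1:ℕ):ℝ)) - 1/2) / ((q:ℝ)+2) * genBinom (((q+1:ℕ):ℝ) - 3/2) (q+1) := by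
      unfold genBinom
      rw [hprod, Nat.factorial_succ (q+1)]
      have h1 : ((q+1).factorial : ℝ) ≠ 0 := Nat.cast_ne_zero.mpr (q+1).factorial_ne_zero
      have h2 : ((q:ℝ)+2) ≠ 0 := by positivity
      push_cast
      field_simp
      ring
    rw [hstep, ih]
    have hcb := Nat.succ_mul_centralBinom_succ q
    simp only [Nat.centralBinom] at hcb
    have hcb' : ((q+1) * ((2*(q+1)).choose (q+1)) : ℝ) = 2 * (2*q+1) * ((2*q).choose q) := by
      exact_mod_cast congrArg (Nat.cast : ℕ → ℝ) hcb
    have hq1 : ((q:ℝ)+1) ≠ 0 := by positivity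
    have hq2 : ((q:ℝ)+2) ≠ 0 := by positivity
    have h4 : (4:ℝ)^(q+1) ≠ 0 := by positivity
    push_cast at hcb' ⊢
    field_simp
    ring_nf
    ring_nf at hcb'
    linear_combination (8*((q:ℝ)+2)*4^q) * hcb'

lemma auxS_one (n : ℕ) (hn : 1 ≤ n) :
    auxS n 1 = 2 * (((2*n-2).choose (n-1) : ℕ) : ℝ) / (n * 4^n) := by
  obtain ⟨p, rfl⟩ : ∃ p, n = p + 1 := ⟨n-1, by omega⟩
  unfold auxS
  rw [Finset.sum_range_succ, Finset.sum_range_one]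
  have h0 : genBinom (((p+1:ℕ):ℝ) - ((0:ℕ):ℝ)/2 - 1) (p+1) = 0 := by
    unfold genBinom
    rw [Finset.prod_eq_zero (Finset.mem_range.mpr (show p < p+1 by omega))]
    · simp
    · push_cast
      ring
  have h1 : (((p+1:ℕ):ℝ) - ((1:ℕ):ℝ)/2 - 1) = ((p+1:ℕ):ℝ) - 3/2 := by
    push_cast
    ring
  rw [h0, h1, gb_three_half p]
  have he : 2*(p+1)-2 = 2*p := by omega
  have he2 : (p+1)-1 = p := by omega
  rw [he, he2]
  push_cast
  norm_num

lemma closed_rec (j d : ℕ) (A B : ℝ)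
    (e1 : A * ((j:ℝ)+(d:ℝ)+1) = B * ((d:ℝ)+1)) :
    ((j:ℝ)+2) * 2^(j+2) * A / (((j:ℝ)+(d:ℝ)+2) * 4^(j+d+2))
      = 2 * (((j:ℝ)+1) * 2^(j+1) * (A+B) / (((j:ℝ)+(d:ℝ)+2) * 4^(j+d+2)))
        - (j:ℝ) * 2^j * B / (((j:ℝ)+(d:ℝ)+1) * 4^(j+d+1)) := by
  have h1 : ((j:ℝ)+(d:ℝ)+2) ≠ 0 := by positivity
  have h2 : ((j:ℝ)+(d:ℝ)+1) ≠ 0 := by positivity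
  have h3 : (4:ℝ)^(j+d+1) ≠ 0 := by positivity
  have h4 : (4:ℝ)^(j+d+2) = 4 * 4^(j+d+1) := by ring
  have h5 : (2:ℝ)^(j+2) = 4 * 2^j := by ring
  have h6 : (2:ℝ)^(j+1) = 2 * 2^j := by ring
  rw [h4, h5, h6]
  field_simp
  ring_nf
  ring_nf at e1
  linear_combination 4 * e1

lemma auxS_closed : ∀ k n : ℕ, 1 ≤ n → k ≤ n →
    auxS n k = (k:ℝ) * 2^k * (((2*n-k-1).choose (n-1) : ℕ) : ℝ) / ((n:ℝ) * 4^n) := by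
  intro k
  induction k using Nat.strong_induction_on with
  | _ k ih =>
    match k with
    | 0 =>
      intro n hn _
      rw [auxS_zero n hn]
      simp
    | 1 =>
      intro n hn _
      rw [auxS_one n hn, show 2*n-1-1 = 2*n-2 from by omega]
      push_cast
      ring
    | (j+2) =>
      intro n hn hk
      have hn2 : 2 ≤ n := by omega
      rw [show j+2 = (j+1)+1 from rfl, auxS_rec n (j+1) hn2 (by omega)]
      simp only [show (j+1)-1 = j from rfl]
      rw [ih (j+1) (by omega) n hn (by omega),
          ih j (by omega) (n-1) (by omega) (by omega)]
      obtain ⟨d, rfl⟩ : ∃ d, n = j+2+d := ⟨n-(j+2), by omega⟩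
      rw [show 2*(j+2+d)-(j+1+1)-1 = j+2*d+1 from by omega,
          show 2*(j+2+d)-(j+1)-1 = j+2*d+2 from by omega,
          show 2*((j+2+d)-1)-j-1 = j+2*d+1 from by omega,
          show (j+2+d)-1-1 = j+d from by omega,
          show (j+2+d)-1 = j+d+1 from by omega,
          show j+2+d = j+d+2 from by omega]
      have hAB : (((j+2*d+2).choose (j+d+1) : ℕ) : ℝ)
          = ((j+2*d+1).choose (j+d) : ℕ) + (((j+2*d+1).choose (j+d+1) : ℕ) : ℝ) := by
        exact_mod_cast congrArg (Nat.cast : ℕ → ℝ)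
          (Nat.choose_succ_succ (j+2*d+1) (j+d))
      have e1 : (((j+2*d+1).choose (j+d+1) : ℕ) : ℝ) * ((j:ℝ)+(d:ℝ)+1)
          = (((j+2*d+1).choose (j+d) : ℕ) : ℝ) * ((d:ℝ)+1) := by
        have h := Nat.choose_succ_right_eq (j+2*d+1) (j+d)
        rw [show j+2*d+1-(j+d) = d+1 from by omega] at h
        exact_mod_cast congrArg (Nat.cast : ℕ → ℝ) h
      push_cast
      have hc := closed_rec j d (((j+2*d+1).choose (j+d+1) : ℕ) : ℝ)
        (((j+2*d+1).choose (j+d) : ℕ) : ℝ) e1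
      push_cast at hc hAB
      rw [hAB]
      have hS : ((j:ℝ)+(d:ℝ)+2) ≠ 0 := by positivity
      have hS' : ((j:ℝ)+(d:ℝ)+1) ≠ 0 := by positivity
      have hy1 : (4:ℝ)^(j+d+2) ≠ 0 := by positivity
      have hy2 : (4:ℝ)^(j+d+1) ≠ 0 := by positivity
      field_simp
      linear_combination (-16 * (2:ℝ)^j * (4:ℝ)^j * (4:ℝ)^d) * e1

theorem alternating_sum_identity (n k : ℕ) (hk : 1 ≤ k) (hkn : k ≤ n) :
    (∑ i ∈ Finset.range (k + 1),
        (-1 : ℝ) ^ i * (k.choose i) * genBinom ((n : ℝ) - i / 2 - 1) n) =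
      ((k : ℝ) / n) * 2 ^ k * ((2 * n - k - 1).choose (n - 1) : ℝ) /
          ((2 * n).choose n : ℝ) *
        Real.Gamma ((n : ℝ) + 1 / 2) / (Real.Gamma ((n : ℝ) + 1) * Real.Gamma (1 / 2)) := by

  have hL : (∑ i ∈ Finset.range (k + 1),
      (-1 : ℝ) ^ i * (k.choose i) * genBinom ((n : ℝ) - i / 2 - 1) n) = auxS n k := rfl
  rw [hL, auxS_closed k n (by omega) hkn, gamma_half n, Real.Gamma_nat_eq_factorial,
      Real.Gamma_one_half_eq]
  have hfac0 := Nat.choose_mul_factorial_mul_factorial (show n ≤ 2*n by omega)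
  rw [show 2*n-n = n from by omega] at hfac0
  have hfac : (((2*n).choose n : ℕ) : ℝ) * n.factorial * n.factorial = ((2*n).factorial : ℝ) := by
    exact_mod_cast congrArg (Nat.cast : ℕ → ℝ) hfac0
  have h1 : (Real.sqrt π) ≠ 0 := by positivity
  have h2 : (n.factorial : ℝ) ≠ 0 := Nat.cast_ne_zero.mpr n.factorial_ne_zero
  have h3 : ((n:ℝ)) ≠ 0 := Nat.cast_ne_zero.mpr (by omega)
  have h4 : (((2*n).choose n : ℕ) : ℝ) ≠ 0 :=
    Nat.cast_ne_zero.mpr (Nat.choose_pos (show n ≤ 2*n by omega)).ne'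
  have h5 : (4:ℝ)^n ≠ 0 := by positivity
  field_simp
  linear_combination ((((2*n-k-1).choose (n-1) : ℕ) : ℝ)) * hfac
end
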